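/- arXiv:2108.01209 — 6 statements merged into one kernel-verified Lean document; each statement's English description precedes it below -/
import Mathlib

section
/- Let q ≡ 11 (mod 24) be an odd prime power. Then there exists a pair of orthogonal one-factorizations 𝓕 and 𝓖 of the complete graph K_{q+1} such that for any two distinct one-factors F, G ∈ 𝓕 ∪ 𝓖, the union F ∪ G contains at most two cycles of length four. -/
open SimpleGraph

namespace Paper

variable {V : Type*} {Γ : Type*} {F : Type*}

/-- A one-factor on vertex set `V`: a perfect matching, i.e. every vertex has a
unique neighbour. -/
def IsOneFactor (G : SimpleGraph V) : Prop :=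
  ∀ v : V, ∃! w : V, G.Adj v w

/-- A one-factorization of the complete graph on `V`: a set of one-factors that are
pairwise edge-disjoint and whose edges cover all edges of the complete graph. -/
def IsOneFactorization (𝓕 : Set (SimpleGraph V)) : Prop :=
  (∀ G ∈ 𝓕, IsOneFactor G) ∧
  (∀ G ∈ 𝓕, ∀ H ∈ 𝓕, G ≠ H → Disjoint G.edgeSet H.edgeSet) ∧
  (∀ u v : V, u ≠ v → ∃ G ∈ 𝓕, G.Adj u v)

/-- Two one-factorizations of the complete graph are orthogonal if any two of their
members share at most one edge. -/
def AreOrthogonalFactorizations (𝓕 𝓖 : Set (SimpleGraph V)) : Prop :=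
  IsOneFactorization 𝓕 ∧ IsOneFactorization 𝓖 ∧
    ∀ G ∈ 𝓕, ∀ H ∈ 𝓖, (G.edgeSet ∩ H.edgeSet).Subsingleton

/-- `s` is the vertex set of a cycle of length four in `H`. -/
def IsFourCycleOn (H : SimpleGraph V) (s : Set V) : Prop :=
  ∃ a b c d : V, a ≠ b ∧ a ≠ c ∧ a ≠ d ∧ b ≠ c ∧ b ≠ d ∧ c ≠ d ∧
    s = {a, b, c, d} ∧ H.Adj a b ∧ H.Adj b c ∧ H.Adj c d ∧ H.Adj d a

/-- The number of (vertex sets of) cycles of length four contained in `H`. -/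
noncomputable def fourCycleCount (H : SimpleGraph V) : ℕ :=
  Set.ncard {s : Set V | IsFourCycleOn H s}

/-- The set of nonzero squares (quadratic residues) of a field. -/
def QRset (F : Type*) [Field F] : Set F := {x | x ≠ 0 ∧ IsSquare x}

/-- The set of non-squares (quadratic non-residues) of a field. -/
def NQRset (F : Type*) [Field F] : Set F := {x | ¬ IsSquare x}

/-- Horton's starter `S_β = {{x, xβ} : x ∈ QR(q)}`, as a set of unordered pairs. -/
def hortonStarter [Field F] (β : F) : Set (Sym2 F) :=
  {e | ∃ x : F, x ≠ 0 ∧ IsSquare x ∧ e = s(x, x * β)}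

/-- `-S_β = {{y, yβ} : y ∈ NQR(q)}`, as a set of unordered pairs. -/
def hortonNegStarter [Field F] (β : F) : Set (Sym2 F) :=
  {e | ∃ y : F, ¬ IsSquare y ∧ e = s(y, y * β)}

/-- The one-factor `F_γ = {{∞, γ}} ∪ {{x + γ, y + γ} : {x, y} ∈ S}` of the complete
graph on `Γ ∪ {∞}` (with `∞ = none`) obtained by translating the starter `S` by `γ`. -/
def starterFactor [AddCommGroup Γ] (S : Set (Sym2 Γ)) (γ : Γ) : SimpleGraph (Option Γ) :=
  SimpleGraph.fromEdgeSet
    ({s((none : Option Γ), some γ)} ∪ (Sym2.map (fun x => some (x + γ)) '' S))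

/-- A starter for an additive abelian group: every nonzero element of the group
appears in exactly one pair, all elements appearing in pairs are nonzero, and every
nonzero difference arises from exactly one ordered pair. -/
def IsStarter [AddCommGroup Γ] (S : Set (Sym2 Γ)) : Prop :=
  (∀ z : Γ, z ≠ 0 → ∃! e : Sym2 Γ, e ∈ S ∧ z ∈ e) ∧
  (∀ e ∈ S, ∀ z ∈ e, z ≠ (0 : Γ)) ∧
  (∀ d : Γ, d ≠ 0 → ∃! p : Γ × Γ, s(p.1, p.2) ∈ S ∧ p.1 - p.2 = d)

/-- A strong starter: a starter whose pair sums are nonzero and pairwise distinct. -/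
def IsStrongStarter [AddCommGroup Γ] (S : Set (Sym2 Γ)) : Prop :=
  IsStarter S ∧
  (∀ x y : Γ, s(x, y) ∈ S → x + y ≠ 0) ∧
  (∀ x y u v : Γ, s(x, y) ∈ S → s(u, v) ∈ S → x + y = u + v → s(x, y) = s(u, v))

/-- Two starters are orthogonal if, writing `(x_d, y_d) ∈ S` and `(u_d, v_d) ∈ T`
for the ordered pairs with difference `d ≠ 0`, one has `u_d ≠ x_d` for all `d`, and
`u_d - x_d = u_e - x_e` implies `d = e`. -/
def AreOrthogonalStarters [AddCommGroup Γ] (S T : Set (Sym2 Γ)) : Prop :=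
  (∀ d x y u v : Γ, d ≠ 0 → s(x, y) ∈ S → s(u, v) ∈ T → x - y = d → u - v = d → u ≠ x) ∧
  (∀ d e x y u v x' y' u' v' : Γ, d ≠ 0 → e ≠ 0 →
    s(x, y) ∈ S → s(u, v) ∈ T → x - y = d → u - v = d →
    s(x', y') ∈ S → s(u', v') ∈ T → x' - y' = e → u' - v' = e →
    u - x = u' - x' → d = e)


/-! ### matching graphs -/

def mgraph (f : V → V) : SimpleGraph V where
  Adj u v := u ≠ v ∧ f u = v ∧ f v = u
  symm := ⟨fun u v ⟨h1, h2, h3⟩ => ⟨h1.symm, h3, h2⟩⟩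
  loopless := ⟨fun _ h => h.1 rfl⟩

lemma mgraph_adj {f : V → V} {u v : V} :
    (mgraph f).Adj u v ↔ u ≠ v ∧ f u = v ∧ f v = u := Iff.rfl

lemma isOneFactor_mgraph {f : V → V} (hf : ∀ u, f (f u) = u) (hf' : ∀ u, f u ≠ u) :
    IsOneFactor (mgraph f) := by
  intro v
  refine ⟨f v, ⟨(hf' v).symm, rfl, hf v⟩, ?_⟩
  rintro w ⟨-, hw, -⟩
  exact hw.symm

lemma fc_canon {f g : V → V} (hf : ∀ u, f (f u) = u) (hg : ∀ u, g (g u) = u) {s : Set V}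
    (h : IsFourCycleOn (mgraph f ⊔ mgraph g) s) :
    ∃ a b c d : V, a ≠ b ∧ a ≠ c ∧ a ≠ d ∧ b ≠ c ∧ b ≠ d ∧ c ≠ d ∧
      s = {a, b, c, d} ∧ f a = b ∧ g b = c ∧ f c = d ∧ g d = a := by
  obtain ⟨a, b, c, d, hab, hac, had, hbc, hbd, hcd, hs, e1, e2, e3, e4⟩ := h
  have p1 : f a = b ∨ g a = b := e1.imp (fun h => h.2.1) (fun h => h.2.1)
  have p2 : f b = c ∨ g b = c := e2.imp (fun h => h.2.1) (fun h => h.2.1)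
  have p3 : f c = d ∨ g c = d := e3.imp (fun h => h.2.1) (fun h => h.2.1)
  have p4 : f d = a ∨ g d = a := e4.imp (fun h => h.2.1) (fun h => h.2.1)
  rcases p1 with q1 | q1
  · have q2 : g b = c := by
      rcases p2 with q2 | q2
      · exfalso; apply hac; rw [← q2, ← q1, hf]
      · exact q2
    have q3 : f c = d := by
      rcases p3 with q3 | q3
      · exact q3
      · exfalso; apply hbd; rw [← q3, ← q2, hg]
    have q4 : g d = a := by
      rcases p4 with q4 | q4
      · exfalso; apply hac; rw [← q4, ← q3, hf]
      · exact q4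
    exact ⟨a, b, c, d, hab, hac, had, hbc, hbd, hcd, hs, q1, q2, q3, q4⟩
  · have q4 : f d = a := by
      rcases p4 with q4 | q4
      · exact q4
      · exfalso; apply hbd; rw [← q1, ← q4, hg]
    have q2 : f b = c := by
      rcases p2 with q2 | q2
      · exact q2
      · exfalso; apply hac; rw [← q2, ← q1, hg]
    have q3 : g c = d := by
      rcases p3 with q3 | q3
      · exfalso; apply hbd; rw [← q3, ← q2, hf]
      · exact q3
    have r1 : f a = d := by rw [← q4, hf]
    have r2 : g d = c := by rw [← q3, hg]
    have r3 : f c = b := by rw [← q2, hf]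
    have r4 : g b = a := by rw [← q1, hg]
    refine ⟨a, d, c, b, had, hac, hab, hcd.symm, hbd.symm, hbc.symm, ?_, r1, r2, r3, r4⟩
    rw [hs]; ext x
    simp only [Set.mem_insert_iff, Set.mem_singleton_iff]; tauto

lemma fc_head {f g : V → V} (hf : ∀ u, f (f u) = u) (hg : ∀ u, g (g u) = u) {s : Set V}
    (h : IsFourCycleOn (mgraph f ⊔ mgraph g) s) {v : V} (hv : v ∈ s) :
    ∃ b c d : V, v ≠ b ∧ v ≠ c ∧ v ≠ d ∧ b ≠ c ∧ b ≠ d ∧ c ≠ d ∧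
      s = {v, b, c, d} ∧ f v = b ∧ g b = c ∧ f c = d ∧ g d = v := by
  obtain ⟨a, b, c, d, hab, hac, had, hbc, hbd, hcd, hs, q1, q2, q3, q4⟩ := fc_canon hf hg h
  have ifb : f b = a := by rw [← q1, hf]
  have igc : g c = b := by rw [← q2, hg]
  have ifd : f d = c := by rw [← q3, hf]
  have iga : g a = d := by rw [← q4, hg]
  have hv' : v = a ∨ v = b ∨ v = c ∨ v = d := by
    rw [hs] at hv
    simpa only [Set.mem_insert_iff, Set.mem_singleton_iff] using hv
  rcases hv' with rfl | rfl | rfl | rfl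
  · exact ⟨b, c, d, hab, hac, had, hbc, hbd, hcd, hs, q1, q2, q3, q4⟩
  · -- tuple (b, a, d, c)
    refine ⟨a, d, c, hab.symm, hbd, hbc, had, hac, hcd.symm, ?_, ifb, iga, ifd, igc⟩
    rw [hs]; ext t
    simp only [Set.mem_insert_iff, Set.mem_singleton_iff]; tauto
  · -- tuple (c, d, a, b)
    refine ⟨d, a, b, hcd, hac.symm, hbc.symm, had.symm, hbd.symm, hab, ?_, q3, q4, q1, q2⟩
    rw [hs]; ext t
    simp only [Set.mem_insert_iff, Set.mem_singleton_iff]; tauto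
  · -- tuple (d, c, b, a)
    refine ⟨c, b, a, hcd.symm, hbd.symm, had.symm, hbc.symm, hac.symm, hab.symm, ?_, ifd, igc, ifb, iga⟩
    rw [hs]; ext t
    simp only [Set.mem_insert_iff, Set.mem_singleton_iff]; tauto

lemma fc_set_eq {f g : V → V} (hf : ∀ u, f (f u) = u) (hg : ∀ u, g (g u) = u) {s : Set V}
    (h : IsFourCycleOn (mgraph f ⊔ mgraph g) s) {v : V} (hv : v ∈ s) :
    s = {v, f v, g (f v), g v} := by
  obtain ⟨b, c, d, hvb, hvc, hvd, hbc, hbd, hcd, hs, q1, q2, q3, q4⟩ := fc_head hf hg h hv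
  have igv : g v = d := by rw [← q4, hg]
  rw [hs, q1, q2, igv]

lemma ncard_quad {a b c d : V} (hab : a ≠ b) (hac : a ≠ c) (had : a ≠ d)
    (hbc : b ≠ c) (hbd : b ≠ d) (hcd : c ≠ d) : ({a, b, c, d} : Set V).ncard = 4 := by
  have h1 : ({d} : Set V).Finite := Set.finite_singleton d
  have h2 : ({c, d} : Set V).Finite := h1.insert c
  have h3 : ({b, c, d} : Set V).Finite := h2.insert b
  rw [Set.ncard_insert_of_notMem (by simp [hab, hac, had]) h3,
      Set.ncard_insert_of_notMem (by simp [hbc, hbd]) h2,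
      Set.ncard_insert_of_notMem (by simp [hcd]) h1, Set.ncard_singleton]

lemma fourCycleCount_le_of_empty {H : SimpleGraph V}
    (h : ∀ s, ¬ IsFourCycleOn H s) : fourCycleCount H = 0 := by
  have : {s : Set V | IsFourCycleOn H s} = ∅ := by
    ext s; simp only [Set.mem_setOf_eq, Set.mem_empty_iff_false, iff_false]; exact h s
  rw [fourCycleCount, this, Set.ncard_empty]

lemma fourCycleCount_le_one {H : SimpleGraph V} (t : Set V)
    (h : ∀ s, IsFourCycleOn H s → s = t) : fourCycleCount H ≤ 1 := by
  have hsub : {s : Set V | IsFourCycleOn H s} ⊆ {t} := fun s hs => h s hs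
  calc fourCycleCount H ≤ ({t} : Set (Set V)).ncard :=
        Set.ncard_le_ncard hsub (Set.finite_singleton t)
    _ = 1 := Set.ncard_singleton t

lemma fourCycleCount_le_two_of_subset [Finite V] {f g : V → V}
    (hf : ∀ u, f (f u) = u) (hg : ∀ u, g (g u) = u) {C : Set V} (hC : C.ncard ≤ 8)
    (hsub : ∀ s, IsFourCycleOn (mgraph f ⊔ mgraph g) s → s ⊆ C) :
    fourCycleCount (mgraph f ⊔ mgraph g) ≤ 2 := by
  set H := mgraph f ⊔ mgraph g with hH
  by_contra hlt
  push_neg at hlt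
  rw [fourCycleCount, Set.two_lt_ncard (Set.toFinite _)] at hlt
  obtain ⟨s1, hs1, s2, hs2, s3, hs3, h12, h13, h23⟩ := hlt
  simp only [Set.mem_setOf_eq] at hs1 hs2 hs3
  have hdisj : ∀ s s' : Set V, IsFourCycleOn H s → IsFourCycleOn H s' → s ≠ s' →
      Disjoint s s' := by
    intro s s' h h' hne
    rw [Set.disjoint_left]
    intro v hv hv'
    exact hne ((fc_set_eq hf hg h hv).trans (fc_set_eq hf hg h' hv').symm)
  have hsz : ∀ s : Set V, IsFourCycleOn H s → s.ncard = 4 := by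
    intro s h
    obtain ⟨a, b, c, d, hab, hac, had, hbc, hbd, hcd, hs, -⟩ := h
    rw [hs]; exact ncard_quad hab hac had hbc hbd hcd
  have d12 := hdisj _ _ hs1 hs2 h12
  have d13 := hdisj _ _ hs1 hs3 h13
  have d23 := hdisj _ _ hs2 hs3 h23
  have hu : (s1 ∪ (s2 ∪ s3)).ncard = 12 := by
    rw [Set.ncard_union_eq (Set.disjoint_union_right.mpr ⟨d12, d13⟩) (Set.toFinite _)
        (Set.toFinite _),
      Set.ncard_union_eq d23 (Set.toFinite _) (Set.toFinite _),
      hsz _ hs1, hsz _ hs2, hsz _ hs3]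
  have hsubU : s1 ∪ (s2 ∪ s3) ⊆ C :=
    Set.union_subset (hsub _ hs1) (Set.union_subset (hsub _ hs2) (hsub _ hs3))
  have := Set.ncard_le_ncard hsubU (Set.toFinite C)
  omega

lemma ncard_oct {α : Type*} (x1 x2 x3 x4 x5 x6 x7 x8 : α) :
    ({x1, x2, x3, x4, x5, x6, x7, x8} : Set α).ncard ≤ 8 := by
  refine le_trans (Set.ncard_insert_le _ _) ?_
  refine le_trans (Nat.add_le_add_right (Set.ncard_insert_le _ _) 1) ?_
  refine le_trans (Nat.add_le_add_right (Nat.add_le_add_right (Set.ncard_insert_le _ _) 1) 1) ?_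
  refine le_trans (Nat.add_le_add_right (Nat.add_le_add_right (Nat.add_le_add_right
    (Set.ncard_insert_le _ _) 1) 1) 1) ?_
  refine le_trans (Nat.add_le_add_right (Nat.add_le_add_right (Nat.add_le_add_right
    (Nat.add_le_add_right (Set.ncard_insert_le _ _) 1) 1) 1) 1) ?_
  refine le_trans (Nat.add_le_add_right (Nat.add_le_add_right (Nat.add_le_add_right
    (Nat.add_le_add_right (Nat.add_le_add_right (Set.ncard_insert_le _ _) 1) 1) 1) 1) 1) ?_
  refine le_trans (Nat.add_le_add_right (Nat.add_le_add_right (Nat.add_le_add_right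
    (Nat.add_le_add_right (Nat.add_le_add_right (Nat.add_le_add_right
      (Set.ncard_insert_le _ _) 1) 1) 1) 1) 1) 1) ?_
  simp [Set.ncard_singleton]


/-! ### Field-side setup -/

section FieldSide

variable {K : Type*} [Field K] [Fintype K]

/-- Multiplying a nonzero element by a non-square flips being a square. -/
lemma sq_mul_ns {a m : K} (ha : a ≠ 0) (hm : ¬ IsSquare m) :
    IsSquare (a * m) ↔ ¬ IsSquare a := by
  classical
  have hm0 : m ≠ 0 := fun h => hm (h ▸ IsSquare.zero)
  have ham : a * m ≠ 0 := mul_ne_zero ha hm0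
  rw [← quadraticChar_one_iff_isSquare ham, map_mul,
    quadraticChar_neg_one_iff_not_isSquare.mpr hm, ← quadraticChar_neg_one_iff_not_isSquare]
  rcases quadraticChar_dichotomy (F := K) ha with h | h <;> rw [h] <;> norm_num

/-- Bundled hypotheses on the field `K` and the chosen non-square `μ` (with inverse `ν`). -/
structure GoodPair (K : Type*) [Field K] [Fintype K] (μ ν : K) : Prop where
  hμ : ¬ IsSquare μ
  hμν : μ * ν = 1
  hneg1 : ¬ IsSquare (-1 : K)
  hμ1 : μ ≠ -1
  h2 : (2 : K) ≠ 0
  h3 : (3 : K) ≠ 0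
  h6 : ∀ z : K, z * z + 1 ≠ z

namespace GoodPair

variable {μ ν : K} (S : GoodPair K μ ν)
include S

lemma hμ0 : μ ≠ 0 := fun h => S.hμ (h ▸ IsSquare.zero)
lemma hν0 : ν ≠ 0 := fun h => by simpa [h] using S.hμν
lemma hμone : μ ≠ 1 := fun h => S.hμ (h ▸ IsSquare.one)
lemma hνval : ν = μ⁻¹ := by
  field_simp [S.hμ0]
  linear_combination S.hμν
lemma hν : ¬ IsSquare ν := by
  intro ⟨r, hr⟩
  exact S.hμ ⟨r * μ, by linear_combination (-μ) * S.hμν + μ ^ 2 * hr⟩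
lemma hνone : ν ≠ 1 := fun h => S.hν (h ▸ IsSquare.one)
lemma hν1 : ν ≠ -1 := by
  intro h
  apply S.hμ1
  have := S.hμν
  rw [h] at this
  linear_combination -this
lemma h1pμ : 1 + μ ≠ 0 := fun h => S.hμ1 (by linear_combination h)
lemma h1mμ : 1 - μ ≠ 0 := fun h => S.hμone (by linear_combination -h)
lemma h1pν : 1 + ν ≠ 0 := fun h => S.hν1 (by linear_combination h)
lemma h1mν : 1 - ν ≠ 0 := fun h => S.hνone (by linear_combination -h)
lemma hμμ : 1 - μ ^ 2 ≠ 0 := by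
  intro h
  exact S.h1pμ (by
    rcases mul_eq_zero.mp (show (1 - μ) * (1 + μ) = 0 by linear_combination h) with h' | h'
    · exact (S.h1mμ h').elim
    · exact h')
lemma hνν : 1 - ν ^ 2 ≠ 0 := by
  intro h
  exact S.h1pν (by
    rcases mul_eq_zero.mp (show (1 - ν) * (1 + ν) = 0 by linear_combination h) with h' | h'
    · exact (S.h1mν h').elim
    · exact h')
lemma h2mμν : 2 - μ - ν ≠ 0 := by
  intro h
  have : (1 - μ) * (1 - μ) = 0 := by linear_combination (-μ) * h - S.hμν
  exact S.h1mμ (mul_self_eq_zero.mp this)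
lemma h1pμ2 : 1 + μ ^ 2 ≠ 0 := by
  intro h
  exact S.hneg1 ⟨μ, by linear_combination -h⟩
lemma h1pν2 : 1 + ν ^ 2 ≠ 0 := by
  intro h
  exact S.hneg1 ⟨ν, by linear_combination -h⟩
lemma h4 : (4 : K) ≠ 0 := by
  intro h
  exact S.h2 (by
    rcases mul_eq_zero.mp (show (2 : K) * 2 = 0 by linear_combination h) with h' | h' <;>
      exact h')

lemma sq_mul_μ {a : K} (ha : a ≠ 0) : IsSquare (a * μ) ↔ ¬ IsSquare a :=
  sq_mul_ns ha S.hμ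

lemma sq_mul_ν {a : K} (ha : a ≠ 0) : IsSquare (a * ν) ↔ ¬ IsSquare a :=
  sq_mul_ns ha S.hν

lemma sq_neg {a : K} (ha : a ≠ 0) : IsSquare (-a) ↔ ¬ IsSquare a := by
  rw [show -a = a * (-1) by ring]
  exact sq_mul_ns ha S.hneg1

end GoodPair

open scoped Classical in
/-- Horton partner of `z`. -/
noncomputable def HP (μ ν : K) (z : K) : K := if IsSquare z then z * μ else z * ν

lemma HP_of_sq {μ ν z : K} (h : IsSquare z) : HP μ ν z = z * μ := by
  rw [HP, if_pos h]

lemma HP_of_ns {μ ν z : K} (h : ¬ IsSquare z) : HP μ ν z = z * ν := by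
  rw [HP, if_neg h]

namespace GoodPair

variable {μ ν : K} (S : GoodPair K μ ν)
include S

lemma HP_ne_zero {z : K} (hz : z ≠ 0) : HP μ ν z ≠ 0 := by
  by_cases h : IsSquare z
  · rw [HP_of_sq h]; exact mul_ne_zero hz S.hμ0
  · rw [HP_of_ns h]; exact mul_ne_zero hz S.hν0

lemma HP_invol {z : K} (hz : z ≠ 0) : HP μ ν (HP μ ν z) = z := by
  by_cases h : IsSquare z
  · rw [HP_of_sq h, HP_of_ns (fun hh => ((S.sq_mul_μ hz).mp hh) h)]
    linear_combination z * S.hμν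
  · rw [HP_of_ns h, HP_of_sq ((S.sq_mul_ν hz).mpr h)]
    linear_combination z * S.hμν

lemma HP_ne_self {z : K} (hz : z ≠ 0) : HP μ ν z ≠ z := by
  by_cases h : IsSquare z
  · rw [HP_of_sq h]
    intro hh
    exact S.hμone (mul_left_cancel₀ hz (by rw [mul_one]; exact hh))
  · rw [HP_of_ns h]
    intro hh
    exact S.hνone (mul_left_cancel₀ hz (by rw [mul_one]; exact hh))

end GoodPair

end FieldSide


/-! ### The two families of one-factors -/

section Factors

variable {K : Type*} [Field K] [Fintype K]

open scoped Classical in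
noncomputable def mF (γ : K) : Option K → Option K
  | none => some γ
  | some x => if x = γ then none else some (γ + γ - x)

open scoped Classical in
noncomputable def mG (μ ν δ : K) : Option K → Option K
  | none => some δ
  | some x => if x = δ then none else some (HP μ ν (x - δ) + δ)

lemma mF_none (γ : K) : mF γ none = some γ := rfl

lemma mF_some_inv {γ x y : K} (h : mF γ (some x) = some y) :
    x ≠ γ ∧ y = γ + γ - x := by
  by_cases hx : x = γ
  · simp [mF, hx] at h
  · refine ⟨hx, ?_⟩
    simp only [mF, if_neg hx, Option.some.injEq] at h
    exact h.symm

lemma mF_eq_none {γ : K} {u : Option K} (h : mF γ u = none) : u = some γ := by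
  cases u with
  | none => simp [mF] at h
  | some x =>
    by_cases hx : x = γ
    · rw [hx]
    · simp [mF, if_neg hx] at h

lemma mG_none (μ ν δ : K) : mG μ ν δ none = some δ := rfl

lemma mG_some_inv {μ ν δ x y : K} (h : mG μ ν δ (some x) = some y) :
    x ≠ δ ∧ y = HP μ ν (x - δ) + δ := by
  by_cases hx : x = δ
  · simp [mG, hx] at h
  · refine ⟨hx, ?_⟩
    simp only [mG, if_neg hx, Option.some.injEq] at h
    exact h.symm

lemma mG_eq_none {μ ν δ : K} {u : Option K} (h : mG μ ν δ u = none) : u = some δ := by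
  cases u with
  | none => simp [mG] at h
  | some x =>
    by_cases hx : x = δ
    · rw [hx]
    · simp [mG, if_neg hx] at h

lemma mF_some_of_ne {γ x : K} (hx : x ≠ γ) : mF γ (some x) = some (γ + γ - x) := by
  simp [mF, if_neg hx]

lemma mG_some_of_ne {μ ν δ x : K} (hx : x ≠ δ) :
    mG μ ν δ (some x) = some (HP μ ν (x - δ) + δ) := by
  simp [mG, if_neg hx]

lemma mF_invol (γ : K) : ∀ u, mF γ (mF γ (u : Option K)) = u := by
  intro u
  cases u with
  | none => simp [mF]
  | some x =>
    by_cases hx : x = γ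
    · simp [mF, hx]
    · rw [mF_some_of_ne hx]
      have h2 : γ + γ - x ≠ γ := fun h => hx (by linear_combination -h)
      rw [mF_some_of_ne h2]
      congr 1
      ring

namespace GoodPair

variable {μ ν : K} (S : GoodPair K μ ν)

include S

lemma mF_fpf (γ : K) : ∀ u, mF γ (u : Option K) ≠ u := by
  intro u
  cases u with
  | none => simp [mF]
  | some x =>
    by_cases hx : x = γ
    · simp [mF, hx]
    · rw [mF_some_of_ne hx]
      intro h
      rw [Option.some.injEq] at h
      apply hx
      have h2 := S.h2
      have : (γ - x) * 2 = 0 := by linear_combination h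
      rcases mul_eq_zero.mp this with h' | h'
      · linear_combination -h'
      · exact (h2 h').elim

lemma mG_invol (δ : K) : ∀ u, mG μ ν δ (mG μ ν δ (u : Option K)) = u := by
  intro u
  cases u with
  | none => simp [mG]
  | some x =>
    by_cases hx : x = δ
    · simp [mG, hx]
    · rw [mG_some_of_ne hx]
      have hz : x - δ ≠ 0 := sub_ne_zero.mpr hx
      have h2 : HP μ ν (x - δ) + δ ≠ δ := fun h =>
        S.HP_ne_zero hz (by linear_combination h)
      rw [mG_some_of_ne h2]
      rw [Option.some.injEq, add_sub_cancel_right, S.HP_invol hz]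
      ring

lemma mG_fpf (δ : K) : ∀ u, mG μ ν δ (u : Option K) ≠ u := by
  intro u
  cases u with
  | none => simp [mG]
  | some x =>
    by_cases hx : x = δ
    · simp [mG, hx]
    · rw [mG_some_of_ne hx]
      intro h
      rw [Option.some.injEq] at h
      have hz : x - δ ≠ 0 := sub_ne_zero.mpr hx
      exact S.HP_ne_self hz (by linear_combination h)

end GoodPair

/-- The one-factor `F_γ`. -/
noncomputable def fFac (γ : K) : SimpleGraph (Option K) := mgraph (mF γ)

/-- The one-factor `G_δ`. -/
noncomputable def gFac (μ ν δ : K) : SimpleGraph (Option K) := mgraph (mG μ ν δ)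

end Factors


/-! ### One-factorization properties -/

section OneFacts

variable {K : Type*} [Field K] [Fintype K] {μ ν : K}

lemma mgraph_adj_of (f : Option K → Option K) (hinv : ∀ u, f (f u) = u) {u v : Option K}
    (hne : u ≠ v) (h : f u = v) : (mgraph f).Adj u v :=
  ⟨hne, h, by rw [← h, hinv]⟩

namespace GoodPair

variable (S : GoodPair K μ ν)

include S

lemma fFac_cover {u v : Option K} (hne : u ≠ v) : ∃ γ : K, (fFac γ).Adj u v := by
  cases u with
  | none =>
    cases v with
    | none => exact (hne rfl).elim
    | some y => exact ⟨y, mgraph_adj_of _ (mF_invol y) hne rfl⟩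
  | some x =>
    cases v with
    | none =>
      refine ⟨x, mgraph_adj_of _ (mF_invol x) hne ?_⟩
      simp [mF]
    | some y =>
      have hxy : x ≠ y := fun h => hne (by rw [h])
      obtain ⟨γ, hγ⟩ : ∃ γ : K, γ + γ = x + y :=
        ⟨(x + y) / 2, by have := div_mul_cancel₀ (x + y) S.h2; linear_combination this⟩
      refine ⟨γ, mgraph_adj_of _ (mF_invol _) hne ?_⟩
      have hx : x ≠ γ := by
        intro h
        exact hxy (by linear_combination hγ + 2 * h)
      rw [mF_some_of_ne hx, Option.some.injEq]
      linear_combination hγ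

lemma gFac_cover {u v : Option K} (hne : u ≠ v) : ∃ δ : K, (gFac μ ν δ).Adj u v := by
  cases u with
  | none =>
    cases v with
    | none => exact (hne rfl).elim
    | some y => exact ⟨y, mgraph_adj_of _ (S.mG_invol y) hne rfl⟩
  | some x =>
    cases v with
    | none =>
      refine ⟨x, mgraph_adj_of _ (S.mG_invol x) hne ?_⟩
      simp [mG]
    | some y =>
      have hxy : x ≠ y := fun h => hne (by rw [h])
      have hd : x - y ≠ 0 := sub_ne_zero.mpr hxy
      obtain ⟨t, htm⟩ : ∃ t : K, t * (1 - μ) = x - y :=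
        ⟨(x - y) / (1 - μ), div_mul_cancel₀ _ S.h1mμ⟩
      have ht0 : t ≠ 0 := by
        intro h
        exact hd (by rw [← htm, h, zero_mul])
      by_cases hsq : IsSquare t
      · -- δ = x - t ; pair (t, t*μ) gives edge (x, y)
        refine ⟨x - t, mgraph_adj_of _ (S.mG_invol _) hne ?_⟩
        have hxδ : x ≠ x - t := fun h => ht0 (by linear_combination h)
        rw [mG_some_of_ne hxδ, Option.some.injEq, show x - (x - t) = t by ring,
          HP_of_sq hsq]
        linear_combination -htm
      · -- δ = y + t ; the pair (-t, -t*μ) gives the edge (y, x)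
        have hsq' : IsSquare (-t) := (S.sq_neg ht0).mpr hsq
        refine ⟨y + t, ((mgraph_adj_of _ (S.mG_invol _) (Ne.symm hne) ?_)).symm⟩
        have hyδ : y ≠ y + t := fun h => ht0 (by linear_combination -h)
        rw [mG_some_of_ne hyδ, Option.some.injEq, show y - (y + t) = -t by ring,
          HP_of_sq hsq']
        linear_combination htm

lemma fFac_disj {γ δ : K} (hγδ : γ ≠ δ) {u v : Option K}
    (h1 : (fFac γ).Adj u v) (h2 : (fFac δ).Adj u v) : False := by
  obtain ⟨-, e1, -⟩ := h1
  obtain ⟨-, e2, -⟩ := h2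
  cases u with
  | none =>
    rw [mF_none] at e1 e2
    rw [← e2, Option.some.injEq] at e1
    exact hγδ e1
  | some x =>
    cases v with
    | none =>
      have := mF_eq_none e1
      have := mF_eq_none e2
      simp_all
    | some y =>
      obtain ⟨-, q1⟩ := mF_some_inv e1
      obtain ⟨-, q2⟩ := mF_some_inv e2
      apply hγδ
      have h2' := S.h2
      have : (γ - δ) * 2 = 0 := by linear_combination q2 - q1
      rcases mul_eq_zero.mp this with h' | h'
      · linear_combination h'
      · exact (h2' h').elim

lemma gFac_disj {γ δ : K} (hγδ : γ ≠ δ) {u v : Option K}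
    (h1 : (gFac μ ν γ).Adj u v) (h2 : (gFac μ ν δ).Adj u v) : False := by
  obtain ⟨-, e1, -⟩ := h1
  obtain ⟨-, e2, -⟩ := h2
  cases u with
  | none =>
    rw [mG_none] at e1 e2
    rw [← e2, Option.some.injEq] at e1
    exact hγδ e1
  | some x =>
    cases v with
    | none =>
      have := mG_eq_none e1
      have := mG_eq_none e2
      simp_all
    | some y =>
      obtain ⟨hxγ, q1⟩ := mG_some_inv e1
      obtain ⟨hxδ, q2⟩ := mG_some_inv e2
      have hzγ : x - γ ≠ 0 := sub_ne_zero.mpr hxγ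
      have hzδ : x - δ ≠ 0 := sub_ne_zero.mpr hxδ
      have key : HP μ ν (x - γ) + γ = HP μ ν (x - δ) + δ := by rw [← q1, ← q2]
      by_cases s1 : IsSquare (x - γ) <;> by_cases s2 : IsSquare (x - δ)
      · rw [HP_of_sq s1, HP_of_sq s2] at key
        have : (γ - δ) * (1 - μ) = 0 := by linear_combination key
        rcases mul_eq_zero.mp this with h' | h'
        · exact hγδ (by linear_combination h')
        · exact S.h1mμ h'
      · -- x-γ square, x-δ nonsquare : x-δ = -(x-γ)*μ
        rw [HP_of_sq s1, HP_of_ns s2] at key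
        have : ((x - γ) * μ + (x - δ)) * (μ - 1) = 0 := by
          linear_combination μ * key + (x - δ) * S.hμν
        rcases mul_eq_zero.mp this with h' | h'
        · apply s2
          rw [show x - δ = -((x - γ) * μ) by linear_combination h']
          rw [S.sq_neg (mul_ne_zero hzγ S.hμ0), S.sq_mul_μ hzγ]
          simpa using s1
        · exact S.hμone (by linear_combination h')
      · -- x-γ nonsquare, x-δ square
        rw [HP_of_ns s1, HP_of_sq s2] at key
        have : ((x - δ) * μ + (x - γ)) * (μ - 1) = 0 := by
          linear_combination -μ * key + (x - γ) * S.hμν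
        rcases mul_eq_zero.mp this with h' | h'
        · apply s1
          rw [show x - γ = -((x - δ) * μ) by linear_combination h']
          rw [S.sq_neg (mul_ne_zero hzδ S.hμ0), S.sq_mul_μ hzδ]
          simpa using s2
        · exact S.hμone (by linear_combination h')
      · rw [HP_of_ns s1, HP_of_ns s2] at key
        have : (γ - δ) * (1 - ν) = 0 := by linear_combination key
        rcases mul_eq_zero.mp this with h' | h'
        · exact hγδ (by linear_combination h')
        · exact S.h1mν h'

end GoodPair

end OneFacts

/-! ### Orthogonality -/

section Orth

variable {K : Type*} [Field K] [Fintype K] {μ ν : K}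

lemma disjoint_edgeSet_of {W : Type*} {G H : SimpleGraph W}
    (h : ∀ u v, G.Adj u v → ¬ H.Adj u v) : Disjoint G.edgeSet H.edgeSet := by
  rw [Set.disjoint_left]
  intro e he1 he2
  induction e using Sym2.ind with
  | _ u v =>
    rw [SimpleGraph.mem_edgeSet] at he1 he2
    exact h u v he1 he2

namespace GoodPair

variable (S : GoodPair K μ ν)

include S

lemma horton_sum_ne {z : K} (hz : z ≠ 0) : z + HP μ ν z ≠ 0 := by
  by_cases h : IsSquare z
  · rw [HP_of_sq h]
    intro hh
    have : z * (1 + μ) = 0 := by linear_combination hh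
    rcases mul_eq_zero.mp this with h' | h'
    · exact hz h'
    · exact S.h1pμ h'
  · rw [HP_of_ns h]
    intro hh
    have : z * (1 + ν) = 0 := by linear_combination hh
    rcases mul_eq_zero.mp this with h' | h'
    · exact hz h'
    · exact S.h1pν h'

lemma horton_pair_eq {z z' : K} (hz : z ≠ 0) (hz' : z' ≠ 0)
    (h : z + HP μ ν z = z' + HP μ ν z') : z' = z ∨ z' = HP μ ν z := by
  by_cases s1 : IsSquare z <;> by_cases s2 : IsSquare z'
  · rw [HP_of_sq s1, HP_of_sq s2] at h
    left
    have : (z - z') * (1 + μ) = 0 := by linear_combination h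
    rcases mul_eq_zero.mp this with h' | h'
    · linear_combination -h'
    · exact (S.h1pμ h').elim
  · rw [HP_of_sq s1, HP_of_ns s2] at h
    right
    rw [HP_of_sq s1]
    have : (z' - z * μ) * (1 + μ) = 0 := by linear_combination -μ * h - z' * S.hμν
    rcases mul_eq_zero.mp this with h' | h'
    · linear_combination h'
    · exact (S.h1pμ h').elim
  · rw [HP_of_ns s1, HP_of_sq s2] at h
    right
    rw [HP_of_ns s1]
    have : (z' - z * ν) * (1 + ν) = 0 := by linear_combination -ν * h - z' * S.hμν
    rcases mul_eq_zero.mp this with h' | h'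
    · linear_combination h'
    · exact (S.h1pν h').elim
  · rw [HP_of_ns s1, HP_of_ns s2] at h
    left
    have : (z - z') * (1 + ν) = 0 := by linear_combination h
    rcases mul_eq_zero.mp this with h' | h'
    · linear_combination -h'
    · exact (S.h1pν h').elim

lemma cross_edge {γ δ : K} {u v : Option K}
    (h1 : (fFac γ).Adj u v) (h2 : (gFac μ ν δ).Adj u v) :
    (s(u, v) = s((none : Option K), some γ) ∧ γ = δ) ∨
      (∃ z : K, z ≠ 0 ∧ z + HP μ ν z = (γ - δ) + (γ - δ) ∧
        s(u, v) = s(some (z + δ), some (HP μ ν z + δ))) := by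
  obtain ⟨-, e1, -⟩ := h1
  obtain ⟨-, e2, -⟩ := h2
  cases u with
  | none =>
    rw [mF_none] at e1
    rw [mG_none] at e2
    left
    rw [← e1]
    rw [← e2, Option.some.injEq] at e1
    exact ⟨rfl, e1⟩
  | some x =>
    cases v with
    | none =>
      have hx1 := mF_eq_none e1
      have hx2 := mG_eq_none e2
      rw [Option.some.injEq] at hx1 hx2
      left
      rw [hx1, Sym2.eq_swap]
      exact ⟨rfl, by rw [← hx1, hx2]⟩
    | some y =>
      obtain ⟨hxγ, q1⟩ := mF_some_inv e1
      obtain ⟨hxδ, q2⟩ := mG_some_inv e2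
      right
      refine ⟨x - δ, sub_ne_zero.mpr hxδ, ?_, ?_⟩
      · have : HP μ ν (x - δ) = y - δ := by linear_combination -q2
        rw [this]
        linear_combination q1
      · have h1' : x - δ + δ = x := by ring
        have h2' : HP μ ν (x - δ) + δ = y := by linear_combination -q2
        rw [h1', h2']

lemma cross_subsingleton (γ δ : K) :
    ((fFac γ).edgeSet ∩ (gFac μ ν δ).edgeSet).Subsingleton := by
  intro e he e' he'
  induction e using Sym2.ind with
  | _ u v =>
    induction e' using Sym2.ind with
    | _ u' v' =>
      obtain ⟨he1, he2⟩ := he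
      obtain ⟨he1', he2'⟩ := he'
      rw [SimpleGraph.mem_edgeSet] at he1 he2 he1' he2'
      rcases S.cross_edge he1 he2 with ⟨hs, hγδ⟩ | ⟨z, hz, hsum, hs⟩ <;>
        rcases S.cross_edge he1' he2' with ⟨hs', hγδ'⟩ | ⟨z', hz', hsum', hs'⟩
      · rw [hs, hs']
      · exfalso
        rw [hγδ] at hsum'
        simp only [sub_self, add_zero] at hsum'
        exact S.horton_sum_ne hz' hsum'
      · exfalso
        rw [hγδ'] at hsum
        simp only [sub_self, add_zero] at hsum
        exact S.horton_sum_ne hz hsum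
      · rw [hs, hs']
        rcases S.horton_pair_eq hz hz' (by rw [hsum, hsum']) with h | h
        · rw [h]
        · rw [h, S.HP_invol hz, Sym2.eq_swap]

lemma fFac_inj {γ δ : K} (h : fFac γ = fFac (K := K) δ) : γ = δ := by
  have hadj : (fFac γ).Adj none (some γ) :=
    mgraph_adj_of _ (mF_invol γ) (by simp) rfl
  rw [h] at hadj
  obtain ⟨-, e, -⟩ := hadj
  rw [mF_none, Option.some.injEq] at e
  exact e.symm

lemma gFac_inj {γ δ : K} (h : gFac μ ν γ = gFac μ ν δ) : γ = δ := by
  have hadj : (gFac μ ν γ).Adj none (some γ) :=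
    mgraph_adj_of _ (S.mG_invol γ) (by simp) rfl
  rw [h] at hadj
  obtain ⟨-, e, -⟩ := hadj
  rw [mG_none, Option.some.injEq] at e
  exact e.symm

end GoodPair

end Orth

/-! ### Four-cycle analysis -/

section FourCycles

variable {K : Type*} [Field K] [Fintype K] {μ ν : K}

noncomputable def GGC (μ ν γ δ : K) : Set K :=
  {δ + ((1)*δ + (-1)*δ*ν + (-1)*δ*μ + (1)*δ*μ^2 + (-1)*γ + (1)*γ*ν + (1)*γ*μ + (-1)*γ*μ^2) / (1 - μ^2),
   δ + ((1)*δ + (-2)*δ*μ + (1)*δ*μ^2 + (-1)*γ + (2)*γ*μ + (-1)*γ*μ^2) / (1 - μ^2),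
   δ + ((-2)*δ*μ + (2)*δ*μ^2 + (2)*γ*μ + (-2)*γ*μ^2) / (1 - μ^2),
   δ + ((-1)*δ*ν + (2)*δ*ν^2 + (-1)*δ*ν^3 + (1)*γ*ν + (-2)*γ*ν^2 + (1)*γ*ν^3) / (1 - ν^2),
   δ + ((-1)*δ*μ + (2)*δ*μ^2 + (-1)*δ*μ^3 + (1)*γ*μ + (-2)*γ*μ^2 + (1)*γ*μ^3) / (1 - μ^2),
   δ + ((-2)*δ*ν + (2)*δ*ν^2 + (2)*γ*ν + (-2)*γ*ν^2) / (1 - ν^2),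
   δ + ((1)*δ + (-2)*δ*ν + (1)*δ*ν^2 + (-1)*γ + (2)*γ*ν + (-1)*γ*ν^2) / (1 - ν^2),
   δ + ((1)*δ + (-1)*δ*ν + (1)*δ*ν^2 + (-1)*δ*μ + (-1)*γ + (1)*γ*ν + (-1)*γ*ν^2 + (1)*γ*μ) / (1 - ν^2)}

namespace GoodPair

variable (S : GoodPair K μ ν)

include S

lemma GG_main {γ δ : K} (hγδ : γ ≠ δ) {a b c d : K} (hac : a ≠ c)
    (e1 : b = HP μ ν (a - γ) + γ) (e2 : c = HP μ ν (b - δ) + δ)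
    (e3 : d = HP μ ν (c - γ) + γ) (e4 : a = HP μ ν (d - δ) + δ) :
    a ∈ GGC μ ν γ δ := by
  have hne : γ - δ ≠ 0 := sub_ne_zero.mpr hγδ
  by_cases s1 : IsSquare (a - γ)
  · rw [HP_of_sq s1] at e1
    by_cases s2 : IsSquare (b - δ)
    · rw [HP_of_sq s2] at e2
      by_cases s3 : IsSquare (c - γ)
      · rw [HP_of_sq s3] at e3
        by_cases s4 : IsSquare (d - δ)
        · rw [HP_of_sq s4] at e4
          exfalso
          have key : (a - c) * ((1 - μ^2) * (1 + μ^2)) = 0 := by linear_combination ((-1)*μ + (1)*μ^3) * e1 + ((-1) + (1)*μ^2) * e2 + ((1)*μ + (-1)*μ^3) * e3 + ((1) + (-1)*μ^2) * e4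
          rcases mul_eq_zero.mp key with h' | h'
          · exact hac (by linear_combination h')
          · rcases mul_eq_zero.mp h' with h'' | h''
            · exact S.hμμ h''
            · exact S.h1pμ2 h''
        · rw [HP_of_ns s4] at e4
          have key : (a - δ) * (1 - μ^2) = (1)*δ + (-1)*δ*ν + (-1)*δ*μ + (1)*δ*μ^2 + (-1)*γ + (1)*γ*ν + (1)*γ*μ + (-1)*γ*μ^2 := by linear_combination ((1)*μ^2*ν) * e1 + ((1)*μ*ν) * e2 + ((1)*ν) * e3 + ((1)) * e4 + ((1)*δ + (-1)*δ*μ + (-1)*γ + (1)*γ*μ + (-1)*γ*μ^2 + (1)*a*μ^2) * S.hμν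
          have h' : a - δ = ((1)*δ + (-1)*δ*ν + (-1)*δ*μ + (1)*δ*μ^2 + (-1)*γ + (1)*γ*ν + (1)*γ*μ + (-1)*γ*μ^2) / (1 - μ^2) := (eq_div_iff S.hμμ).mpr key
          have hval : a = δ + ((1)*δ + (-1)*δ*ν + (-1)*δ*μ + (1)*δ*μ^2 + (-1)*γ + (1)*γ*ν + (1)*γ*μ + (-1)*γ*μ^2) / (1 - μ^2) := by linear_combination h'
          simp only [GGC, Set.mem_insert_iff, Set.mem_singleton_iff]
          exact Or.inl hval
      · rw [HP_of_ns s3] at e3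
        by_cases s4 : IsSquare (d - δ)
        · rw [HP_of_sq s4] at e4
          have key : (a - δ) * (1 - μ^2) = (1)*δ + (-2)*δ*μ + (1)*δ*μ^2 + (-1)*γ + (2)*γ*μ + (-1)*γ*μ^2 := by linear_combination ((1)*μ^2*ν) * e1 + ((1)*μ*ν) * e2 + ((1)*μ) * e3 + ((1)) * e4 + ((1)*δ + (-1)*δ*μ + (-1)*γ + (1)*γ*μ + (-1)*γ*μ^2 + (1)*a*μ^2) * S.hμν
          have h' : a - δ = ((1)*δ + (-2)*δ*μ + (1)*δ*μ^2 + (-1)*γ + (2)*γ*μ + (-1)*γ*μ^2) / (1 - μ^2) := (eq_div_iff S.hμμ).mpr key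
          have hval : a = δ + ((1)*δ + (-2)*δ*μ + (1)*δ*μ^2 + (-1)*γ + (2)*γ*μ + (-1)*γ*μ^2) / (1 - μ^2) := by linear_combination h'
          simp only [GGC, Set.mem_insert_iff, Set.mem_singleton_iff]
          exact Or.inr (Or.inl hval)
        · rw [HP_of_ns s4] at e4
          exfalso
          have key : (γ - δ) * ((1 - ν) * (1 - ν)) = 0 := by linear_combination ((1)*μ*ν^2) * e1 + ((1)*ν^2) * e2 + ((1)*ν) * e3 + ((1)) * e4 + ((-1)*δ*ν + (-1)*γ + (1)*γ*ν + (-1)*γ*μ*ν + (1)*a + (1)*a*μ*ν) * S.hμν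
          rcases mul_eq_zero.mp key with h' | h'
          · exact hγδ (by linear_combination h')
          · exact S.h1mν (mul_self_eq_zero.mp h')
    · rw [HP_of_ns s2] at e2
      by_cases s3 : IsSquare (c - γ)
      · rw [HP_of_sq s3] at e3
        by_cases s4 : IsSquare (d - δ)
        · rw [HP_of_sq s4] at e4
          have key : (a - δ) * (1 - μ^2) = (-2)*δ*μ + (2)*δ*μ^2 + (2)*γ*μ + (-2)*γ*μ^2 := by linear_combination ((1)*μ^2*ν) * e1 + ((1)*μ^2) * e2 + ((1)*μ) * e3 + ((1)) * e4 + ((-1)*δ*μ + (1)*γ*μ + (-1)*γ*μ^2 + (1)*a*μ^2) * S.hμν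
          have h' : a - δ = ((-2)*δ*μ + (2)*δ*μ^2 + (2)*γ*μ + (-2)*γ*μ^2) / (1 - μ^2) := (eq_div_iff S.hμμ).mpr key
          have hval : a = δ + ((-2)*δ*μ + (2)*δ*μ^2 + (2)*γ*μ + (-2)*γ*μ^2) / (1 - μ^2) := by linear_combination h'
          simp only [GGC, Set.mem_insert_iff, Set.mem_singleton_iff]
          exact Or.inr (Or.inr (Or.inl hval))
        · rw [HP_of_ns s4] at e4
          exfalso
          have key : (γ - δ) * (2 * (1 - ν)) = 0 := by linear_combination ((1)*μ*ν^2) * e1 + ((1)*μ*ν) * e2 + ((1)*ν) * e3 + ((1)) * e4 + ((1)*δ + (-1)*δ*ν + (-2)*γ + (1)*γ*ν + (-1)*γ*μ*ν + (1)*a + (1)*a*μ*ν) * S.hμν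
          rcases mul_eq_zero.mp key with h' | h'
          · exact hγδ (by linear_combination h')
          · rcases mul_eq_zero.mp h' with h'' | h''
            · exact S.h2 h''
            · exact S.h1mν h''
      · rw [HP_of_ns s3] at e3
        by_cases s4 : IsSquare (d - δ)
        · rw [HP_of_sq s4] at e4
          exfalso
          have key : (γ - δ) * (2 - μ - ν) = 0 := by linear_combination ((1)*μ*ν^2) * e1 + ((1)*μ*ν) * e2 + ((1)*μ) * e3 + ((1)) * e4 + ((1)*δ + (-1)*δ*ν + (-2)*γ + (1)*γ*ν + (-1)*γ*μ*ν + (1)*a + (1)*a*μ*ν) * S.hμν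
          rcases mul_eq_zero.mp key with h' | h'
          · exact hγδ (by linear_combination h')
          · exact S.h2mμν h'
        · rw [HP_of_ns s4] at e4
          have key : (a - δ) * (1 - ν^2) = (-1)*δ*ν + (2)*δ*ν^2 + (-1)*δ*ν^3 + (1)*γ*ν + (-2)*γ*ν^2 + (1)*γ*ν^3 := by linear_combination ((1)*ν^3) * e1 + ((1)*ν^2) * e2 + ((1)*ν) * e3 + ((1)) * e4 + ((-1)*γ*ν^2 + (1)*a*ν^2) * S.hμν
          have h' : a - δ = ((-1)*δ*ν + (2)*δ*ν^2 + (-1)*δ*ν^3 + (1)*γ*ν + (-2)*γ*ν^2 + (1)*γ*ν^3) / (1 - ν^2) := (eq_div_iff S.hνν).mpr key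
          have hval : a = δ + ((-1)*δ*ν + (2)*δ*ν^2 + (-1)*δ*ν^3 + (1)*γ*ν + (-2)*γ*ν^2 + (1)*γ*ν^3) / (1 - ν^2) := by linear_combination h'
          simp only [GGC, Set.mem_insert_iff, Set.mem_singleton_iff]
          exact Or.inr (Or.inr (Or.inr (Or.inl hval)))
  · rw [HP_of_ns s1] at e1
    by_cases s2 : IsSquare (b - δ)
    · rw [HP_of_sq s2] at e2
      by_cases s3 : IsSquare (c - γ)
      · rw [HP_of_sq s3] at e3
        by_cases s4 : IsSquare (d - δ)
        · rw [HP_of_sq s4] at e4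
          have key : (a - δ) * (1 - μ^2) = (-1)*δ*μ + (2)*δ*μ^2 + (-1)*δ*μ^3 + (1)*γ*μ + (-2)*γ*μ^2 + (1)*γ*μ^3 := by linear_combination ((1)*μ^3) * e1 + ((1)*μ^2) * e2 + ((1)*μ) * e3 + ((1)) * e4 + ((-1)*γ*μ^2 + (1)*a*μ^2) * S.hμν
          have h' : a - δ = ((-1)*δ*μ + (2)*δ*μ^2 + (-1)*δ*μ^3 + (1)*γ*μ + (-2)*γ*μ^2 + (1)*γ*μ^3) / (1 - μ^2) := (eq_div_iff S.hμμ).mpr key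
          have hval : a = δ + ((-1)*δ*μ + (2)*δ*μ^2 + (-1)*δ*μ^3 + (1)*γ*μ + (-2)*γ*μ^2 + (1)*γ*μ^3) / (1 - μ^2) := by linear_combination h'
          simp only [GGC, Set.mem_insert_iff, Set.mem_singleton_iff]
          exact Or.inr (Or.inr (Or.inr (Or.inr (Or.inl hval))))
        · rw [HP_of_ns s4] at e4
          exfalso
          have key : (γ - δ) * (2 - μ - ν) = 0 := by linear_combination ((1)*μ^2*ν) * e1 + ((1)*μ*ν) * e2 + ((1)*ν) * e3 + ((1)) * e4 + ((1)*δ + (-1)*δ*μ + (-2)*γ + (1)*γ*μ + (-1)*γ*μ*ν + (1)*a + (1)*a*μ*ν) * S.hμν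
          rcases mul_eq_zero.mp key with h' | h'
          · exact hγδ (by linear_combination h')
          · exact S.h2mμν h'
      · rw [HP_of_ns s3] at e3
        by_cases s4 : IsSquare (d - δ)
        · rw [HP_of_sq s4] at e4
          exfalso
          have key : (γ - δ) * (2 * (1 - μ)) = 0 := by linear_combination ((1)*μ^2*ν) * e1 + ((1)*μ*ν) * e2 + ((1)*μ) * e3 + ((1)) * e4 + ((1)*δ + (-1)*δ*μ + (-2)*γ + (1)*γ*μ + (-1)*γ*μ*ν + (1)*a + (1)*a*μ*ν) * S.hμν
          rcases mul_eq_zero.mp key with h' | h'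
          · exact hγδ (by linear_combination h')
          · rcases mul_eq_zero.mp h' with h'' | h''
            · exact S.h2 h''
            · exact S.h1mμ h''
        · rw [HP_of_ns s4] at e4
          have key : (a - δ) * (1 - ν^2) = (-2)*δ*ν + (2)*δ*ν^2 + (2)*γ*ν + (-2)*γ*ν^2 := by linear_combination ((1)*μ*ν^2) * e1 + ((1)*ν^2) * e2 + ((1)*ν) * e3 + ((1)) * e4 + ((-1)*δ*ν + (1)*γ*ν + (-1)*γ*ν^2 + (1)*a*ν^2) * S.hμν
          have h' : a - δ = ((-2)*δ*ν + (2)*δ*ν^2 + (2)*γ*ν + (-2)*γ*ν^2) / (1 - ν^2) := (eq_div_iff S.hνν).mpr key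
          have hval : a = δ + ((-2)*δ*ν + (2)*δ*ν^2 + (2)*γ*ν + (-2)*γ*ν^2) / (1 - ν^2) := by linear_combination h'
          simp only [GGC, Set.mem_insert_iff, Set.mem_singleton_iff]
          exact Or.inr (Or.inr (Or.inr (Or.inr (Or.inr (Or.inl hval)))))
    · rw [HP_of_ns s2] at e2
      by_cases s3 : IsSquare (c - γ)
      · rw [HP_of_sq s3] at e3
        by_cases s4 : IsSquare (d - δ)
        · rw [HP_of_sq s4] at e4
          exfalso
          have key : (γ - δ) * ((1 - μ) * (1 - μ)) = 0 := by linear_combination ((1)*μ^2*ν) * e1 + ((1)*μ^2) * e2 + ((1)*μ) * e3 + ((1)) * e4 + ((-1)*δ*μ + (-1)*γ + (1)*γ*μ + (-1)*γ*μ*ν + (1)*a + (1)*a*μ*ν) * S.hμν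
          rcases mul_eq_zero.mp key with h' | h'
          · exact hγδ (by linear_combination h')
          · exact S.h1mμ (mul_self_eq_zero.mp h')
        · rw [HP_of_ns s4] at e4
          have key : (a - δ) * (1 - ν^2) = (1)*δ + (-2)*δ*ν + (1)*δ*ν^2 + (-1)*γ + (2)*γ*ν + (-1)*γ*ν^2 := by linear_combination ((1)*μ*ν^2) * e1 + ((1)*μ*ν) * e2 + ((1)*ν) * e3 + ((1)) * e4 + ((1)*δ + (-1)*δ*ν + (-1)*γ + (1)*γ*ν + (-1)*γ*ν^2 + (1)*a*ν^2) * S.hμν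
          have h' : a - δ = ((1)*δ + (-2)*δ*ν + (1)*δ*ν^2 + (-1)*γ + (2)*γ*ν + (-1)*γ*ν^2) / (1 - ν^2) := (eq_div_iff S.hνν).mpr key
          have hval : a = δ + ((1)*δ + (-2)*δ*ν + (1)*δ*ν^2 + (-1)*γ + (2)*γ*ν + (-1)*γ*ν^2) / (1 - ν^2) := by linear_combination h'
          simp only [GGC, Set.mem_insert_iff, Set.mem_singleton_iff]
          exact Or.inr (Or.inr (Or.inr (Or.inr (Or.inr (Or.inr (Or.inl hval))))))
      · rw [HP_of_ns s3] at e3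
        by_cases s4 : IsSquare (d - δ)
        · rw [HP_of_sq s4] at e4
          have key : (a - δ) * (1 - ν^2) = (1)*δ + (-1)*δ*ν + (1)*δ*ν^2 + (-1)*δ*μ + (-1)*γ + (1)*γ*ν + (-1)*γ*ν^2 + (1)*γ*μ := by linear_combination ((1)*μ*ν^2) * e1 + ((1)*μ*ν) * e2 + ((1)*μ) * e3 + ((1)) * e4 + ((1)*δ + (-1)*δ*ν + (-1)*γ + (1)*γ*ν + (-1)*γ*ν^2 + (1)*a*ν^2) * S.hμν
          have h' : a - δ = ((1)*δ + (-1)*δ*ν + (1)*δ*ν^2 + (-1)*δ*μ + (-1)*γ + (1)*γ*ν + (-1)*γ*ν^2 + (1)*γ*μ) / (1 - ν^2) := (eq_div_iff S.hνν).mpr key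
          have hval : a = δ + ((1)*δ + (-1)*δ*ν + (1)*δ*ν^2 + (-1)*δ*μ + (-1)*γ + (1)*γ*ν + (-1)*γ*ν^2 + (1)*γ*μ) / (1 - ν^2) := by linear_combination h'
          simp only [GGC, Set.mem_insert_iff, Set.mem_singleton_iff]
          exact Or.inr (Or.inr (Or.inr (Or.inr (Or.inr (Or.inr (Or.inr hval))))))
        · rw [HP_of_ns s4] at e4
          exfalso
          have key : (a - c) * ((1 - ν^2) * (1 + ν^2)) = 0 := by linear_combination ((-1)*ν + (1)*ν^3) * e1 + ((-1) + (1)*ν^2) * e2 + ((1)*ν + (-1)*ν^3) * e3 + ((1) + (-1)*ν^2) * e4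
          rcases mul_eq_zero.mp key with h' | h'
          · exact hac (by linear_combination h')
          · rcases mul_eq_zero.mp h' with h'' | h''
            · exact S.hνν h''
            · exact S.h1pν2 h''

lemma GG_inf {γ δ : K} (hγδ : γ ≠ δ) {x : K}
    (hx : x = HP μ ν (γ - δ) + δ) (hq : HP μ ν (x - γ) = δ - γ) : False := by
  have hne : γ - δ ≠ 0 := sub_ne_zero.mpr hγδ
  by_cases sA : IsSquare (γ - δ)
  · rw [HP_of_sq sA] at hx
    have hxγ : x - γ = (γ - δ) * (μ - 1) := by linear_combination hx
    by_cases sB : IsSquare (x - γ)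
    · rw [HP_of_sq sB] at hq
      have key : (γ - δ) * (μ * μ + 1 - μ) = 0 := by linear_combination hq - μ * hxγ
      rcases mul_eq_zero.mp key with h' | h'
      · exact hγδ (by linear_combination h')
      · exact S.h6 μ (by linear_combination h')
    · rw [HP_of_ns sB] at hq
      have key : (γ - δ) * (2 - ν) = 0 := by
        linear_combination hq - ν * hxγ - (γ - δ) * S.hμν
      have hν2 : ν = 2 := by
        rcases mul_eq_zero.mp key with h' | h'
        · exact (hγδ (by linear_combination h')).elim
        · linear_combination -h'
      have hμhalf : μ + μ = 1 := by linear_combination S.hμν - μ * hν2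
      have hxγ2 : x - γ = -((γ - δ) * μ) := by linear_combination hxγ + (γ - δ) * hμhalf
      apply sB
      rw [hxγ2]
      exact (S.sq_neg (mul_ne_zero hne S.hμ0)).mpr (fun h => (S.sq_mul_μ hne).mp h sA)
  · rw [HP_of_ns sA] at hx
    have hxγ : x - γ = (γ - δ) * (ν - 1) := by linear_combination hx
    by_cases sB : IsSquare (x - γ)
    · rw [HP_of_sq sB] at hq
      have key : (γ - δ) * (2 - μ) = 0 := by
        linear_combination hq - μ * hxγ - (γ - δ) * S.hμν
      have hμ2 : μ = 2 := by
        rcases mul_eq_zero.mp key with h' | h'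
        · exact (hγδ (by linear_combination h')).elim
        · linear_combination -h'
      have hνhalf : ν + ν = 1 := by linear_combination S.hμν - ν * hμ2
      have hxγ2 : x - γ = -((γ - δ) * ν) := by linear_combination hxγ + (γ - δ) * hνhalf
      rw [hxγ2] at sB
      exact ((S.sq_neg (mul_ne_zero hne S.hν0)).mp sB) ((S.sq_mul_ν hne).mpr sA)
    · rw [HP_of_ns sB] at hq
      have key : (γ - δ) * (ν * ν + 1 - ν) = 0 := by linear_combination hq - ν * hxγ
      rcases mul_eq_zero.mp key with h' | h'
      · exact hγδ (by linear_combination h')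
      · exact S.h6 ν (by linear_combination h')

lemma FF_nocycle {γ δ : K} (hγδ : γ ≠ δ) (s : Set (Option K)) :
    ¬ IsFourCycleOn (fFac γ ⊔ fFac (K := K) δ) s := by
  intro hs
  have hs' : IsFourCycleOn (mgraph (mF γ) ⊔ mgraph (mF δ)) s := hs
  by_cases hn : (none : Option K) ∈ s
  · obtain ⟨b, c, d, hvb, hvc, hvd, hbc, hbd, hcd, hset, q1, q2, q3, q4⟩ :=
      fc_head (mF_invol γ) (mF_invol δ) hs' hn
    rw [mF_none] at q1
    subst q1
    rw [mF_some_of_ne hγδ] at q2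
    subst q2
    by_cases hh : δ + δ - γ = γ
    · rw [show mF γ (some (δ + δ - γ)) = none from by simp [mF, hh]] at q3
      exact hvd q3
    · rw [mF_some_of_ne hh] at q3
      subst q3
      have h4 := mF_eq_none q4
      rw [Option.some.injEq] at h4
      have key : (γ - δ) * 3 = 0 := by linear_combination h4
      rcases mul_eq_zero.mp key with h' | h'
      · exact hγδ (by linear_combination h')
      · exact S.h3 h'
  · obtain ⟨a, b, c, d, hab, hac, had, hbc, hbd, hcd, hset, q1, q2, q3, q4⟩ :=
      fc_canon (mF_invol γ) (mF_invol δ) hs'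
    have hmem : ∀ w, w ∈ s → w ≠ none := fun w hw h => hn (h ▸ hw)
    obtain ⟨a', rfl⟩ := Option.ne_none_iff_exists'.mp (hmem a (by rw [hset]; simp))
    obtain ⟨b', rfl⟩ := Option.ne_none_iff_exists'.mp (hmem b (by rw [hset]; simp))
    obtain ⟨c', rfl⟩ := Option.ne_none_iff_exists'.mp (hmem c (by rw [hset]; simp))
    obtain ⟨d', rfl⟩ := Option.ne_none_iff_exists'.mp (hmem d (by rw [hset]; simp))
    obtain ⟨-, r1⟩ := mF_some_inv q1
    obtain ⟨-, r2⟩ := mF_some_inv q2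
    obtain ⟨-, r3⟩ := mF_some_inv q3
    obtain ⟨-, r4⟩ := mF_some_inv q4
    have key : (γ - δ) * 4 = 0 := by linear_combination r4 + r2 - r1 - r3
    rcases mul_eq_zero.mp key with h' | h'
    · exact hγδ (by linear_combination h')
    · exact S.h4 h'

lemma FG_main {γ δ : K} {a b c d : K} (hac : a ≠ c) (haγ : a ≠ γ)
    (e1 : b = γ + γ - a) (e2 : c = HP μ ν (b - δ) + δ)
    (e3 : d = γ + γ - c) (e4 : a = HP μ ν (d - δ) + δ) : False := by
  have hA : a - γ ≠ 0 := sub_ne_zero.mpr haγ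
  by_cases s2 : IsSquare (b - δ) <;> by_cases s4 : IsSquare (d - δ)
  · rw [HP_of_sq s2] at e2
    rw [HP_of_sq s4] at e4
    have key : (c - a) * (1 - μ) = 0 := by linear_combination μ * e1 + e2 - μ * e3 - e4
    rcases mul_eq_zero.mp key with h' | h'
    · exact hac (by linear_combination -h')
    · exact S.h1mμ h'
  · rw [HP_of_sq s2] at e2
    rw [HP_of_ns s4] at e4
    have key : (γ - δ) * (2 * (1 - ν)) = 0 := by
      linear_combination (-μ*ν) * e1 + (-ν) * e2 + ν * e3 + e4 + (δ - 2*γ + a) * S.hμν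
    have hδγ : δ = γ := by
      rcases mul_eq_zero.mp key with h' | h'
      · linear_combination -h'
      · rcases mul_eq_zero.mp h' with h'' | h''
        · exact (S.h2 h'').elim
        · exact (S.h1mν h'').elim
    have hB : b - δ = -(a - γ) := by linear_combination e1 - hδγ
    have hD : d - δ = (a - γ) * μ := by linear_combination e3 - e2 - μ * e1 - (2 - μ) * hδγ
    rw [hB] at s2
    rw [hD] at s4
    exact s4 ((S.sq_mul_μ hA).mpr ((S.sq_neg hA).mp s2))
  · rw [HP_of_ns s2] at e2
    rw [HP_of_sq s4] at e4
    have key : (γ - δ) * (2 * (1 - μ)) = 0 := by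
      linear_combination (-μ*ν) * e1 + (-μ) * e2 + μ * e3 + e4 + (δ - 2*γ + a) * S.hμν
    have hδγ : δ = γ := by
      rcases mul_eq_zero.mp key with h' | h'
      · linear_combination -h'
      · rcases mul_eq_zero.mp h' with h'' | h''
        · exact (S.h2 h'').elim
        · exact (S.h1mμ h'').elim
    have hB : b - δ = -(a - γ) := by linear_combination e1 - hδγ
    have hD : d - δ = (a - γ) * ν := by linear_combination e3 - e2 - ν * e1 - (2 - ν) * hδγ
    rw [hB] at s2
    rw [hD] at s4
    exact ((S.sq_mul_ν hA).mp s4) (by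
      by_contra hA2
      exact s2 ((S.sq_neg hA).mpr hA2))
  · rw [HP_of_ns s2] at e2
    rw [HP_of_ns s4] at e4
    have key : (c - a) * (1 - ν) = 0 := by linear_combination ν * e1 + e2 - ν * e3 - e4
    rcases mul_eq_zero.mp key with h' | h'
    · exact hac (by linear_combination -h')
    · exact S.h1mν h'

lemma FG_cycles (γ δ : K) (s : Set (Option K))
    (hs : IsFourCycleOn (fFac γ ⊔ gFac μ ν δ) s) :
    s = {none, some γ, mG μ ν δ (some γ), some δ} := by
  have hs' : IsFourCycleOn (mgraph (mF γ) ⊔ mgraph (mG μ ν δ)) s := hs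
  by_cases hn : (none : Option K) ∈ s
  · have := fc_set_eq (mF_invol γ) (S.mG_invol δ) hs' hn
    rw [this]
    rfl
  · exfalso
    obtain ⟨a, b, c, d, hab, hac, had, hbc, hbd, hcd, hset, q1, q2, q3, q4⟩ :=
      fc_canon (mF_invol γ) (S.mG_invol δ) hs'
    have hmem : ∀ w, w ∈ s → w ≠ none := fun w hw h => hn (h ▸ hw)
    obtain ⟨a', rfl⟩ := Option.ne_none_iff_exists'.mp (hmem a (by rw [hset]; simp))
    obtain ⟨b', rfl⟩ := Option.ne_none_iff_exists'.mp (hmem b (by rw [hset]; simp))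
    obtain ⟨c', rfl⟩ := Option.ne_none_iff_exists'.mp (hmem c (by rw [hset]; simp))
    obtain ⟨d', rfl⟩ := Option.ne_none_iff_exists'.mp (hmem d (by rw [hset]; simp))
    obtain ⟨h1γ, r1⟩ := mF_some_inv q1
    obtain ⟨h2δ, r2⟩ := mG_some_inv q2
    obtain ⟨h3γ, r3⟩ := mF_some_inv q3
    obtain ⟨h4δ, r4⟩ := mG_some_inv q4
    have hac' : a' ≠ c' := fun h => hac (by rw [h])
    exact S.FG_main hac' h1γ r1 r2 r3 r4

lemma GG_cycles {γ δ : K} (hγδ : γ ≠ δ) (s : Set (Option K))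
    (hs : IsFourCycleOn (gFac μ ν γ ⊔ gFac μ ν δ) s) :
    s ⊆ Option.some '' GGC μ ν γ δ := by
  have hs' : IsFourCycleOn (mgraph (mG μ ν γ) ⊔ mgraph (mG μ ν δ)) s := hs
  have hn : (none : Option K) ∉ s := by
    intro hn
    obtain ⟨b, c, d, hvb, hvc, hvd, hbc, hbd, hcd, hset, q1, q2, q3, q4⟩ :=
      fc_head (S.mG_invol γ) (S.mG_invol δ) hs' hn
    rw [mG_none] at q1
    subst q1
    rw [mG_some_of_ne hγδ] at q2
    subst q2
    by_cases hxγ : HP μ ν (γ - δ) + δ = γ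
    · rw [show mG μ ν γ (some (HP μ ν (γ - δ) + δ)) = none from by simp [mG, hxγ]] at q3
      exact hvd q3
    · rw [mG_some_of_ne hxγ] at q3
      subst q3
      have h4 := mG_eq_none q4
      rw [Option.some.injEq] at h4
      exact S.GG_inf hγδ rfl (by linear_combination h4)
  intro v hv
  obtain ⟨b, c, d, hvb, hvc, hvd, hbc, hbd, hcd, hset, q1, q2, q3, q4⟩ :=
    fc_head (S.mG_invol γ) (S.mG_invol δ) hs' hv
  have hmem : ∀ w, w ∈ s → w ≠ none := fun w hw h => hn (h ▸ hw)
  obtain ⟨a', rfl⟩ := Option.ne_none_iff_exists'.mp (hmem v hv)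
  obtain ⟨b', rfl⟩ := Option.ne_none_iff_exists'.mp (hmem b (by rw [hset]; simp))
  obtain ⟨c', rfl⟩ := Option.ne_none_iff_exists'.mp (hmem c (by rw [hset]; simp))
  obtain ⟨d', rfl⟩ := Option.ne_none_iff_exists'.mp (hmem d (by rw [hset]; simp))
  obtain ⟨h1γ, r1⟩ := mG_some_inv q1
  obtain ⟨h2δ, r2⟩ := mG_some_inv q2
  obtain ⟨h3γ, r3⟩ := mG_some_inv q3
  obtain ⟨h4δ, r4⟩ := mG_some_inv q4
  have hac' : a' ≠ c' := fun h => hvc (by rw [h])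
  exact ⟨a', S.GG_main hγδ hac' r1 r2 r3 r4, rfl⟩

lemma FF_count {γ δ : K} (hγδ : γ ≠ δ) :
    fourCycleCount (fFac γ ⊔ fFac (K := K) δ) ≤ 2 := by
  have := fourCycleCount_le_of_empty (fun s => S.FF_nocycle hγδ s)
  omega

lemma FG_count (γ δ : K) : fourCycleCount (fFac γ ⊔ gFac μ ν δ) ≤ 2 := by
  have := fourCycleCount_le_one _ (S.FG_cycles γ δ)
  omega

lemma GG_count {γ δ : K} (hγδ : γ ≠ δ) :
    fourCycleCount (gFac μ ν γ ⊔ gFac μ ν δ) ≤ 2 := by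
  have hC : (Option.some '' GGC μ ν γ δ).ncard ≤ 8 := by
    refine le_trans (Set.ncard_image_le (Set.toFinite _)) ?_
    exact ncard_oct _ _ _ _ _ _ _ _
  have : fourCycleCount (mgraph (mG μ ν γ) ⊔ mgraph (mG μ ν δ)) ≤ 2 :=
    fourCycleCount_le_two_of_subset (S.mG_invol γ) (S.mG_invol δ) hC (S.GG_cycles hγδ)
  exact this

end GoodPair

end FourCycles

/-! ### Assembly over `Option K` -/

section Assemble

variable {K : Type*} [Field K] [Fintype K] {μ ν : K}

/-- The family of one-factors `F_γ`. -/
noncomputable def Ffam (K : Type*) [Field K] [Fintype K] : Set (SimpleGraph (Option K)) :=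
  Set.range (fun γ : K => fFac γ)

/-- The family of one-factors `G_δ`. -/
noncomputable def Gfam (μ ν : K) : Set (SimpleGraph (Option K)) :=
  Set.range (fun δ : K => gFac μ ν δ)

namespace GoodPair

variable (S : GoodPair K μ ν)

include S

lemma isOF_F : IsOneFactorization (Ffam K) := by
  refine ⟨?_, ?_, ?_⟩
  · rintro G ⟨γ, rfl⟩
    exact isOneFactor_mgraph (mF_invol γ) (S.mF_fpf γ)
  · rintro G ⟨γ, rfl⟩ H ⟨δ, rfl⟩ hne
    have hγδ : γ ≠ δ := fun h => hne (by rw [h])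
    exact disjoint_edgeSet_of (fun u v h1 h2 => S.fFac_disj hγδ h1 h2)
  · intro u v hne
    obtain ⟨γ, h⟩ := S.fFac_cover hne
    exact ⟨fFac γ, ⟨γ, rfl⟩, h⟩

lemma isOF_G : IsOneFactorization (Gfam μ ν) := by
  refine ⟨?_, ?_, ?_⟩
  · rintro G ⟨δ, rfl⟩
    exact isOneFactor_mgraph (S.mG_invol δ) (S.mG_fpf δ)
  · rintro G ⟨γ, rfl⟩ H ⟨δ, rfl⟩ hne
    have hγδ : γ ≠ δ := fun h => hne (by rw [h])
    exact disjoint_edgeSet_of (fun u v h1 h2 => S.gFac_disj hγδ h1 h2)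
  · intro u v hne
    obtain ⟨δ, h⟩ := S.gFac_cover hne
    exact ⟨gFac μ ν δ, ⟨δ, rfl⟩, h⟩

lemma orth : AreOrthogonalFactorizations (Ffam K) (Gfam μ ν) := by
  refine ⟨S.isOF_F, S.isOF_G, ?_⟩
  rintro G ⟨γ, rfl⟩ H ⟨δ, rfl⟩
  exact S.cross_subsingleton γ δ

lemma pair_count : ∀ F ∈ Ffam K ∪ Gfam μ ν, ∀ G ∈ Ffam K ∪ Gfam μ ν, F ≠ G →
    fourCycleCount (F ⊔ G) ≤ 2 := by
  rintro F hF G hG hne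
  rcases hF with ⟨γ, rfl⟩ | ⟨γ, rfl⟩ <;> rcases hG with ⟨δ, rfl⟩ | ⟨δ, rfl⟩
  · exact S.FF_count (fun h => hne (by rw [h]))
  · exact S.FG_count γ δ
  · rw [sup_comm]
    exact S.FG_count δ γ
  · exact S.GG_count (fun h => hne (by rw [h]))

end GoodPair

end Assemble

/-! ### Transfer along an equivalence -/

section Transfer

variable {α β : Type*} (e : α ≃ β)

/-- Transfer of a graph along an equivalence. -/
def transferGraph (G : SimpleGraph α) : SimpleGraph β := SimpleGraph.comap (⇑e.symm) G

lemma transfer_adj (G : SimpleGraph α) (i j : β) :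
    (transferGraph e G).Adj i j ↔ G.Adj (e.symm i) (e.symm j) := Iff.rfl

lemma transfer_oneFactor {G : SimpleGraph α} (h : IsOneFactor G) :
    IsOneFactor (transferGraph e G) := by
  intro v
  obtain ⟨w, hw, huniq⟩ := h (e.symm v)
  refine ⟨e w, ?_, ?_⟩
  · show G.Adj (e.symm v) (e.symm (e w))
    rw [Equiv.symm_apply_apply]
    exact hw
  · intro x hx
    have := huniq (e.symm x) hx
    rw [← this, Equiv.apply_symm_apply]

lemma transfer_disjoint {G H : SimpleGraph α} (h : Disjoint G.edgeSet H.edgeSet) :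
    Disjoint (transferGraph e G).edgeSet (transferGraph e H).edgeSet := by
  refine disjoint_edgeSet_of ?_
  intro u v h1 h2
  exact Set.disjoint_left.mp h ((SimpleGraph.mem_edgeSet G).mpr h1)
    ((SimpleGraph.mem_edgeSet H).mpr h2)

lemma transfer_sub {G H : SimpleGraph α} (h : (G.edgeSet ∩ H.edgeSet).Subsingleton) :
    ((transferGraph e G).edgeSet ∩ (transferGraph e H).edgeSet).Subsingleton := by
  intro x hx y hy
  induction x using Sym2.ind with
  | _ u v =>
    induction y using Sym2.ind with
    | _ u' v' =>
      have h1 : s(e.symm u, e.symm v) ∈ G.edgeSet ∩ H.edgeSet := ⟨hx.1, hx.2⟩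
      have h2 : s(e.symm u', e.symm v') ∈ G.edgeSet ∩ H.edgeSet := ⟨hy.1, hy.2⟩
      have h3 := h h1 h2
      have h4 := congrArg (Sym2.map ⇑e) h3
      simpa [Sym2.map_pair_eq, Equiv.apply_symm_apply] using h4

lemma transfer_fourCycle [Finite α] (G H : SimpleGraph α) :
    fourCycleCount (transferGraph e G ⊔ transferGraph e H) ≤ fourCycleCount (G ⊔ H) := by
  apply Set.ncard_le_ncard_of_injOn (fun s => ⇑e.symm '' s)
  · intro s hs
    obtain ⟨a, b, c, d, hab, hac, had, hbc, hbd, hcd, hset, e1, e2, e3, e4⟩ := hs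
    have hinj := e.symm.injective
    refine ⟨e.symm a, e.symm b, e.symm c, e.symm d, hinj.ne hab, hinj.ne hac, hinj.ne had,
      hinj.ne hbc, hinj.ne hbd, hinj.ne hcd, ?_, e1, e2, e3, e4⟩
    rw [hset]
    simp [Set.image_insert_eq]
  · exact (Set.image_injective.mpr e.symm.injective).injOn

end Transfer

/-! ### Existence of a good pair and the final theorem -/

section Existence

lemma char_facts {K : Type*} [Field K] [Fintype K] {q : ℕ}
    (hq : Fintype.card K = q) (hmod : q % 24 = 11) : (2 : K) ≠ 0 ∧ (3 : K) ≠ 0 := by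
  obtain ⟨n, hp, hcard⟩ := FiniteField.card K (ringChar K)
  constructor
  · intro h
    have hd : (ringChar K : ℕ) ∣ 2 :=
      (CharP.cast_eq_zero_iff K (ringChar K) 2).mp (by exact_mod_cast h)
    have h2 : ringChar K = 2 := (Nat.prime_dvd_prime_iff_eq hp Nat.prime_two).mp hd
    have : (2 : ℕ) ∣ q := by
      rw [← hq, hcard, h2]
      exact dvd_pow_self 2 n.ne_zero
    omega
  · intro h
    have hd : (ringChar K : ℕ) ∣ 3 :=
      (CharP.cast_eq_zero_iff K (ringChar K) 3).mp (by exact_mod_cast h)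
    have h3 : ringChar K = 3 := (Nat.prime_dvd_prime_iff_eq hp Nat.prime_three).mp hd
    have : (3 : ℕ) ∣ q := by
      rw [← hq, hcard, h3]
      exact dvd_pow_self 3 n.ne_zero
    omega

lemma goodpair_exists (K : Type*) [Field K] [Fintype K] {q : ℕ}
    (hq : Fintype.card K = q) (hmod : q % 24 = 11) : ∃ μ ν : K, GoodPair K μ ν := by
  classical
  obtain ⟨h2, h3⟩ := char_facts hq hmod
  have hneg1 : ¬ IsSquare (-1 : K) := by
    intro h
    exact (FiniteField.isSquare_neg_one_iff.mp h) (by rw [hq]; omega)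
  have h6 : ∀ z : K, z * z + 1 ≠ z := by
    intro z h
    have hz0 : z ≠ 0 := by
      intro h0
      rw [h0] at h
      simpa using h
    have hw0 : -z ≠ 0 := neg_ne_zero.mpr hz0
    have hw1 : -z ≠ 1 := by
      intro h1
      apply h3
      have hz : z = -1 := by linear_combination -h1
      rw [hz] at h
      linear_combination h
    have hw3 : (-z) ^ 3 = 1 := by linear_combination (-z - 1) * h
    let u : Kˣ := Units.mk0 (-z) hw0
    have hu3 : u ^ 3 = 1 := by
      ext
      push_cast
      exact hw3
    have hu1 : u ≠ 1 := by
      intro h1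
      exact hw1 (by rw [show (-z) = (u : K) from rfl, h1, Units.val_one])
    have hdvd : orderOf u ∣ 3 := orderOf_dvd_of_pow_eq_one hu3
    have hord : orderOf u = 3 := by
      rcases Nat.Prime.eq_one_or_self_of_dvd Nat.prime_three _ hdvd with h' | h'
      · exact absurd (orderOf_eq_one_iff.mp h') hu1
      · exact h'
    have hcd : orderOf u ∣ Fintype.card Kˣ := orderOf_dvd_card
    rw [hord, Fintype.card_units, hq] at hcd
    omega
  by_cases hsq : IsSquare (2 : K)
  · refine ⟨-2, -2⁻¹, ?_, ?_, hneg1, ?_, h2, h3, h6⟩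
    · rintro ⟨r, hr⟩
      obtain ⟨t, ht⟩ := hsq
      have ht0 : t ≠ 0 := by
        intro h0
        rw [h0] at ht
        exact h2 (by rw [ht]; ring)
      refine hneg1 ⟨r * t⁻¹, ?_⟩
      field_simp
      linear_combination hr + ht
    · rw [neg_mul_neg]
      exact mul_inv_cancel₀ h2
    · intro h
      exact one_ne_zero (α := K) (by linear_combination -h)
  · exact ⟨2, 2⁻¹, hsq, mul_inv_cancel₀ h2, hneg1,
      fun h => h3 (by linear_combination h), h2, h3, h6⟩

end Existence

lemma transfer_isOF {α β : Type*} (e : α ≃ β) {𝓕 : Set (SimpleGraph α)}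
    (h : IsOneFactorization 𝓕) : IsOneFactorization (transferGraph e '' 𝓕) := by
  obtain ⟨h1, h2, h3⟩ := h
  refine ⟨?_, ?_, ?_⟩
  · rintro G ⟨G₀, hG₀, rfl⟩
    exact transfer_oneFactor e (h1 G₀ hG₀)
  · rintro G ⟨G₀, h₀, rfl⟩ H ⟨H₀, h₁, rfl⟩ hne
    exact transfer_disjoint e (h2 G₀ h₀ H₀ h₁ (fun hh => hne (by rw [hh])))
  · intro u v hne
    have hne' : e.symm u ≠ e.symm v := fun h => hne (e.symm.injective h)
    obtain ⟨G₀, hG₀, hadj⟩ := h3 _ _ hne'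
    exact ⟨transferGraph e G₀, ⟨G₀, hG₀, rfl⟩, hadj⟩

theorem statement_2' (q : ℕ) (hq : IsPrimePow q) (hodd : Odd q) (hmod : q % 24 = 11) :
    ∃ 𝓕 𝓖 : Set (SimpleGraph (Fin (q + 1))),
      AreOrthogonalFactorizations 𝓕 𝓖 ∧
        ∀ F ∈ 𝓕 ∪ 𝓖, ∀ G ∈ 𝓕 ∪ 𝓖, F ≠ G → fourCycleCount (F ⊔ G) ≤ 2 := by
  classical
  obtain ⟨p, n, hp, hn, rfl⟩ := hq
  haveI : Fact p.Prime := ⟨hp.nat_prime⟩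
  haveI : Fintype (GaloisField p n) := Fintype.ofFinite _
  have hcard : Fintype.card (GaloisField p n) = p ^ n := by
    rw [← Nat.card_eq_fintype_card]
    exact GaloisField.card p n hn.ne'
  obtain ⟨μ, ν, S⟩ := goodpair_exists (GaloisField p n) hcard hmod
  have hco : Fintype.card (Option (GaloisField p n)) = p ^ n + 1 := by
    rw [Fintype.card_option, hcard]
  let ee : Option (GaloisField p n) ≃ Fin (p ^ n + 1) := Fintype.equivFinOfCardEq hco
  refine ⟨transferGraph ee '' Ffam (GaloisField p n), transferGraph ee '' Gfam μ ν,
    ⟨transfer_isOF ee S.isOF_F, transfer_isOF ee S.isOF_G, ?_⟩, ?_⟩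
  · rintro G ⟨G₀, h₀, rfl⟩ H ⟨H₀, h₁, rfl⟩
    obtain ⟨γ, rfl⟩ := h₀
    obtain ⟨δ, rfl⟩ := h₁
    exact transfer_sub ee (S.cross_subsingleton γ δ)
  · intro F hF G hG hne
    have hF' : ∃ F₀ ∈ Ffam (GaloisField p n) ∪ Gfam μ ν, F = transferGraph ee F₀ := by
      rcases hF with ⟨F₀, h₀, rfl⟩ | ⟨F₀, h₀, rfl⟩
      exacts [⟨F₀, Or.inl h₀, rfl⟩, ⟨F₀, Or.inr h₀, rfl⟩]
    have hG' : ∃ G₀ ∈ Ffam (GaloisField p n) ∪ Gfam μ ν, G = transferGraph ee G₀ := by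
      rcases hG with ⟨G₀, h₀, rfl⟩ | ⟨G₀, h₀, rfl⟩
      exacts [⟨G₀, Or.inl h₀, rfl⟩, ⟨G₀, Or.inr h₀, rfl⟩]
    obtain ⟨F₀, hF₀, rfl⟩ := hF'
    obtain ⟨G₀, hG₀, rfl⟩ := hG'
    have hne₀ : F₀ ≠ G₀ := fun h => hne (by rw [h])
    exact le_trans (transfer_fourCycle ee F₀ G₀) (S.pair_count F₀ hF₀ G₀ hG₀ hne₀)


/-- If `q ≡ 11 (mod 24)` is an odd prime power, then there is a pair
of orthogonal one-factorizations `𝓕`, `𝓖` of `K_{q+1}` such that for any two distinct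
one-factors `F, G ∈ 𝓕 ∪ 𝓖`, the union `F ∪ G` contains at most two cycles of length
four. -/
theorem statement_2 (q : ℕ) (hq : IsPrimePow q) (hodd : Odd q) (hmod : q % 24 = 11) :
    ∃ 𝓕 𝓖 : Set (SimpleGraph (Fin (q + 1))),
      AreOrthogonalFactorizations 𝓕 𝓖 ∧
        ∀ F ∈ 𝓕 ∪ 𝓖, ∀ G ∈ 𝓕 ∪ 𝓖, F ≠ G → fourCycleCount (F ⊔ G) ≤ 2 := by
  exact statement_2' q hq hodd hmod

end Paper
end

section
/- Let q ≡ 3 (mod 4) be an odd prime power with q ≠ 3, let y be a generator of the cyclic group QR(q), and let β ∈ NQR(q)\{−1}. Let {F_γ : γ ∈ F_q} be the one-factorization of the complete graph on F_q ∪ {∞} generated by the starter S_β. Then for every pair of distinct elements g, h ∈ F_q, the graph F_g ∪ F_h has the same cycle structure as the graph F_0 ∪ F_y; that is, F_g ∪ F_h and F_0 ∪ F_y are isomorphic graphs (the one-factorization generated by S_β is uniform). -/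
open SimpleGraph

namespace Paper

variable {V : Type*} {Γ : Type*} {F : Type*}

section AuxLemmas
variable {F : Type*} [Field F]

lemma scale_starter (β a : F) (ha0 : a ≠ 0) (has : IsSquare a) :
    Sym2.map (fun x => a * x) '' hortonStarter β = hortonStarter β := by
  ext e
  simp only [Set.mem_image, hortonStarter, Set.mem_setOf_eq]
  constructor
  · rintro ⟨e', ⟨x, hx0, hxs, rfl⟩, rfl⟩
    exact ⟨a * x, mul_ne_zero ha0 hx0, has.mul hxs, by simp [mul_assoc]⟩
  · rintro ⟨x, hx0, hxs, rfl⟩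
    have hais : IsSquare a⁻¹ := by
      obtain ⟨c, rfl⟩ := has; exact ⟨c⁻¹, by rw [mul_inv]⟩
    refine ⟨s(a⁻¹ * x, a⁻¹ * x * β), ⟨a⁻¹ * x, mul_ne_zero (inv_ne_zero ha0) hx0,
      hais.mul hxs, rfl⟩, ?_⟩
    simp only [Sym2.map_pair_eq]
    congr 1 <;> field_simp <;> ring

lemma affine_inj (a b : F) (ha0 : a ≠ 0) : Function.Injective (fun z : F => a * z + b) := by
  intro u v huv
  simpa [ha0] using huv

lemma factor_map (β a b γ : F) (ha0 : a ≠ 0) (has : IsSquare a) (u v : Option F) :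
    (starterFactor (hortonStarter β) (a * γ + b)).Adj
      (Option.map (fun z => a * z + b) u) (Option.map (fun z => a * z + b) v) ↔
    (starterFactor (hortonStarter β) γ).Adj u v := by
  set ψ : F → F := fun z => a * z + b with hψ
  set φ : Option F → Option F := Option.map ψ with hφ
  have hψi : Function.Injective ψ := affine_inj a b ha0
  have hφi : Function.Injective φ := Option.map_injective hψi
  have hset : ({s((none : Option F), some (a * γ + b))} ∪
      (Sym2.map (fun x => some (x + (a * γ + b))) '' hortonStarter β)) =
      Sym2.map φ '' ({s((none : Option F), some γ)} ∪
        (Sym2.map (fun x => some (x + γ)) '' hortonStarter β)) := by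
    rw [Set.image_union]
    congr 1
    · simp [hφ, hψ, Sym2.map_pair_eq]
    · have hcomp : ∀ e : Sym2 F, Sym2.map φ (Sym2.map (fun x => some (x + γ)) e) =
          Sym2.map (fun x => some (x + (a * γ + b))) (Sym2.map (fun x : F => a * x) e) := by
        intro e
        rw [Sym2.map_map, Sym2.map_map]
        have hfun : (φ ∘ fun x => some (x + γ)) =
            ((fun x => some (x + (a * γ + b))) ∘ fun x : F => a * x) := by
          funext x
          simp only [Function.comp_apply, hφ, hψ, Option.map_some, Option.some.injEq]
          ring
        rw [hfun]
      rw [Set.image_image]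
      conv_lhs => rw [← scale_starter β a ha0 has, Set.image_image]
      exact (Set.image_congr fun e _ => (hcomp e).symm)
  unfold starterFactor
  rw [fromEdgeSet_adj, fromEdgeSet_adj, hset]
  constructor
  · rintro ⟨hm, hne⟩
    have : s((φ u : Option F), φ v) = Sym2.map φ s(u, v) := by simp [Sym2.map_pair_eq]
    rw [this] at hm
    exact ⟨((Sym2.map.injective hφi).mem_set_image).mp hm, fun e => hne (by rw [e])⟩
  · rintro ⟨hm, hne⟩
    refine ⟨?_, fun e => hne (hφi e)⟩
    have : s((φ u : Option F), φ v) = Sym2.map φ s(u, v) := by simp [Sym2.map_pair_eq]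
    rw [this]
    exact Set.mem_image_of_mem _ hm

lemma nonsq_mul {F : Type*} [Field F] [Fintype F]  {x z : F}
    (hx : ¬ IsSquare x) (hz : ¬ IsSquare z) : IsSquare (x * z) := by
  classical
  have hx0 : x ≠ 0 := by rintro rfl; exact hx ⟨0, by simp⟩
  have hz0 : z ≠ 0 := by rintro rfl; exact hz ⟨0, by simp⟩
  have h1 : quadraticChar F x = -1 := quadraticChar_neg_one_iff_not_isSquare.mpr hx
  have h2 : quadraticChar F z = -1 := quadraticChar_neg_one_iff_not_isSquare.mpr hz
  have : quadraticChar F (x * z) = 1 := by rw [map_mul, h1, h2]; ring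
  exact (quadraticChar_one_iff_isSquare (mul_ne_zero hx0 hz0)).mp this

end AuxLemmas

/-- Let `q ≡ 3 (mod 4)` be an odd prime power, `q ≠ 3`, let `y` be a
generator of the cyclic group `QR(q)` and `β ∈ NQR(q) \ {-1}`. Then for any two
distinct `g, h ∈ F_q`, the graph `F_g ∪ F_h` of the one-factorization generated by the
starter `S_β` is isomorphic to `F_0 ∪ F_y` (the one-factorization is uniform). -/
theorem statement_3 {F : Type*} [Field F] [Fintype F] (q : ℕ)
    (hcard : Fintype.card F = q) (hq4 : q % 4 = 3) (hq3 : q ≠ 3)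
    (y : F) (hy : y ∈ QRset F) (hygen : ∀ x ∈ QRset F, ∃ n : ℕ, x = y ^ n)
    (β : F) (hβ : ¬ IsSquare β) (hβ1 : β ≠ -1)
    (g h : F) (hgh : g ≠ h) :
    Nonempty
      ((starterFactor (hortonStarter β) g ⊔ starterFactor (hortonStarter β) h) ≃g
        (starterFactor (hortonStarter β) 0 ⊔ starterFactor (hortonStarter β) y)) := by
  obtain ⟨hy0, hys⟩ := hy
  have key : ∀ a b : F, a ≠ 0 → IsSquare a →
      Nonempty ((starterFactor (hortonStarter β) g ⊔ starterFactor (hortonStarter β) h) ≃g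
        (starterFactor (hortonStarter β) (a * g + b) ⊔
          starterFactor (hortonStarter β) (a * h + b))) := by
    intro a b ha0 has
    let eaff : F ≃ F :=
      ⟨fun z => a * z + b, fun z => a⁻¹ * (z - b),
        fun z => (by field_simp; ring), fun z => (by field_simp; ring)⟩
    refine ⟨{ toEquiv := Equiv.optionCongr eaff, map_rel_iff' := ?_ }⟩
    intro u v
    show _ ↔ _
    simp only [Equiv.optionCongr_apply, sup_adj, Equiv.coe_fn_mk]
    rw [show ⇑eaff = fun z => a * z + b from rfl,
      factor_map β a b g ha0 has, factor_map β a b h ha0 has]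
  have hneg1 : ¬ IsSquare (-1 : F) := fun hs =>
    (FiniteField.isSquare_neg_one_iff.mp hs) (by rw [hcard]; exact hq4)
  have hΔ : h - g ≠ 0 := sub_ne_zero.mpr (Ne.symm hgh)
  by_cases hsq : IsSquare (h - g)
  · have hisq : IsSquare (h - g)⁻¹ := by
      obtain ⟨c, hc⟩ := hsq; exact ⟨c⁻¹, by rw [hc, mul_inv]⟩
    set a := y * (h - g)⁻¹ with ha
    have ha0 : a ≠ 0 := mul_ne_zero hy0 (inv_ne_zero hΔ)
    obtain iso := key a (-(a * g)) ha0 (hys.mul hisq)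
    have e1 : a * g + -(a * g) = 0 := by ring
    have e2 : a * h + -(a * g) = y := by
      rw [ha]; field_simp; ring
    rwa [e1, e2] at iso
  · have hΔ' : g - h ≠ 0 := sub_ne_zero.mpr hgh
    have hsq' : IsSquare (g - h) := by
      have := nonsq_mul hneg1 hsq
      rwa [neg_one_mul, neg_sub] at this
    have hisq : IsSquare (g - h)⁻¹ := by
      obtain ⟨c, hc⟩ := hsq'; exact ⟨c⁻¹, by rw [hc, mul_inv]⟩
    set a := y * (g - h)⁻¹ with ha
    have ha0 : a ≠ 0 := mul_ne_zero hy0 (inv_ne_zero hΔ')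
    obtain iso := key a (-(a * h)) ha0 (hys.mul hisq)
    have e1 : a * h + -(a * h) = 0 := by ring
    have e2 : a * g + -(a * h) = y := by
      rw [ha]; field_simp; ring
    rw [e1, e2] at iso
    rwa [show starterFactor (hortonStarter β) y ⊔ starterFactor (hortonStarter β) 0 =
      starterFactor (hortonStarter β) 0 ⊔ starterFactor (hortonStarter β) y from
      sup_comm _ _] at iso


end Paper
end

section
/- Let q ≡ 3 (mod 4) be an odd prime power with q ≥ 11 and let β ∈ NQR(q)\{−1} satisfy β² − β + 1 = 0. Then the one-factorization {F_γ : γ ∈ F_q} of the complete graph on F_q ∪ {∞} generated by the starter S_β contains two distinct one-factors F, F' such that F ∪ F' contains a cycle C of length four with ∞ ∈ V(C). -/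
open SimpleGraph

namespace Paper

variable {V : Type*} {Γ : Type*} {F : Type*}

/-- Let `q ≡ 3 (mod 4)` be an odd prime power with `q ≥ 11` and let
`β ∈ NQR(q) \ {-1}` satisfy `β² - β + 1 = 0`. Then the one-factorization generated by
the starter `S_β` contains two distinct one-factors whose union contains a cycle `C`
of length four with `∞ ∈ V(C)`. -/
theorem statement_4 {F : Type*} [Field F] [Fintype F] (q : ℕ)
    (hcard : Fintype.card F = q) (hq4 : q % 4 = 3) (hq11 : 11 ≤ q)
    (β : F) (hβ : ¬ IsSquare β) (hβ1 : β ≠ -1) (hroot : β ^ 2 - β + 1 = 0) :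
    ∃ γ δ : F, γ ≠ δ ∧
      ∃ s : Set (Option F),
        IsFourCycleOn (starterFactor (hortonStarter β) γ ⊔ starterFactor (hortonStarter β) δ) s ∧
          none ∈ s := by
  -- Basic algebraic facts about β
  have hβ0 : β ≠ 0 := by
    intro h; rw [h] at hroot; norm_num at hroot
  have hβ1' : β ≠ 1 := by
    intro h; rw [h] at hroot; norm_num at hroot
  have hsq : β ^ 2 = β - 1 := by linear_combination hroot
  have hcube : β ^ 2 * β + 1 = 0 := by linear_combination (β + 1) * hroot
  have hsq1 : β ^ 2 + 1 = β := by linear_combination hroot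
  refine ⟨1, 0, one_ne_zero, {none, some 1, some β, some 0}, ?_, by simp⟩
  refine ⟨none, some 1, some β, some 0, by simp, by simp, by simp,
    by simp [hβ1'.symm], by simp, by simp [hβ0], rfl, ?_, ?_, ?_, ?_⟩
  · -- ∞ – 1 in F_1
    left
    rw [starterFactor, SimpleGraph.fromEdgeSet_adj]
    exact ⟨Or.inl rfl, by simp⟩
  · -- 1 – β in F_0
    right
    rw [starterFactor, SimpleGraph.fromEdgeSet_adj]
    refine ⟨Or.inr ⟨s(1, β), ⟨1, one_ne_zero, IsSquare.one, by rw [one_mul]⟩, ?_⟩, by simp [hβ1'.symm]⟩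
    simp [Sym2.map_pair_eq]
  · -- β – 0 in F_1
    left
    rw [starterFactor, SimpleGraph.fromEdgeSet_adj]
    refine ⟨Or.inr ⟨s(β ^ 2, β ^ 2 * β), ⟨β ^ 2, pow_ne_zero 2 hβ0, ⟨β, sq β⟩, rfl⟩, ?_⟩,
      by simp [hβ0]⟩
    rw [Sym2.map_pair_eq]
    have h1 : β ^ 2 + 1 = β := hsq1
    have h2 : β ^ 2 * β + 1 = 0 := hcube
    rw [h1, h2]
  · -- 0 – ∞ in F_0
    right
    rw [starterFactor, SimpleGraph.fromEdgeSet_adj]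
    refine ⟨Or.inl ?_, by simp⟩
    rw [Sym2.eq_swap]; rfl


end Paper
end

section
/- Let q ≡ 3 (mod 8) be an odd prime power with q ≥ 11 and q ≡ 1 (mod 3) (equivalently, 3 ∈ NQR(q)). If β ∈ NQR(q)\{−1} satisfies β² − β + 1 = 0, then the one-factorization of the complete graph on F_q ∪ {∞} generated by the starter S_β is (1, C_4): the union of any two distinct one-factors of this one-factorization contains exactly one cycle of length four. -/
open SimpleGraph

namespace Paper

variable {V : Type*} {Γ : Type*} {F : Type*}

section Helpers

variable {F : Type*} [Field F]

lemma sqr_ratio {x c : F} (hx0 : x ≠ 0) (hxs : IsSquare x) (h : IsSquare (c * x)) :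
    IsSquare c := by
  obtain ⟨s, hs⟩ := hxs
  obtain ⟨t, ht⟩ := h
  have hs0 : s ≠ 0 := fun h0 => hx0 (by rw [hs, h0, mul_zero])
  refine ⟨t / s, ?_⟩
  field_simp
  linear_combination ht - c * hs

lemma nonsq_mul_s7 [Fintype F] {u v : F} (hu : ¬IsSquare u) (hv : ¬IsSquare v) :
    IsSquare (u * v) := by
  classical
  have hu0 : u ≠ 0 := fun h => hu (by rw [h]; exact IsSquare.zero)
  have hv0 : v ≠ 0 := fun h => hv (by rw [h]; exact IsSquare.zero)
  have h1 : quadraticChar F u = -1 := quadraticChar_neg_one_iff_not_isSquare.mpr hu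
  have h2 : quadraticChar F v = -1 := quadraticChar_neg_one_iff_not_isSquare.mpr hv
  have h3 : quadraticChar F (u * v) = 1 := by rw [map_mul, h1, h2]; norm_num
  exact (quadraticChar_one_iff_isSquare (mul_ne_zero hu0 hv0)).mp h3

/-- The second finite vertex of the unique four-cycle through `∞`. -/
noncomputable def zPoint (β γ δ : F) : F :=
  letI := Classical.propDecidable (IsSquare (γ - δ))
  if IsSquare (γ - δ) then (γ - δ) * β + δ else γ - (γ - δ) * β

lemma zPoint_pos {β γ δ : F} (hd : IsSquare (γ - δ)) :
    zPoint β γ δ = (γ - δ) * β + δ := by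
  simp [zPoint, hd]

lemma zPoint_neg {β γ δ : F} (hd : ¬IsSquare (γ - δ)) :
    zPoint β γ δ = γ - (γ - δ) * β := by
  simp [zPoint, hd]

lemma sf_adj {β γ : F} {u v : Option F} :
    (starterFactor (hortonStarter β) γ).Adj u v ↔
      (s(u, v) = s((none : Option F), some γ) ∨
        ∃ x : F, x ≠ 0 ∧ IsSquare x ∧ s(u, v) = s(some (x + γ), some (x * β + γ))) ∧ u ≠ v := by
  rw [starterFactor, fromEdgeSet_adj]
  simp only [Set.mem_union, Set.mem_singleton_iff, Set.mem_image, hortonStarter,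
    Set.mem_setOf_eq]
  constructor
  · rintro ⟨h | ⟨e, ⟨x, hx0, hxs, rfl⟩, hmap⟩, hne⟩
    · exact ⟨Or.inl h, hne⟩
    · exact ⟨Or.inr ⟨x, hx0, hxs, by rw [← hmap, Sym2.map_pair_eq]⟩, hne⟩
  · rintro ⟨h | ⟨x, hx0, hxs, h⟩, hne⟩
    · exact ⟨Or.inl h, hne⟩
    · exact ⟨Or.inr ⟨s(x, x * β), ⟨x, hx0, hxs, rfl⟩, by rw [Sym2.map_pair_eq, ← h]⟩, hne⟩

lemma adj_inf {β γ : F} {w : Option F} :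
    (starterFactor (hortonStarter β) γ).Adj none w ↔ w = some γ := by
  rw [sf_adj]
  constructor
  · rintro ⟨h | ⟨x, hx0, hxs, h⟩, hne⟩
    · rcases Sym2.eq_iff.mp h with ⟨_, h2⟩ | ⟨h1, _⟩
      · exact h2
      · exact absurd h1 (by simp)
    · rcases Sym2.eq_iff.mp h with ⟨h1, _⟩ | ⟨h1, _⟩ <;> simp at h1
  · rintro rfl
    exact ⟨Or.inl rfl, by simp⟩

lemma adj_ss {β γ : F} (hb1 : β ≠ 1) {a w : F} :
    (starterFactor (hortonStarter β) γ).Adj (some a) (some w) ↔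
      ∃ x : F, x ≠ 0 ∧ IsSquare x ∧
        ((a = x + γ ∧ w = x * β + γ) ∨ (w = x + γ ∧ a = x * β + γ)) := by
  rw [sf_adj]
  constructor
  · rintro ⟨h | ⟨x, hx0, hxs, h⟩, hne⟩
    · rcases Sym2.eq_iff.mp h with ⟨h1, _⟩ | ⟨_, h2⟩
      · exact absurd h1 (by simp)
      · exact absurd h2 (by simp)
    · refine ⟨x, hx0, hxs, ?_⟩
      rcases Sym2.eq_iff.mp h with ⟨h1, h2⟩ | ⟨h1, h2⟩
      · exact Or.inl ⟨Option.some.inj h1, Option.some.inj h2⟩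
      · exact Or.inr ⟨Option.some.inj h2, Option.some.inj h1⟩
  · rintro ⟨x, hx0, hxs, h⟩
    have hne' : x + γ ≠ x * β + γ := by
      intro hh
      apply hb1
      have h1 : x * β = x * 1 := by linear_combination -hh
      exact mul_left_cancel₀ hx0 h1
    rcases h with ⟨rfl, rfl⟩ | ⟨rfl, rfl⟩
    · exact ⟨Or.inr ⟨x, hx0, hxs, rfl⟩, by simpa using hne'⟩
    · exact ⟨Or.inr ⟨x, hx0, hxs, Sym2.eq_swap⟩, by simpa using hne'.symm⟩

lemma adj_self_gamma {β γ : F} (hβ0 : β ≠ 0) (hb1 : β ≠ 1) {w : F}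
    (h : (starterFactor (hortonStarter β) γ).Adj (some γ) (some w)) : False := by
  rw [adj_ss hb1] at h
  obtain ⟨x, hx0, _, h⟩ := h
  rcases h with ⟨h1, _⟩ | ⟨_, h1⟩
  · exact hx0 (by linear_combination -h1)
  · exact mul_ne_zero hx0 hβ0 (by linear_combination -h1)

lemma matching {β : F} (hβ : ¬IsSquare β) (hb1 : β ≠ 1) {γ : F} {v w w' : Option F}
    (h1 : (starterFactor (hortonStarter β) γ).Adj v w)
    (h2 : (starterFactor (hortonStarter β) γ).Adj v w') : w = w' := by
  have hβ0 : β ≠ 0 := fun h => hβ (by rw [h]; exact IsSquare.zero)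
  match v, w, w' with
  | none, w, w' => rw [adj_inf] at h1 h2; rw [h1, h2]
  | some a, none, none => rfl
  | some a, none, some b' =>
    exfalso
    have ha : (some a : Option F) = some γ := adj_inf.mp h1.symm
    rw [Option.some.injEq] at ha
    subst ha
    exact adj_self_gamma hβ0 hb1 h2
  | some a, some b, none =>
    exfalso
    have ha : (some a : Option F) = some γ := adj_inf.mp h2.symm
    rw [Option.some.injEq] at ha
    subst ha
    exact adj_self_gamma hβ0 hb1 h1
  | some a, some b, some b' =>
    rw [adj_ss hb1] at h1 h2
    obtain ⟨x, hx0, hxs, hc⟩ := h1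
    obtain ⟨x', hx0', hxs', hc'⟩ := h2
    rcases hc with ⟨ha, hb⟩ | ⟨hb, ha⟩ <;> rcases hc' with ⟨ha', hb'⟩ | ⟨hb', ha'⟩
    · have hxx : x = x' := by linear_combination ha.symm.trans ha'
      rw [hb, hb', hxx]
    · exfalso
      have hxx : x = β * x' := by linear_combination ha.symm.trans ha'
      rw [hxx] at hxs
      exact hβ (sqr_ratio hx0' hxs' hxs)
    · exfalso
      have hxx : x' = β * x := by linear_combination ha'.symm.trans ha
      rw [hxx] at hxs'
      exact hβ (sqr_ratio hx0 hxs hxs')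
    · have hxx : x * β = x' * β := by linear_combination ha.symm.trans ha'
      have hxx' : x = x' := mul_right_cancel₀ hβ0 hxx
      rw [hb, hb', hxx']

end Helpers

section Core

variable {F : Type*} [Field F]

lemma beta_ne_one {β : F} (hroot : β ^ 2 - β + 1 = 0) : β ≠ 1 := by
  intro h
  rw [h] at hroot
  exact one_ne_zero (by linear_combination hroot)

lemma no_finite_cycle [Fintype F] {β : F} (hβ : ¬IsSquare β)
    (hroot : β ^ 2 - β + 1 = 0) (hm1 : ¬IsSquare (-1 : F)) (hns2 : ¬IsSquare (2 : F))
    (γ δ : F) (hne : γ ≠ δ) (a b c d : F)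
    (e1 : (starterFactor (hortonStarter β) γ).Adj (some a) (some b))
    (e2 : (starterFactor (hortonStarter β) δ).Adj (some b) (some c))
    (e3 : (starterFactor (hortonStarter β) γ).Adj (some c) (some d))
    (e4 : (starterFactor (hortonStarter β) δ).Adj (some d) (some a)) : False := by
  have hb1 : β ≠ 1 := beta_ne_one hroot
  have hβ0 : β ≠ 0 := fun h => hβ (by rw [h]; exact IsSquare.zero)
  have h2ne : (2 : F) ≠ 0 := fun h => hns2 (by rw [h]; exact IsSquare.zero)
  have hβ2sq : IsSquare (β - 1) := ⟨β, by linear_combination -hroot⟩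
  have hβ2ne : β - 1 ≠ 0 := sub_ne_zero.mpr hb1
  have hns2b : ¬IsSquare (2 * (β - 1)) := fun h => hns2 (sqr_ratio hβ2ne hβ2sq h)
  have hnbsq : IsSquare (-β) := ⟨β * β, by linear_combination (-β ^ 2 - β) * hroot⟩
  have hnbne : -β ≠ 0 := neg_ne_zero.mpr hβ0
  have hnsm2b : ¬IsSquare (-(2 * β)) := fun h =>
    hns2 (sqr_ratio hnbne hnbsq (by rw [show (2 : F) * -β = -(2 * β) from by ring]; exact h))
  rw [adj_ss hb1] at e1 e3
  rw [adj_ss hb1] at e2 e4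
  obtain ⟨x1, hx10, hx1s, h1⟩ := e1
  obtain ⟨y1, hy10, hy1s, h2⟩ := e2
  obtain ⟨x2, hx20, hx2s, h3⟩ := e3
  obtain ⟨y2, hy20, hy2s, h4⟩ := e4
  rcases h1 with ⟨ha1, hb1'⟩ | ⟨hb1', ha1⟩ <;>
    rcases h2 with ⟨hb2, hc2⟩ | ⟨hc2, hb2⟩ <;>
      rcases h3 with ⟨hc3, hd3⟩ | ⟨hd3, hc3⟩ <;>
        rcases h4 with ⟨hd4, ha4⟩ | ⟨ha4, hd4⟩ <;>
  [skip; skip; skip; skip; skip; skip; skip; skip; skip; skip; skip; skip; skip; skip;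
    skip; skip] <;>
  (have E1 := hb1'.symm.trans hb2; have E2 := hc2.symm.trans hc3;
   have E3 := hd3.symm.trans hd4; have E4 := ha1.symm.trans ha4)
  -- case 1: (1,1,1,1)
  · have key : y1 = (-1 : F) * x1 := by
      linear_combination (1 - β) * E2 + (-β) * E3 + E4 + (x2 + y1) * hroot
    rw [key] at hy1s
    exact hm1 (sqr_ratio hx10 hx1s hy1s)
  -- case 2
  · have key : y1 = (2 * (β - 1)) * x1 := by
      linear_combination (-1 - β) * E1 + (-1 : F) * E2 + (-1 + β) * E3 + E4 +
        (x1 - x2 + y2) * hroot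
    rw [key] at hy1s
    exact hns2b (sqr_ratio hx10 hx1s hy1s)
  -- case 3
  · have key : x1 = (2 : F) * x2 := by
      linear_combination E1 + (1 - β) * E2 + (-1 : F) * E3 + (1 - β) * E4 +
        (-x2 + y1 - y2) * hroot
    rw [key] at hx1s
    exact hns2 (sqr_ratio hx20 hx2s hx1s)
  -- case 4
  · exact hne (by linear_combination E1 + (1 - β) * E2 + E3 + (-β) * E4 + (y1 - x2) * hroot)
  -- case 5
  · have key : y2 = (-(2 * β)) * x1 := by
      linear_combination (1 - β) * E1 + E2 + (1 - β) * E3 + (-1 + 2 * β) * E4 +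
        (x1 + x2 - y1 + 2 * y2) * hroot
    rw [key] at hy2s
    exact hnsm2b (sqr_ratio hx10 hx1s hy2s)
  -- case 6
  · have key : (2 : F) * γ = 2 * δ := by
      linear_combination β * E1 + (-1 + β) * E2 + β * E3 + (1 - β) * E4 +
        (-x1 - x2 + y1 + y2) * hroot
    exact hne (mul_left_cancel₀ h2ne key)
  -- case 7
  · exact hne (by linear_combination (-1 + β) * E1 + (-1 : F) * E2 + (-β) * E3 + E4 +
      (y1 - x1) * hroot)
  -- case 8
  · have key : x2 = (2 : F) * x1 := by
      linear_combination (-1 + β) * E1 + (-1 : F) * E2 + (1 - β) * E3 + (-1 : F) * E4 +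
        (-x1 + y1 - y2) * hroot
    rw [key] at hx2s
    exact hns2 (sqr_ratio hx10 hx1s hx2s)
  -- case 9
  · have key : x2 = (2 : F) * x1 := by
      linear_combination (-1 : F) * E1 + (-1 + β) * E2 + E3 + (-1 + β) * E4 +
        (-x1 - y1 + y2) * hroot
    rw [key] at hx2s
    exact hns2 (sqr_ratio hx10 hx1s hx2s)
  -- case 10
  · exact hne (by linear_combination (-β) * E1 + (-1 : F) * E2 + (-1 + β) * E3 + E4 +
      (y2 - x2) * hroot)
  -- case 11
  · have key : (2 : F) * γ = 2 * δ := by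
      linear_combination (1 - β) * E1 + (-β) * E2 + (1 - β) * E3 + β * E4 +
        (-x1 - x2 + y1 + y2) * hroot
    exact hne (mul_left_cancel₀ h2ne key)
  -- case 12
  · have key : y2 = (2 * (β - 1)) * x1 := by
      linear_combination E1 + (1 - β) * E2 + E3 + (-1 - β) * E4 + (x1 - x2 + y1) * hroot
    rw [key] at hy2s
    exact hns2b (sqr_ratio hx10 hx1s hy2s)
  -- case 13
  · exact hne (by linear_combination E1 + β * E2 + E3 + (-1 + β) * E4 + (y2 - x1) * hroot)
  -- case 14
  · have key : x1 = (2 : F) * x2 := by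
      linear_combination (1 - β) * E1 + E2 + (-1 + β) * E3 + E4 + (-x2 - y1 + y2) * hroot
    rw [key] at hx1s
    exact hns2 (sqr_ratio hx20 hx2s hx1s)
  -- case 15
  · have key : y1 = (-(2 * β)) * x1 := by
      linear_combination (-1 + 2 * β) * E1 + (-1 + β) * E2 + (-1 : F) * E3 + (1 - β) * E4 +
        (x1 + x2 + 2 * y1 - y2) * hroot
    rw [key] at hy1s
    exact hnsm2b (sqr_ratio hx10 hx1s hy1s)
  -- case 16
  · have key : y1 = (-1 : F) * x1 := by
      linear_combination E2 + β * E3 + (1 - β) * E4 + (x1 + y2) * hroot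
    rw [key] at hy1s
    exact hm1 (sqr_ratio hx10 hx1s hy1s)

lemma edge_gamma_z {β : F} (hβ : ¬IsSquare β) (hroot : β ^ 2 - β + 1 = 0)
    {γ δ : F} {z : F}
    (h : (starterFactor (hortonStarter β) γ ⊔ starterFactor (hortonStarter β) δ).Adj
      (some γ) (some z)) : z = zPoint β γ δ := by
  have hb1 : β ≠ 1 := beta_ne_one hroot
  have hβ0 : β ≠ 0 := fun h => hβ (by rw [h]; exact IsSquare.zero)
  rcases (sup_adj _ _ _ _).mp h with hh | hh
  · exact absurd hh (fun hh => adj_self_gamma hβ0 hb1 hh)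
  · rw [adj_ss hb1] at hh
    obtain ⟨x, hx0, hxs, hc⟩ := hh
    rcases hc with ⟨h1, h2⟩ | ⟨h1, h2⟩
    · by_cases hd : IsSquare (γ - δ)
      · rw [zPoint_pos hd]
        linear_combination h2 - β * h1
      · exfalso
        apply hd
        have hx : x = γ - δ := by linear_combination -h1
        rwa [hx] at hxs
    · by_cases hd : IsSquare (γ - δ)
      · exfalso
        have heq : γ - δ = β * x := by linear_combination h2
        rw [heq] at hd
        exact hβ (sqr_ratio hx0 hxs hd)
      · rw [zPoint_neg hd]
        linear_combination h1 + (β - 1) * h2 + x * hroot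

lemma edge_delta_z [Fintype F] {β : F} (hβ : ¬IsSquare β) (hroot : β ^ 2 - β + 1 = 0)
    (hm1 : ¬IsSquare (-1 : F)) {γ δ : F} {z : F}
    (h : (starterFactor (hortonStarter β) γ ⊔ starterFactor (hortonStarter β) δ).Adj
      (some δ) (some z)) : z = zPoint β γ δ := by
  have hb1 : β ≠ 1 := beta_ne_one hroot
  have hβ0 : β ≠ 0 := fun h => hβ (by rw [h]; exact IsSquare.zero)
  rcases (sup_adj _ _ _ _).mp h with hh | hh
  swap
  · exact absurd hh (fun hh => adj_self_gamma hβ0 hb1 hh)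
  · rw [adj_ss hb1] at hh
    obtain ⟨y, hy0, hys, hc⟩ := hh
    rcases hc with ⟨h1, h2⟩ | ⟨h1, h2⟩
    · by_cases hd : IsSquare (γ - δ)
      · exfalso
        have heq : γ - δ = (-1 : F) * y := by linear_combination -h1
        rw [heq] at hd
        exact hm1 (sqr_ratio hy0 hys hd)
      · rw [zPoint_neg hd]
        linear_combination h2 - β * h1
    · by_cases hd : IsSquare (γ - δ)
      · rw [zPoint_pos hd]
        linear_combination h1 + (β - 1) * h2 + y * hroot
      · exfalso
        have hsq : IsSquare ((-1 : F) * (γ - δ)) := nonsq_mul_s7 hm1 hd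
        have heq : (-1 : F) * (γ - δ) = β * y := by linear_combination h2
        rw [heq] at hsq
        exact hβ (sqr_ratio hy0 hys hsq)

lemma inf_case [Fintype F] {β : F} (hβ : ¬IsSquare β) (hroot : β ^ 2 - β + 1 = 0)
    (hm1 : ¬IsSquare (-1 : F)) {γ δ : F} {b c d : Option F}
    (hbd : b ≠ d) (hc : c ≠ none)
    (e1 : (starterFactor (hortonStarter β) γ ⊔ starterFactor (hortonStarter β) δ).Adj none b)
    (e2 : (starterFactor (hortonStarter β) γ ⊔ starterFactor (hortonStarter β) δ).Adj b c)
    (e3 : (starterFactor (hortonStarter β) γ ⊔ starterFactor (hortonStarter β) δ).Adj c d)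
    (e4 : (starterFactor (hortonStarter β) γ ⊔ starterFactor (hortonStarter β) δ).Adj d none) :
    ((b = some γ ∧ d = some δ) ∨ (b = some δ ∧ d = some γ)) ∧
      c = some (zPoint β γ δ) := by
  have hbval : b = some γ ∨ b = some δ := by
    rcases (sup_adj _ _ _ _).mp e1 with h | h
    · exact Or.inl (adj_inf.mp h)
    · exact Or.inr (adj_inf.mp h)
  have hdval : d = some γ ∨ d = some δ := by
    rcases (sup_adj _ _ _ _).mp e4.symm with h | h
    · exact Or.inl (adj_inf.mp h)
    · exact Or.inr (adj_inf.mp h)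
  obtain ⟨z, rfl⟩ := Option.ne_none_iff_exists'.mp hc
  rcases hbval with rfl | rfl <;> rcases hdval with rfl | rfl
  · exact absurd rfl hbd
  · exact ⟨Or.inl ⟨rfl, rfl⟩, congrArg some (edge_gamma_z hβ hroot e2)⟩
  · exact ⟨Or.inr ⟨rfl, rfl⟩, congrArg some (edge_delta_z hβ hroot hm1 e2)⟩
  · exact absurd rfl hbd

end Core

set_option maxHeartbeats 2000000 in
/-- Let `q ≡ 3 (mod 8)` be an odd prime power with `q ≥ 11` and
`q ≡ 1 (mod 3)`. If `β ∈ NQR(q) \ {-1}` satisfies `β² - β + 1 = 0`, then the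
one-factorization generated by the starter `S_β` is `(1, C₄)`: the union of any two
distinct one-factors contains exactly one cycle of length four. -/
theorem statement_7 {F : Type*} [Field F] [Fintype F] (q : ℕ)
    (hcard : Fintype.card F = q) (hq8 : q % 8 = 3) (hq11 : 11 ≤ q) (hq3 : q % 3 = 1)
    (β : F) (hβ : ¬ IsSquare β) (hβ1 : β ≠ -1) (hroot : β ^ 2 - β + 1 = 0) :
    ∀ γ δ : F, γ ≠ δ →
      fourCycleCount (starterFactor (hortonStarter β) γ ⊔ starterFactor (hortonStarter β) δ) = 1 := by
  intro γ δ hne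
  classical
  have hcard4 : Fintype.card F % 4 = 3 := by rw [hcard]; omega
  have hcard8 : Fintype.card F % 8 = 3 := by rw [hcard]; omega
  have hm1 : ¬IsSquare (-1 : F) := fun h => (FiniteField.isSquare_neg_one_iff.mp h) hcard4
  have hns2 : ¬IsSquare (2 : F) := fun h => (FiniteField.isSquare_two_iff.mp h).1 hcard8
  have hb1 : β ≠ 1 := beta_ne_one hroot
  have hβ0 : β ≠ 0 := fun h => hβ (by rw [h]; exact IsSquare.zero)
  have htne : γ - δ ≠ 0 := sub_ne_zero.mpr hne
  have hβ2sq : IsSquare (β - 1) := ⟨β, by linear_combination -hroot⟩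
  have h1mbne : (1 : F) - β ≠ 0 := fun h => hb1 (by linear_combination -h)
  have h1mb : ¬IsSquare ((1 : F) - β) := by
    intro h
    have hone : β * (1 - β) = 1 := by linear_combination -hroot
    have hsq1 : IsSquare (β * (1 - β)) := by rw [hone]; exact IsSquare.one
    exact hβ (sqr_ratio h1mbne h hsq1)
  set G1 := starterFactor (hortonStarter β) γ with hG1
  set G2 := starterFactor (hortonStarter β) δ with hG2
  have hzγ : zPoint β γ δ ≠ γ := by
    by_cases hd : IsSquare (γ - δ)
    · rw [zPoint_pos hd]
      intro h
      exact hb1 (mul_left_cancel₀ htne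
        (show (γ - δ) * β = (γ - δ) * 1 by linear_combination h))
    · rw [zPoint_neg hd]
      intro h
      exact mul_ne_zero htne hβ0 (by linear_combination -h)
  have hzδ : zPoint β γ δ ≠ δ := by
    by_cases hd : IsSquare (γ - δ)
    · rw [zPoint_pos hd]
      intro h
      exact mul_ne_zero htne hβ0 (by linear_combination h)
    · rw [zPoint_neg hd]
      intro h
      exact mul_ne_zero htne h1mbne (by linear_combination h)
  have he1 : G1.Adj none (some γ) := adj_inf.mpr rfl
  have he4 : G2.Adj none (some δ) := adj_inf.mpr rfl
  have he2 : G2.Adj (some γ) (some (zPoint β γ δ)) := by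
    rw [hG2, adj_ss hb1]
    by_cases hd : IsSquare (γ - δ)
    · exact ⟨γ - δ, htne, hd, Or.inl ⟨by ring, zPoint_pos hd⟩⟩
    · refine ⟨(γ - δ) * (1 - β), mul_ne_zero htne h1mbne, nonsq_mul_s7 hd h1mb,
        Or.inr ⟨?_, ?_⟩⟩
      · rw [zPoint_neg hd]; ring
      · linear_combination (γ - δ) * hroot
  have he3 : G1.Adj (some (zPoint β γ δ)) (some δ) := by
    rw [hG1, adj_ss hb1]
    by_cases hd : IsSquare (γ - δ)
    · refine ⟨(γ - δ) * (β - 1), mul_ne_zero htne (sub_ne_zero.mpr hb1), hd.mul hβ2sq,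
        Or.inl ⟨?_, ?_⟩⟩
      · rw [zPoint_pos hd]; ring
      · linear_combination (δ - γ) * hroot
    · refine ⟨(-1 : F) * (γ - δ), mul_ne_zero (neg_ne_zero.mpr one_ne_zero) htne,
        nonsq_mul_s7 hm1 hd, Or.inr ⟨by ring, ?_⟩⟩
      rw [zPoint_neg hd]; ring
  have hexist : IsFourCycleOn (G1 ⊔ G2)
      ({none, some γ, some (zPoint β γ δ), some δ} : Set (Option F)) := by
    refine ⟨none, some γ, some (zPoint β γ δ), some δ, by simp, by simp, by simp,
      by simpa using Ne.symm hzγ, by simpa using hne, by simpa using hzδ, rfl,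
      ?_, ?_, ?_, ?_⟩
    · exact (sup_adj _ _ _ _).mpr (Or.inl he1)
    · exact (sup_adj _ _ _ _).mpr (Or.inr he2)
    · exact (sup_adj _ _ _ _).mpr (Or.inl he3)
    · exact (sup_adj _ _ _ _).mpr (Or.inr he4.symm)
  have huniq : ∀ s : Set (Option F), IsFourCycleOn (G1 ⊔ G2) s →
      s = ({none, some γ, some (zPoint β γ δ), some δ} : Set (Option F)) := by
    rintro s ⟨a, b, c, d, hab, hac, had, hbc, hbd, hcd, rfl, e1, e2, e3, e4⟩
    by_cases hA : a = none
    · subst hA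
      obtain ⟨hor, hcz⟩ := inf_case hβ hroot hm1 hbd (Ne.symm hac) e1 e2 e3 e4
      subst hcz
      rcases hor with ⟨rfl, rfl⟩ | ⟨rfl, rfl⟩ <;>
        · ext x
          simp only [Set.mem_insert_iff, Set.mem_singleton_iff]
          try tauto
    · by_cases hB : b = none
      · subst hB
        obtain ⟨hor, hcz⟩ := inf_case hβ hroot hm1 (Ne.symm hac) (Ne.symm hbd) e2 e3 e4 e1
        subst hcz
        rcases hor with ⟨rfl, rfl⟩ | ⟨rfl, rfl⟩ <;>
          · ext x
            simp only [Set.mem_insert_iff, Set.mem_singleton_iff]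
            try tauto
      · by_cases hC : c = none
        · subst hC
          obtain ⟨hor, hcz⟩ := inf_case hβ hroot hm1 (Ne.symm hbd) hA e3 e4 e1 e2
          subst hcz
          rcases hor with ⟨rfl, rfl⟩ | ⟨rfl, rfl⟩ <;>
            · ext x
              simp only [Set.mem_insert_iff, Set.mem_singleton_iff]
              try tauto
        · by_cases hD : d = none
          · subst hD
            obtain ⟨hor, hcz⟩ := inf_case hβ hroot hm1 hac hB e4 e1 e2 e3
            subst hcz
            rcases hor with ⟨rfl, rfl⟩ | ⟨rfl, rfl⟩ <;>
              · ext x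
                simp only [Set.mem_insert_iff, Set.mem_singleton_iff]
                tauto
          · exfalso
            obtain ⟨a', rfl⟩ := Option.ne_none_iff_exists'.mp hA
            obtain ⟨b', rfl⟩ := Option.ne_none_iff_exists'.mp hB
            obtain ⟨c', rfl⟩ := Option.ne_none_iff_exists'.mp hC
            obtain ⟨d', rfl⟩ := Option.ne_none_iff_exists'.mp hD
            rcases (sup_adj _ _ _ _).mp e1 with h1 | h1
            · have h2 : G2.Adj (some b') (some c') := by
                rcases (sup_adj _ _ _ _).mp e2 with h2 | h2
                · exact absurd (matching hβ hb1 h1.symm h2) hac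
                · exact h2
              have h3 : G1.Adj (some c') (some d') := by
                rcases (sup_adj _ _ _ _).mp e3 with h3 | h3
                · exact h3
                · exact absurd (matching hβ hb1 h2.symm h3) hbd
              have h4 : G2.Adj (some d') (some a') := by
                rcases (sup_adj _ _ _ _).mp e4 with h4 | h4
                · exact absurd (matching hβ hb1 h3.symm h4).symm hac
                · exact h4
              exact no_finite_cycle hβ hroot hm1 hns2 γ δ hne a' b' c' d' h1 h2 h3 h4
            · have h2 : G1.Adj (some b') (some c') := by
                rcases (sup_adj _ _ _ _).mp e2 with h2 | h2
                · exact h2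
                · exact absurd (matching hβ hb1 h1.symm h2) hac
              have h3 : G2.Adj (some c') (some d') := by
                rcases (sup_adj _ _ _ _).mp e3 with h3 | h3
                · exact absurd (matching hβ hb1 h2.symm h3) hbd
                · exact h3
              have h4 : G1.Adj (some d') (some a') := by
                rcases (sup_adj _ _ _ _).mp e4 with h4 | h4
                · exact h4
                · exact absurd (matching hβ hb1 h3.symm h4).symm hac
              exact no_finite_cycle hβ hroot hm1 hns2 δ γ (Ne.symm hne) a' b' c' d'
                h1 h2 h3 h4
  have hset : {s : Set (Option F) | IsFourCycleOn (G1 ⊔ G2) s} =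
      {({none, some γ, some (zPoint β γ δ), some δ} : Set (Option F))} :=
    Set.eq_singleton_iff_unique_mem.mpr ⟨hexist, huniq⟩
  rw [fourCycleCount, hset, Set.ncard_singleton]

end Paper
end

section
/- Let q ≡ 3 (mod 8) be an odd prime power with q ≡ −1 (mod 12). If β ∈ NQR(q)\{−1} satisfies β − 1 ∈ NQR(q) and β² + 1 ∈ QR(q), then the one-factorization of the complete graph on F_q ∪ {∞} generated by the starter S_β is (1, C_4): the union of any two distinct one-factors of this one-factorization contains exactly one cycle of length four. -/
open SimpleGraph

namespace Paper

variable {V : Type*} {Γ : Type*} {F : Type*}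

set_option linter.unusedSectionVars false
set_option linter.unusedVariables false
set_option maxHeartbeats 8000000

section Support

variable [Field F] [Fintype F]

lemma nonsq_ne_zero {a : F} (h : ¬IsSquare a) : a ≠ 0 := by
  rintro rfl; exact h ⟨0, by ring⟩

lemma mul_nonsq_nonsq {a b : F} (ha : ¬IsSquare a) (hb : ¬IsSquare b) :
    IsSquare (a * b) := by
  classical
  have ha0 := nonsq_ne_zero ha
  have hb0 := nonsq_ne_zero hb
  have h1 : quadraticChar F a = -1 := quadraticChar_neg_one_iff_not_isSquare.mpr ha
  have h2 : quadraticChar F b = -1 := quadraticChar_neg_one_iff_not_isSquare.mpr hb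
  have : quadraticChar F (a * b) = 1 := by rw [map_mul, h1, h2]; ring
  exact (quadraticChar_one_iff_isSquare (mul_ne_zero ha0 hb0)).mp this

lemma mul_sq_nonsq {a b : F} (ha0 : a ≠ 0) (ha : IsSquare a) (hb : ¬IsSquare b) :
    ¬IsSquare (a * b) := by
  classical
  have hb0 := nonsq_ne_zero hb
  have h1 : quadraticChar F a = 1 := (quadraticChar_one_iff_isSquare ha0).mpr ha
  have h2 : quadraticChar F b = -1 := quadraticChar_neg_one_iff_not_isSquare.mpr hb
  have : quadraticChar F (a * b) = -1 := by rw [map_mul, h1, h2]; ring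
  exact quadraticChar_neg_one_iff_not_isSquare.mp this

lemma isSquare_mul_sq_iff {a c : F} (hc : c ≠ 0) : IsSquare (a * c ^ 2) ↔ IsSquare a := by
  constructor
  · intro h
    have : a = a * c ^ 2 * (c⁻¹ * c⁻¹) := by
      field_simp
    rw [this]
    exact h.mul ⟨c⁻¹, rfl⟩
  · intro h
    exact h.mul ⟨c, sq c⟩

lemma isSquare_inv' {a : F} (h : IsSquare a) : IsSquare a⁻¹ := by
  obtain ⟨r, rfl⟩ := h
  exact ⟨r⁻¹, by rw [mul_inv]⟩

lemma sq_div_sq {x y : F} (hy : y ≠ 0) (hx : IsSquare x) (hyy : IsSquare y) :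
    IsSquare (x * y⁻¹) :=
  hx.mul (isSquare_inv' hyy)


lemma mul_nonsq_sq {a b : F} (ha : ¬IsSquare a) (hb0 : b ≠ 0) (hb : IsSquare b) :
    ¬IsSquare (a * b) := by
  rw [mul_comm]; exact mul_sq_nonsq hb0 hb ha

lemma elt_ne' {γ N1 N2 DD : F} (hD : DD ≠ 0) (h : N1 ≠ N2) :
    γ + N1 / DD ≠ γ + N2 / DD := by
  intro hh
  apply h
  have h3 : N1 / DD = N2 / DD := by linear_combination hh
  field_simp at h3
  exact h3

lemma not_sq_neg_of_sq {z : F} (hm1 : ¬IsSquare (-1 : F)) (hz0 : z ≠ 0)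
    (hz : IsSquare z) : ¬IsSquare (-z) := by
  have : -z = z * (-1) := by ring
  rw [this]
  exact mul_sq_nonsq hz0 hz hm1

lemma starter_adj {β γ : F} {u v : Option F} :
    (starterFactor (hortonStarter β) γ).Adj u v ↔
      u ≠ v ∧ (s(u,v) = s((none : Option F), some γ) ∨ ∃ x : F, x ≠ 0 ∧ IsSquare x ∧
        s(u,v) = s(some (x + γ), some (x * β + γ))) := by
  unfold starterFactor hortonStarter
  rw [SimpleGraph.fromEdgeSet_adj]
  constructor
  · rintro ⟨hm, hne⟩
    refine ⟨hne, ?_⟩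
    rcases hm with hm | hm
    · exact Or.inl hm
    · obtain ⟨e, ⟨x, hx0, hxs, rfl⟩, he⟩ := hm
      exact Or.inr ⟨x, hx0, hxs, by rw [← he, Sym2.map_pair_eq]⟩
  · rintro ⟨hne, h | ⟨x, hx0, hxs, hx⟩⟩
    · exact ⟨Or.inl h, hne⟩
    · exact ⟨Or.inr ⟨s(x, x * β), ⟨x, hx0, hxs, rfl⟩, by rw [Sym2.map_pair_eq, hx]⟩, hne⟩

lemma starter_matching {β : F} (hβ : ¬IsSquare β) (γ : F) {u v w : Option F}
    (h1 : (starterFactor (hortonStarter β) γ).Adj u v)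
    (h2 : (starterFactor (hortonStarter β) γ).Adj u w) : v = w := by
  have hβ0 : β ≠ 0 := nonsq_ne_zero hβ
  rw [starter_adj] at h1 h2
  obtain ⟨hne1, h1⟩ := h1
  obtain ⟨hne2, h2⟩ := h2
  have key : ∀ x y : F, x ≠ 0 → y ≠ 0 → IsSquare x → IsSquare y →
      x = y * β → False := by
    intro x y hx0 hy0 hxs hys h
    apply hβ
    have : β = x * y⁻¹ := by field_simp [h]; linear_combination -h
    rw [this]
    exact sq_div_sq hy0 hxs hys
  simp only [Sym2.eq_iff] at h1 h2
  rcases h1 with h1 | ⟨x, hx0, hxs, h1⟩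
  · rcases h2 with h2 | ⟨y, hy0, hys, h2⟩
    · rcases h1 with ⟨rfl, rfl⟩ | ⟨rfl, rfl⟩
      · rcases h2 with ⟨-, rfl⟩ | ⟨h2a, -⟩
        · rfl
        · exact absurd h2a (by simp)
      · rcases h2 with ⟨h2a, -⟩ | ⟨-, rfl⟩
        · exact absurd h2a (by simp)
        · rfl
    · rcases h1 with ⟨rfl, rfl⟩ | ⟨rfl, rfl⟩ <;>
        rcases h2 with ⟨h2a, h2b⟩ | ⟨h2a, h2b⟩
      · simp at h2a
      · simp at h2a
      · simp only [Option.some.injEq] at h2a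
        exact absurd (by linear_combination -h2a : y = 0) hy0
      · simp only [Option.some.injEq] at h2a
        have hyb : y * β = 0 := by linear_combination -h2a
        exact absurd ((mul_eq_zero.mp hyb).resolve_right hβ0) hy0
  · rcases h2 with h2 | ⟨y, hy0, hys, h2⟩
    · rcases h2 with ⟨rfl, rfl⟩ | ⟨rfl, rfl⟩ <;>
        rcases h1 with ⟨h1a, h1b⟩ | ⟨h1a, h1b⟩
      · simp at h1a
      · simp at h1a
      · simp only [Option.some.injEq] at h1a
        exact absurd (by linear_combination -h1a : x = 0) hx0
      · simp only [Option.some.injEq] at h1a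
        have hxb : x * β = 0 := by linear_combination -h1a
        exact absurd ((mul_eq_zero.mp hxb).resolve_right hβ0) hx0
    · rcases h1 with ⟨hu1, hv⟩ | ⟨hu1, hv⟩ <;> rcases h2 with ⟨hu2, hw⟩ | ⟨hu2, hw⟩ <;>
        rw [hu2] at hu1 <;> simp only [Option.some.injEq] at hu1
      · have : x = y := by linear_combination -hu1
        subst this; rw [hv, hw]
      · exact absurd (key x y hx0 hy0 hxs hys (by linear_combination -hu1)) (fun h => h)
      · exact absurd (key y x hy0 hx0 hys hxs (by linear_combination hu1)) (fun h => h)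
      · have : x = y := mul_right_cancel₀ hβ0 (by linear_combination -hu1)
        subst this; rw [hv, hw]

lemma pair_of_adj {β γ : F} {U V : F}
    (h : (starterFactor (hortonStarter β) γ).Adj (some U) (some V)) :
    ∃ x : F, x ≠ 0 ∧ IsSquare x ∧
      ((U = x + γ ∧ V = x * β + γ) ∨ (U = x * β + γ ∧ V = x + γ)) := by
  rw [starter_adj] at h
  obtain ⟨-, h | ⟨x, hx0, hxs, hx⟩⟩ := h
  · rw [Sym2.eq_iff] at h
    rcases h with ⟨h, -⟩ | ⟨-, h⟩ <;> simp at h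
  · rw [Sym2.eq_iff] at hx
    simp only [Option.some.injEq] at hx
    exact ⟨x, hx0, hxs, hx⟩

lemma none_adj {β γ : F} {v : Option F}
    (h : (starterFactor (hortonStarter β) γ).Adj none v) : v = some γ := by
  rw [starter_adj] at h
  obtain ⟨-, h | ⟨x, hx0, hxs, hx⟩⟩ := h
  · rw [Sym2.eq_iff] at h
    rcases h with ⟨-, h⟩ | ⟨h, -⟩
    · exact h
    · simp at h
  · rw [Sym2.eq_iff] at hx
    rcases hx with ⟨h, -⟩ | ⟨h, -⟩ <;> simp at h

lemma adj_of_pair {β γ : F} (x : F) (hx0 : x ≠ 0) (hxs : IsSquare x) {U V : F}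
    (hU : U = x + γ) (hV : V = x * β + γ) (hUV : U ≠ V) :
    (starterFactor (hortonStarter β) γ).Adj (some U) (some V) := by
  rw [starter_adj]
  refine ⟨fun h => hUV (Option.some.inj h), Or.inr ⟨x, hx0, hxs, ?_⟩⟩
  rw [hU, hV]

open scoped Classical in
/-- The vertex set of the unique four-cycle in `F_γ ∪ F_δ`. -/
noncomputable def hQuad (β γ δ : F) : Set (Option F) :=
  if IsSquare ((δ - γ) * (β + 1)) then
    {some (γ + (δ - γ) * ((1 - β) * β) / (β * (β + 1))), some (γ + (δ - γ) * ((1 - β) * β ^ 2) / (β * (β + 1))), some (γ + (δ - γ) * ((β - 1)) / (β * (β + 1))), some (γ + (δ - γ) * ((β - 1) * β) / (β * (β + 1)))}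
  else
    {some (γ + (δ - γ) * (2 * β) / (β * (β + 1))), some (γ + (δ - γ) * (2 * β ^ 2) / (β * (β + 1))), some (γ + (δ - γ) * ((β ^ 2 + 1)) / (β * (β + 1))), some (γ + (δ - γ) * ((β ^ 2 + 1) * β) / (β * (β + 1)))}

lemma elt_gen {x γ δ N DD : F} (hD : DD ≠ 0) (h : x * DD = (δ - γ) * N) :
    x + γ = γ + (δ - γ) * N / DD := by
  have hx : x = (δ - γ) * N / DD := by
    rw [eq_div_iff hD]; exact h
  rw [hx]; ring

lemma classI_br {β γ δ x : F} (h2ns : ¬IsSquare (2 : F)) (hd : δ - γ ≠ 0)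
    (hbp1 : β + 1 ≠ 0) (hxs : IsSquare x) (hxv : x * (β + 1) = (δ - γ) * 2) :
    ¬IsSquare ((δ - γ) * (β + 1)) := by
  intro hS
  have h1 : IsSquare (x * (β + 1) ^ 2) := (isSquare_mul_sq_iff hbp1).mpr hxs
  have key : x * (β + 1) ^ 2 = ((δ - γ) * (β + 1)) * 2 := by
    linear_combination (β + 1) * hxv
  rw [key] at h1
  exact mul_sq_nonsq (mul_ne_zero hd hbp1) hS h2ns h1

lemma classII_br {β γ δ x : F} (hm1 : ¬IsSquare (-1 : F)) (hβm1 : ¬IsSquare (β - 1))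
    (hbp1 : β + 1 ≠ 0) (hbm1z : β - 1 ≠ 0) (hxs : IsSquare x)
    (hxv : x * (β + 1) = (δ - γ) * (1 - β)) :
    IsSquare ((δ - γ) * (β + 1)) := by
  have h1 : IsSquare (x * (β + 1) ^ 2) := (isSquare_mul_sq_iff hbp1).mpr hxs
  have hsq1mb : IsSquare (1 - β) := by
    have h : (1 : F) - β = -1 * (β - 1) := by ring
    rw [h]; exact mul_nonsq_nonsq hm1 hβm1
  have h1mbz : (1 : F) - β ≠ 0 := fun h => hbm1z (by linear_combination -h)
  have key : (δ - γ) * (β + 1) = x * (β + 1) ^ 2 * (1 - β)⁻¹ := by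
    rw [eq_mul_inv_iff_mul_eq₀ h1mbz]
    linear_combination (-(β + 1)) * hxv
  rw [key]
  exact h1.mul (isSquare_inv' hsq1mb)

lemma core {β γ δ : F} (hβ : ¬IsSquare β) (hβm1 : ¬IsSquare (β - 1))
    (hβsq : IsSquare (β ^ 2 + 1)) (hβsq0 : β ^ 2 + 1 ≠ 0)
    (hm1 : ¬IsSquare (-1 : F)) (h2ns : ¬IsSquare (2 : F)) (hβn1 : β ≠ -1)
    (hd : δ - γ ≠ 0) {A B C E x x' y y' : F}
    (hxs : IsSquare x) (hx's : IsSquare x')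
    (h1 : A = x + γ ∧ B = x * β + γ ∨ A = x * β + γ ∧ B = x + γ)
    (h2 : C = x' + γ ∧ E = x' * β + γ ∨ C = x' * β + γ ∧ E = x' + γ)
    (h3 : B = y + δ ∧ C = y * β + δ ∨ B = y * β + δ ∧ C = y + δ)
    (h4 : E = y' + δ ∧ A = y' * β + δ ∨ E = y' * β + δ ∧ A = y' + δ)
    (hAC : A ≠ C) :
    ({some A, some B, some C, some E} : Set (Option F)) = hQuad β γ δ := by
  have hb0 : β ≠ 0 := nonsq_ne_zero hβ
  have hbm1z : β - 1 ≠ 0 := nonsq_ne_zero hβm1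
  have h1mbz : (1 : F) - β ≠ 0 := fun h => hbm1z (by linear_combination -h)
  have hbp1 : β + 1 ≠ 0 := fun h => hβn1 (by linear_combination h)
  have h2z : (2 : F) ≠ 0 := fun h => h2ns (by rw [h]; exact ⟨0, by ring⟩)
  have hD : β * (β + 1) ≠ 0 := mul_ne_zero hb0 hbp1
  have hcof1 : β * (β - 1) ≠ 0 := mul_ne_zero hb0 hbm1z
  rcases h1 with ⟨rfl, rfl⟩ | ⟨rfl, rfl⟩ <;> rcases h2 with ⟨rfl, rfl⟩ | ⟨rfl, rfl⟩ <;>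
    rcases h3 with ⟨h3a, h3b⟩ | ⟨h3a, h3b⟩ <;> rcases h4 with ⟨h4a, h4b⟩ | ⟨h4a, h4b⟩
  · -- case (0, 0, 0, 0)
    exfalso
    have h0 : (x - x') * (1 - β ^ 4) = 0 := by
      linear_combination (β + (-1)*β^3) * h3a + ((-1) + β^2) * h3b + ((-1)*β + β^3) * h4a + (1 + (-1)*β^2) * h4b
    have hfz : (1 - β ^ 4 : F) ≠ 0 := by
      intro h
      exact (mul_ne_zero (mul_ne_zero hbm1z hbp1) hβsq0) (by linear_combination -h)
    have hxx : x = x' := by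
      have := (mul_eq_zero.mp h0).resolve_right hfz
      linear_combination this
    exact hAC (by rw [hxx])
  · -- case (0, 0, 0, 1)
    have hx1 : (x * (β * (β + 1)) - (δ - γ) * (β - 1)) * (β - 1) = 0 := by
      linear_combination (β^2) * h3a + ((-1)*β) * h3b + (1) * h4a + ((-1)*β) * h4b
    have hxv : x * (β * (β + 1)) = (δ - γ) * (β - 1) := by
      rcases mul_eq_zero.mp hx1 with h | h
      · linear_combination h
      · exact absurd h hbm1z
    have hx'1 : (x' * (β + 1) - (δ - γ) * (1 - β)) * (β * (β - 1)) = 0 := by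
      linear_combination (β^2) * h3a + ((-1)*β) * h3b + (β^2) * h4a + ((-1)*β^3) * h4b
    have hx'v : x' * (β + 1) = (δ - γ) * (1 - β) := by
      rcases mul_eq_zero.mp hx'1 with h | h
      · linear_combination h
      · exact absurd h hcof1
    have hbr : IsSquare ((δ - γ) * (β + 1)) := classII_br hm1 hβm1 hbp1 hbm1z hx's hx'v
    unfold hQuad
    rw [if_pos hbr]
    rw [show x + γ = γ + (δ - γ) * ((β - 1)) / (β * (β + 1)) from elt_gen hD (by linear_combination (1) * hxv),
        show x * β + γ = γ + (δ - γ) * ((β - 1) * β) / (β * (β + 1)) from elt_gen hD (by linear_combination (β) * hxv),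
        show x' + γ = γ + (δ - γ) * ((1 - β) * β) / (β * (β + 1)) from elt_gen hD (by linear_combination (β) * hx'v),
        show x' * β + γ = γ + (δ - γ) * ((1 - β) * β ^ 2) / (β * (β + 1)) from elt_gen hD (by linear_combination (β ^ 2) * hx'v)]
    all_goals (ext t; simp only [Set.mem_insert_iff, Set.mem_singleton_iff]; tauto)
  · -- case (0, 0, 1, 0)
    have hx1 : (x * (β + 1) - (δ - γ) * (1 - β)) * (β * (β - 1)) = 0 := by
      linear_combination (β^2) * h3a + ((-1)*β^3) * h3b + (β^2) * h4a + ((-1)*β) * h4b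
    have hxv : x * (β + 1) = (δ - γ) * (1 - β) := by
      rcases mul_eq_zero.mp hx1 with h | h
      · linear_combination h
      · exact absurd h hcof1
    have hx'1 : (x' * (β * (β + 1)) - (δ - γ) * (β - 1)) * (β - 1) = 0 := by
      linear_combination (1) * h3a + ((-1)*β) * h3b + (β^2) * h4a + ((-1)*β) * h4b
    have hx'v : x' * (β * (β + 1)) = (δ - γ) * (β - 1) := by
      rcases mul_eq_zero.mp hx'1 with h | h
      · linear_combination h
      · exact absurd h hbm1z
    have hbr : IsSquare ((δ - γ) * (β + 1)) := classII_br hm1 hβm1 hbp1 hbm1z hxs hxv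
    unfold hQuad
    rw [if_pos hbr]
    rw [show x + γ = γ + (δ - γ) * ((1 - β) * β) / (β * (β + 1)) from elt_gen hD (by linear_combination (β) * hxv),
        show x * β + γ = γ + (δ - γ) * ((1 - β) * β ^ 2) / (β * (β + 1)) from elt_gen hD (by linear_combination (β ^ 2) * hxv),
        show x' + γ = γ + (δ - γ) * ((β - 1)) / (β * (β + 1)) from elt_gen hD (by linear_combination (1) * hx'v),
        show x' * β + γ = γ + (δ - γ) * ((β - 1) * β) / (β * (β + 1)) from elt_gen hD (by linear_combination (β) * hx'v)]
    all_goals (ext t; simp only [Set.mem_insert_iff, Set.mem_singleton_iff]; tauto)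
  · -- case (0, 0, 1, 1)
    exfalso
    have h0 : (δ - γ) * (2 * β * (1 - β)) = 0 := by
      linear_combination ((-1)*β) * h3a + (β^2) * h3b + ((-1)*β) * h4a + (β^2) * h4b
    exact (mul_ne_zero hd (mul_ne_zero (mul_ne_zero h2z hb0) h1mbz)) h0
  · -- case (0, 1, 0, 0)
    have hx1 : (x * (β + 1) - (δ - γ) * 2) * (β * (β - 1)) = 0 := by
      linear_combination (β^2) * h3a + ((-1)*β) * h3b + (β^2) * h4a + ((-1)*β) * h4b
    have hxv : x * (β + 1) = (δ - γ) * 2 := by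
      rcases mul_eq_zero.mp hx1 with h | h
      · linear_combination h
      · exact absurd h hcof1
    have hx'1 : (x' * (β * (β + 1)) - (δ - γ) * (β ^ 2 + 1)) * (β - 1) = 0 := by
      linear_combination (β) * h3a + ((-1)) * h3b + (β^3) * h4a + ((-1)*β^2) * h4b
    have hx'v : x' * (β * (β + 1)) = (δ - γ) * (β ^ 2 + 1) := by
      rcases mul_eq_zero.mp hx'1 with h | h
      · linear_combination h
      · exact absurd h hbm1z
    have hbr : ¬ IsSquare ((δ - γ) * (β + 1)) := classI_br h2ns hd hbp1 hxs hxv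
    unfold hQuad
    rw [if_neg hbr]
    rw [show x + γ = γ + (δ - γ) * (2 * β) / (β * (β + 1)) from elt_gen hD (by linear_combination (β) * hxv),
        show x * β + γ = γ + (δ - γ) * (2 * β ^ 2) / (β * (β + 1)) from elt_gen hD (by linear_combination (β ^ 2) * hxv),
        show x' + γ = γ + (δ - γ) * ((β ^ 2 + 1)) / (β * (β + 1)) from elt_gen hD (by linear_combination (1) * hx'v),
        show x' * β + γ = γ + (δ - γ) * ((β ^ 2 + 1) * β) / (β * (β + 1)) from elt_gen hD (by linear_combination (β) * hx'v)]
    all_goals (ext t; simp only [Set.mem_insert_iff, Set.mem_singleton_iff]; tauto)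
  · -- case (0, 1, 0, 1)
    exfalso
    have h0 : (δ - γ) * ((β - 1) ^ 2) = 0 := by
      linear_combination (β) * h3a + ((-1)) * h3b + (β) * h4a + ((-1)*β^2) * h4b
    exact (mul_ne_zero hd (pow_ne_zero 2 hbm1z)) h0
  · -- case (0, 1, 1, 0)
    exfalso
    have h0 : (δ - γ) * (β * (β - 1) ^ 2) = 0 := by
      linear_combination ((-1)*β) * h3a + (β^2) * h3b + ((-1)*β^3) * h4a + (β^2) * h4b
    exact (mul_ne_zero hd (mul_ne_zero hb0 (pow_ne_zero 2 hbm1z))) h0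
  · -- case (0, 1, 1, 1)
    have hx1 : (x * (β * (β + 1)) - (δ - γ) * (β ^ 2 + 1)) * (β - 1) = 0 := by
      linear_combination ((-1)) * h3a + (β) * h3b + ((-1)*β^2) * h4a + (β^3) * h4b
    have hxv : x * (β * (β + 1)) = (δ - γ) * (β ^ 2 + 1) := by
      rcases mul_eq_zero.mp hx1 with h | h
      · linear_combination h
      · exact absurd h hbm1z
    have hx'1 : (x' * (β + 1) - (δ - γ) * 2) * (β * (β - 1)) = 0 := by
      linear_combination ((-1)*β) * h3a + (β^2) * h3b + ((-1)*β) * h4a + (β^2) * h4b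
    have hx'v : x' * (β + 1) = (δ - γ) * 2 := by
      rcases mul_eq_zero.mp hx'1 with h | h
      · linear_combination h
      · exact absurd h hcof1
    have hbr : ¬ IsSquare ((δ - γ) * (β + 1)) := classI_br h2ns hd hbp1 hx's hx'v
    unfold hQuad
    rw [if_neg hbr]
    rw [show x + γ = γ + (δ - γ) * ((β ^ 2 + 1)) / (β * (β + 1)) from elt_gen hD (by linear_combination (1) * hxv),
        show x * β + γ = γ + (δ - γ) * ((β ^ 2 + 1) * β) / (β * (β + 1)) from elt_gen hD (by linear_combination (β) * hxv),
        show x' + γ = γ + (δ - γ) * (2 * β) / (β * (β + 1)) from elt_gen hD (by linear_combination (β) * hx'v),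
        show x' * β + γ = γ + (δ - γ) * (2 * β ^ 2) / (β * (β + 1)) from elt_gen hD (by linear_combination (β ^ 2) * hx'v)]
    all_goals (ext t; simp only [Set.mem_insert_iff, Set.mem_singleton_iff]; tauto)
  · -- case (1, 0, 0, 0)
    have hx1 : (x * (β * (β + 1)) - (δ - γ) * (β ^ 2 + 1)) * (β - 1) = 0 := by
      linear_combination (β^3) * h3a + ((-1)*β^2) * h3b + (β) * h4a + ((-1)) * h4b
    have hxv : x * (β * (β + 1)) = (δ - γ) * (β ^ 2 + 1) := by
      rcases mul_eq_zero.mp hx1 with h | h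
      · linear_combination h
      · exact absurd h hbm1z
    have hx'1 : (x' * (β + 1) - (δ - γ) * 2) * (β * (β - 1)) = 0 := by
      linear_combination (β^2) * h3a + ((-1)*β) * h3b + (β^2) * h4a + ((-1)*β) * h4b
    have hx'v : x' * (β + 1) = (δ - γ) * 2 := by
      rcases mul_eq_zero.mp hx'1 with h | h
      · linear_combination h
      · exact absurd h hcof1
    have hbr : ¬ IsSquare ((δ - γ) * (β + 1)) := classI_br h2ns hd hbp1 hx's hx'v
    unfold hQuad
    rw [if_neg hbr]
    rw [show x + γ = γ + (δ - γ) * ((β ^ 2 + 1)) / (β * (β + 1)) from elt_gen hD (by linear_combination (1) * hxv),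
        show x * β + γ = γ + (δ - γ) * ((β ^ 2 + 1) * β) / (β * (β + 1)) from elt_gen hD (by linear_combination (β) * hxv),
        show x' + γ = γ + (δ - γ) * (2 * β) / (β * (β + 1)) from elt_gen hD (by linear_combination (β) * hx'v),
        show x' * β + γ = γ + (δ - γ) * (2 * β ^ 2) / (β * (β + 1)) from elt_gen hD (by linear_combination (β ^ 2) * hx'v)]
    all_goals (ext t; simp only [Set.mem_insert_iff, Set.mem_singleton_iff]; tauto)
  · -- case (1, 0, 0, 1)
    exfalso
    have h0 : (δ - γ) * ((β - 1) ^ 2) = 0 := by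
      linear_combination ((-1)*β^2) * h3a + (β) * h3b + ((-1)) * h4a + (β) * h4b
    exact (mul_ne_zero hd (pow_ne_zero 2 hbm1z)) h0
  · -- case (1, 0, 1, 0)
    exfalso
    have h0 : (δ - γ) * (β * (β - 1) ^ 2) = 0 := by
      linear_combination (β^2) * h3a + ((-1)*β^3) * h3b + (β^2) * h4a + ((-1)*β) * h4b
    exact (mul_ne_zero hd (mul_ne_zero hb0 (pow_ne_zero 2 hbm1z))) h0
  · -- case (1, 0, 1, 1)
    have hx1 : (x * (β + 1) - (δ - γ) * 2) * (β * (β - 1)) = 0 := by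
      linear_combination ((-1)*β) * h3a + (β^2) * h3b + ((-1)*β) * h4a + (β^2) * h4b
    have hxv : x * (β + 1) = (δ - γ) * 2 := by
      rcases mul_eq_zero.mp hx1 with h | h
      · linear_combination h
      · exact absurd h hcof1
    have hx'1 : (x' * (β * (β + 1)) - (δ - γ) * (β ^ 2 + 1)) * (β - 1) = 0 := by
      linear_combination ((-1)*β^2) * h3a + (β^3) * h3b + ((-1)) * h4a + (β) * h4b
    have hx'v : x' * (β * (β + 1)) = (δ - γ) * (β ^ 2 + 1) := by
      rcases mul_eq_zero.mp hx'1 with h | h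
      · linear_combination h
      · exact absurd h hbm1z
    have hbr : ¬ IsSquare ((δ - γ) * (β + 1)) := classI_br h2ns hd hbp1 hxs hxv
    unfold hQuad
    rw [if_neg hbr]
    rw [show x + γ = γ + (δ - γ) * (2 * β) / (β * (β + 1)) from elt_gen hD (by linear_combination (β) * hxv),
        show x * β + γ = γ + (δ - γ) * (2 * β ^ 2) / (β * (β + 1)) from elt_gen hD (by linear_combination (β ^ 2) * hxv),
        show x' + γ = γ + (δ - γ) * ((β ^ 2 + 1)) / (β * (β + 1)) from elt_gen hD (by linear_combination (1) * hx'v),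
        show x' * β + γ = γ + (δ - γ) * ((β ^ 2 + 1) * β) / (β * (β + 1)) from elt_gen hD (by linear_combination (β) * hx'v)]
    all_goals (ext t; simp only [Set.mem_insert_iff, Set.mem_singleton_iff]; tauto)
  · -- case (1, 1, 0, 0)
    exfalso
    have h0 : (δ - γ) * (2 * β * (1 - β)) = 0 := by
      linear_combination (β^2) * h3a + ((-1)*β) * h3b + (β^2) * h4a + ((-1)*β) * h4b
    exact (mul_ne_zero hd (mul_ne_zero (mul_ne_zero h2z hb0) h1mbz)) h0
  · -- case (1, 1, 0, 1)
    have hx1 : (x * (β * (β + 1)) - (δ - γ) * (β - 1)) * (β - 1) = 0 := by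
      linear_combination ((-1)*β) * h3a + (1) * h3b + ((-1)*β) * h4a + (β^2) * h4b
    have hxv : x * (β * (β + 1)) = (δ - γ) * (β - 1) := by
      rcases mul_eq_zero.mp hx1 with h | h
      · linear_combination h
      · exact absurd h hbm1z
    have hx'1 : (x' * (β + 1) - (δ - γ) * (1 - β)) * (β * (β - 1)) = 0 := by
      linear_combination ((-1)*β^3) * h3a + (β^2) * h3b + ((-1)*β) * h4a + (β^2) * h4b
    have hx'v : x' * (β + 1) = (δ - γ) * (1 - β) := by
      rcases mul_eq_zero.mp hx'1 with h | h
      · linear_combination h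
      · exact absurd h hcof1
    have hbr : IsSquare ((δ - γ) * (β + 1)) := classII_br hm1 hβm1 hbp1 hbm1z hx's hx'v
    unfold hQuad
    rw [if_pos hbr]
    rw [show x + γ = γ + (δ - γ) * ((β - 1)) / (β * (β + 1)) from elt_gen hD (by linear_combination (1) * hxv),
        show x * β + γ = γ + (δ - γ) * ((β - 1) * β) / (β * (β + 1)) from elt_gen hD (by linear_combination (β) * hxv),
        show x' + γ = γ + (δ - γ) * ((1 - β) * β) / (β * (β + 1)) from elt_gen hD (by linear_combination (β) * hx'v),
        show x' * β + γ = γ + (δ - γ) * ((1 - β) * β ^ 2) / (β * (β + 1)) from elt_gen hD (by linear_combination (β ^ 2) * hx'v)]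
    all_goals (ext t; simp only [Set.mem_insert_iff, Set.mem_singleton_iff]; tauto)
  · -- case (1, 1, 1, 0)
    have hx1 : (x * (β + 1) - (δ - γ) * (1 - β)) * (β * (β - 1)) = 0 := by
      linear_combination ((-1)*β) * h3a + (β^2) * h3b + ((-1)*β^3) * h4a + (β^2) * h4b
    have hxv : x * (β + 1) = (δ - γ) * (1 - β) := by
      rcases mul_eq_zero.mp hx1 with h | h
      · linear_combination h
      · exact absurd h hcof1
    have hx'1 : (x' * (β * (β + 1)) - (δ - γ) * (β - 1)) * (β - 1) = 0 := by
      linear_combination ((-1)*β) * h3a + (β^2) * h3b + ((-1)*β) * h4a + (1) * h4b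
    have hx'v : x' * (β * (β + 1)) = (δ - γ) * (β - 1) := by
      rcases mul_eq_zero.mp hx'1 with h | h
      · linear_combination h
      · exact absurd h hbm1z
    have hbr : IsSquare ((δ - γ) * (β + 1)) := classII_br hm1 hβm1 hbp1 hbm1z hxs hxv
    unfold hQuad
    rw [if_pos hbr]
    rw [show x + γ = γ + (δ - γ) * ((1 - β) * β) / (β * (β + 1)) from elt_gen hD (by linear_combination (β) * hxv),
        show x * β + γ = γ + (δ - γ) * ((1 - β) * β ^ 2) / (β * (β + 1)) from elt_gen hD (by linear_combination (β ^ 2) * hxv),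
        show x' + γ = γ + (δ - γ) * ((β - 1)) / (β * (β + 1)) from elt_gen hD (by linear_combination (1) * hx'v),
        show x' * β + γ = γ + (δ - γ) * ((β - 1) * β) / (β * (β + 1)) from elt_gen hD (by linear_combination (β) * hx'v)]
    all_goals (ext t; simp only [Set.mem_insert_iff, Set.mem_singleton_iff]; tauto)
  · -- case (1, 1, 1, 1)
    exfalso
    have h0 : (x - x') * (β ^ 4 - 1) = 0 := by
      linear_combination ((-1) + β^2) * h3a + (β + (-1)*β^3) * h3b + (1 + (-1)*β^2) * h4a + ((-1)*β + β^3) * h4b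
    have hfz : (β ^ 4 - 1 : F) ≠ 0 := by
      intro h
      exact (mul_ne_zero (mul_ne_zero hbm1z hbp1) hβsq0) (by linear_combination h)
    have hxx : x = x' := by
      have := (mul_eq_zero.mp h0).resolve_right hfz
      linear_combination this
    exact hAC (by rw [hxx])

lemma infty_case {β γ δ : F} (hβ : ¬IsSquare β) (hβm1 : ¬IsSquare (β - 1))
    (hm1 : ¬IsSquare (-1 : F)) (hd : δ - γ ≠ 0) {M : F}
    (h1 : (starterFactor (hortonStarter β) γ).Adj (some δ) (some M))
    (h2 : (starterFactor (hortonStarter β) δ).Adj (some γ) (some M)) : False := by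
  have hb0 : β ≠ 0 := nonsq_ne_zero hβ
  obtain ⟨x, hx0, hxs, h1⟩ := pair_of_adj h1
  obtain ⟨y, hy0, hys, h2⟩ := pair_of_adj h2
  rcases h1 with ⟨h1a, h1b⟩ | ⟨h1a, h1b⟩ <;> rcases h2 with ⟨h2a, h2b⟩ | ⟨h2a, h2b⟩
  · have hyx : y = -x := by linear_combination -h2a - h1a
    rw [hyx] at hys
    exact not_sq_neg_of_sq hm1 hx0 hxs hys
  · have hq : (δ - γ) * (β ^ 2 - β + 1) = 0 := by
      linear_combination (β ^ 2) * h1a + (-β) * h1b + (-1) * h2a + β * h2b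
    have hq2 : β ^ 2 - β + 1 = 0 := (mul_eq_zero.mp hq).resolve_left hd
    exact hβm1 ⟨β, by linear_combination -hq2⟩
  · have hq : (δ - γ) * (β ^ 2 - β + 1) = 0 := by
      linear_combination (1 : F) * h1a + (-β) * h1b + (-β ^ 2) * h2a + β * h2b
    have hq2 : β ^ 2 - β + 1 = 0 := (mul_eq_zero.mp hq).resolve_left hd
    exact hβm1 ⟨β, by linear_combination -hq2⟩
  · have hyb : y * β = (-x) * β := by linear_combination -h2a - h1a
    have hyx : y = -x := mul_right_cancel₀ hb0 hyb
    rw [hyx] at hys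
    exact not_sq_neg_of_sq hm1 hx0 hxs hys

lemma exist {β γ δ : F} (hβ : ¬IsSquare β) (hβm1 : ¬IsSquare (β - 1))
    (hβsq : IsSquare (β ^ 2 + 1)) (hβsq0 : β ^ 2 + 1 ≠ 0)
    (hm1 : ¬IsSquare (-1 : F)) (h2ns : ¬IsSquare (2 : F)) (hβn1 : β ≠ -1)
    (hd : δ - γ ≠ 0) :
    IsFourCycleOn (starterFactor (hortonStarter β) γ ⊔ starterFactor (hortonStarter β) δ)
      (hQuad β γ δ) := by
  have hb0 : β ≠ 0 := nonsq_ne_zero hβ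
  have hbm1z : β - 1 ≠ 0 := nonsq_ne_zero hβm1
  have h1mbz : (1 : F) - β ≠ 0 := fun h => hbm1z (by linear_combination -h)
  have hbp1 : β + 1 ≠ 0 := fun h => hβn1 (by linear_combination h)
  have h2z : (2 : F) ≠ 0 := fun h => h2ns (by rw [h]; exact ⟨0, by ring⟩)
  have hD : β * (β + 1) ≠ 0 := mul_ne_zero hb0 hbp1
  have hd' : γ - δ ≠ 0 := fun h => hd (by linear_combination -h)
  have hsq1mb : IsSquare (1 - β) := by
    have h : (1 : F) - β = -1 * (β - 1) := by ring
    rw [h]; exact mul_nonsq_nonsq hm1 hβm1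
  have hsqb2 : IsSquare (β ^ 2) := ⟨β, by ring⟩
  by_cases hS : IsSquare ((δ - γ) * (β + 1))
  · -- class II
    have hn12 : γ + (δ - γ) * ((1 - β) * β) / (β * (β + 1)) ≠ γ + (δ - γ) * ((1 - β) * β ^ 2) / (β * (β + 1)) :=
      elt_ne' hD (fun h => (mul_ne_zero hd (mul_ne_zero hb0 (pow_ne_zero 2 h1mbz))) (by linear_combination h))
    have hn13 : γ + (δ - γ) * ((1 - β) * β) / (β * (β + 1)) ≠ γ + (δ - γ) * ((β - 1)) / (β * (β + 1)) :=
      elt_ne' hD (fun h => (mul_ne_zero hd (mul_ne_zero hbm1z hbp1)) (by linear_combination -h))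
    have hn14 : γ + (δ - γ) * ((1 - β) * β) / (β * (β + 1)) ≠ γ + (δ - γ) * ((β - 1) * β) / (β * (β + 1)) :=
      elt_ne' hD (fun h => (mul_ne_zero hd (mul_ne_zero (mul_ne_zero h2z hb0) hbm1z)) (by linear_combination -h))
    have hn23 : γ + (δ - γ) * ((1 - β) * β ^ 2) / (β * (β + 1)) ≠ γ + (δ - γ) * ((β - 1)) / (β * (β + 1)) :=
      elt_ne' hD (fun h => (mul_ne_zero hd (mul_ne_zero hbm1z hβsq0)) (by linear_combination -h))
    have hn24 : γ + (δ - γ) * ((1 - β) * β ^ 2) / (β * (β + 1)) ≠ γ + (δ - γ) * ((β - 1) * β) / (β * (β + 1)) :=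
      elt_ne' hD (fun h => (mul_ne_zero hd (mul_ne_zero (mul_ne_zero hb0 hbm1z) hbp1)) (by linear_combination -h))
    have hn34 : γ + (δ - γ) * ((β - 1)) / (β * (β + 1)) ≠ γ + (δ - γ) * ((β - 1) * β) / (β * (β + 1)) :=
      elt_ne' hD (fun h => (mul_ne_zero hd (mul_ne_zero hbm1z h1mbz)) (by linear_combination h))
    have hn32 := hn23.symm
    have hn41 := hn14.symm
    have hxsq : IsSquare ((δ - γ) * ((1 - β) * β) / (β * (β + 1))) := by
      have key : ((δ - γ) * ((1 - β) * β) / (β * (β + 1))) * (β * (β + 1)) ^ 2 = ((δ - γ) * (β + 1)) * (1 - β) * β ^ 2 := by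
        field_simp
      have hs2 : IsSquare (((δ - γ) * (β + 1)) * (1 - β) * β ^ 2) := (hS.mul hsq1mb).mul hsqb2
      rw [← key] at hs2
      exact (isSquare_mul_sq_iff hD).mp hs2

    have hxpsq : IsSquare ((δ - γ) * ((β - 1)) / (β * (β + 1))) := by
      have key : ((δ - γ) * ((β - 1)) / (β * (β + 1))) * (β * (β + 1)) ^ 2 = ((δ - γ) * (β + 1)) * ((β - 1) * β) := by
        field_simp
      have hs2 : IsSquare (((δ - γ) * (β + 1)) * ((β - 1) * β)) := hS.mul (mul_nonsq_nonsq hβm1 hβ)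
      rw [← key] at hs2
      exact (isSquare_mul_sq_iff hD).mp hs2

    have hysq : IsSquare ((γ - δ) * (β ^ 2 + 1) / (β * (β + 1))) := by
      have key : ((γ - δ) * (β ^ 2 + 1) / (β * (β + 1))) * (β * (β + 1)) ^ 2 = ((δ - γ) * (β + 1)) * (-1 * β) * (β ^ 2 + 1) := by
        field_simp
        ring
      have hs2 : IsSquare (((δ - γ) * (β + 1)) * (-1 * β) * (β ^ 2 + 1)) := (hS.mul (mul_nonsq_nonsq hm1 hβ)).mul hβsq
      rw [← key] at hs2
      exact (isSquare_mul_sq_iff hD).mp hs2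

    have hypsq : IsSquare ((γ - δ) * (2 * β) / (β * (β + 1))) := by
      have key : ((γ - δ) * (2 * β) / (β * (β + 1))) * (β * (β + 1)) ^ 2 = ((δ - γ) * (β + 1)) * (-1 * 2) * β ^ 2 := by
        field_simp
        ring
      have hs2 : IsSquare (((δ - γ) * (β + 1)) * (-1 * 2) * β ^ 2) := (hS.mul (mul_nonsq_nonsq hm1 h2ns)).mul hsqb2
      rw [← key] at hs2
      exact (isSquare_mul_sq_iff hD).mp hs2

    have hx0 : ((δ - γ) * ((1 - β) * β) / (β * (β + 1))) ≠ 0 := div_ne_zero (mul_ne_zero hd (mul_ne_zero h1mbz hb0)) hD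
    have hxp0 : ((δ - γ) * ((β - 1)) / (β * (β + 1))) ≠ 0 := div_ne_zero (mul_ne_zero hd hbm1z) hD
    have hy0 : ((γ - δ) * (β ^ 2 + 1) / (β * (β + 1))) ≠ 0 := div_ne_zero (mul_ne_zero hd' hβsq0) hD
    have hyp0 : ((γ - δ) * (2 * β) / (β * (β + 1))) ≠ 0 := div_ne_zero (mul_ne_zero hd' (mul_ne_zero h2z hb0)) hD
    refine ⟨some (γ + (δ - γ) * ((1 - β) * β) / (β * (β + 1))), some (γ + (δ - γ) * ((1 - β) * β ^ 2) / (β * (β + 1))), some (γ + (δ - γ) * ((β - 1)) / (β * (β + 1))), some (γ + (δ - γ) * ((β - 1) * β) / (β * (β + 1))),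
        fun h => hn12 (Option.some.inj h), fun h => hn13 (Option.some.inj h),
        fun h => hn14 (Option.some.inj h), fun h => hn23 (Option.some.inj h),
        fun h => hn24 (Option.some.inj h), fun h => hn34 (Option.some.inj h),
        by unfold hQuad; rw [if_pos hS],
        Or.inl (adj_of_pair _ hx0 hxsq (by ring) (by ring) hn12),
        Or.inr ((adj_of_pair _ hy0 hysq (by field_simp; ring) (by field_simp; ring) hn32).symm),
        Or.inl (adj_of_pair _ hxp0 hxpsq (by ring) (by ring) hn34),
        Or.inr (adj_of_pair _ hyp0 hypsq (by field_simp; ring) (by field_simp; ring) hn41)⟩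
  · -- class I
    have hn12 : γ + (δ - γ) * (2 * β) / (β * (β + 1)) ≠ γ + (δ - γ) * (2 * β ^ 2) / (β * (β + 1)) :=
      elt_ne' hD (fun h => (mul_ne_zero hd (mul_ne_zero (mul_ne_zero h2z hb0) h1mbz)) (by linear_combination h))
    have hn13 : γ + (δ - γ) * (2 * β) / (β * (β + 1)) ≠ γ + (δ - γ) * ((β ^ 2 + 1)) / (β * (β + 1)) :=
      elt_ne' hD (fun h => (mul_ne_zero hd (pow_ne_zero 2 hbm1z)) (by linear_combination -h))
    have hn14 : γ + (δ - γ) * (2 * β) / (β * (β + 1)) ≠ γ + (δ - γ) * ((β ^ 2 + 1) * β) / (β * (β + 1)) :=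
      elt_ne' hD (fun h => (mul_ne_zero hd (mul_ne_zero (mul_ne_zero hb0 hbm1z) hbp1)) (by linear_combination -h))
    have hn23 : γ + (δ - γ) * (2 * β ^ 2) / (β * (β + 1)) ≠ γ + (δ - γ) * ((β ^ 2 + 1)) / (β * (β + 1)) :=
      elt_ne' hD (fun h => (mul_ne_zero hd (mul_ne_zero hbm1z hbp1)) (by linear_combination h))
    have hn24 : γ + (δ - γ) * (2 * β ^ 2) / (β * (β + 1)) ≠ γ + (δ - γ) * ((β ^ 2 + 1) * β) / (β * (β + 1)) :=
      elt_ne' hD (fun h => (mul_ne_zero hd (mul_ne_zero hb0 (pow_ne_zero 2 hbm1z))) (by linear_combination -h))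
    have hn34 : γ + (δ - γ) * ((β ^ 2 + 1)) / (β * (β + 1)) ≠ γ + (δ - γ) * ((β ^ 2 + 1) * β) / (β * (β + 1)) :=
      elt_ne' hD (fun h => (mul_ne_zero hd (mul_ne_zero hβsq0 h1mbz)) (by linear_combination h))
    have hn31 := hn13.symm
    have hxsq : IsSquare ((δ - γ) * (2 * β) / (β * (β + 1))) := by
      have key : ((δ - γ) * (2 * β) / (β * (β + 1))) * (β * (β + 1)) ^ 2 = ((δ - γ) * (β + 1)) * 2 * β ^ 2 := by
        field_simp
      have hs2 : IsSquare (((δ - γ) * (β + 1)) * 2 * β ^ 2) := (mul_nonsq_nonsq hS h2ns).mul hsqb2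
      rw [← key] at hs2
      exact (isSquare_mul_sq_iff hD).mp hs2

    have hxpsq : IsSquare ((δ - γ) * ((β ^ 2 + 1)) / (β * (β + 1))) := by
      have key : ((δ - γ) * ((β ^ 2 + 1)) / (β * (β + 1))) * (β * (β + 1)) ^ 2 = ((δ - γ) * (β + 1)) * β * (β ^ 2 + 1) := by
        field_simp
      have hs2 : IsSquare (((δ - γ) * (β + 1)) * β * (β ^ 2 + 1)) := (mul_nonsq_nonsq hS hβ).mul hβsq
      rw [← key] at hs2
      exact (isSquare_mul_sq_iff hD).mp hs2

    have hysq : IsSquare ((γ - δ) * (β - 1) / (β * (β + 1))) := by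
      have key : ((γ - δ) * (β - 1) / (β * (β + 1))) * (β * (β + 1)) ^ 2 = ((δ - γ) * (β + 1)) * (-1 * ((β - 1) * β)) := by
        field_simp
        ring
      have hs2 : IsSquare (((δ - γ) * (β + 1)) * (-1 * ((β - 1) * β))) := mul_nonsq_nonsq hS (mul_nonsq_sq hm1 (mul_ne_zero hbm1z hb0) (mul_nonsq_nonsq hβm1 hβ))
      rw [← key] at hs2
      exact (isSquare_mul_sq_iff hD).mp hs2

    have hypsq : IsSquare ((δ - γ) * ((β - 1) * β) / (β * (β + 1))) := by
      have key : ((δ - γ) * ((β - 1) * β) / (β * (β + 1))) * (β * (β + 1)) ^ 2 = ((δ - γ) * (β + 1)) * ((β - 1) * β ^ 2) := by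
        field_simp
      have hs2 : IsSquare (((δ - γ) * (β + 1)) * ((β - 1) * β ^ 2)) := mul_nonsq_nonsq hS (mul_nonsq_sq hβm1 (pow_ne_zero 2 hb0) hsqb2)
      rw [← key] at hs2
      exact (isSquare_mul_sq_iff hD).mp hs2

    have hx0 : ((δ - γ) * (2 * β) / (β * (β + 1))) ≠ 0 := div_ne_zero (mul_ne_zero hd (mul_ne_zero h2z hb0)) hD
    have hxp0 : ((δ - γ) * ((β ^ 2 + 1)) / (β * (β + 1))) ≠ 0 := div_ne_zero (mul_ne_zero hd hβsq0) hD
    have hy0 : ((γ - δ) * (β - 1) / (β * (β + 1))) ≠ 0 := div_ne_zero (mul_ne_zero hd' hbm1z) hD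
    have hyp0 : ((δ - γ) * ((β - 1) * β) / (β * (β + 1))) ≠ 0 := div_ne_zero (mul_ne_zero hd (mul_ne_zero hbm1z hb0)) hD
    refine ⟨some (γ + (δ - γ) * (2 * β) / (β * (β + 1))), some (γ + (δ - γ) * (2 * β ^ 2) / (β * (β + 1))), some (γ + (δ - γ) * ((β ^ 2 + 1) * β) / (β * (β + 1))), some (γ + (δ - γ) * ((β ^ 2 + 1)) / (β * (β + 1))),
        fun h => hn12 (Option.some.inj h), fun h => hn14 (Option.some.inj h),
        fun h => hn13 (Option.some.inj h), fun h => hn24 (Option.some.inj h),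
        fun h => hn23 (Option.some.inj h), fun h => (hn34 (Option.some.inj h).symm),
        by unfold hQuad; rw [if_neg hS]; ext t; simp only [Set.mem_insert_iff, Set.mem_singleton_iff]; tauto,
        Or.inl (adj_of_pair _ hx0 hxsq (by ring) (by ring) hn12),
        Or.inr (adj_of_pair _ hyp0 hypsq (by field_simp; ring) (by field_simp; ring) hn24),
        Or.inl ((adj_of_pair _ hxp0 hxpsq (by ring) (by ring) hn34).symm),
        Or.inr (adj_of_pair _ hy0 hysq (by field_simp; ring) (by field_simp; ring) hn31)⟩

lemma uniq' {β γ δ : F} (hβ : ¬IsSquare β) (hβm1 : ¬IsSquare (β - 1))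
    (hβsq : IsSquare (β ^ 2 + 1)) (hβsq0 : β ^ 2 + 1 ≠ 0)
    (hm1 : ¬IsSquare (-1 : F)) (h2ns : ¬IsSquare (2 : F)) (hβn1 : β ≠ -1)
    (hd : δ - γ ≠ 0) {a b c e : Option F}
    (hab : (starterFactor (hortonStarter β) γ).Adj a b)
    (hbc : (starterFactor (hortonStarter β) δ).Adj b c)
    (hce : (starterFactor (hortonStarter β) γ).Adj c e)
    (hea : (starterFactor (hortonStarter β) δ).Adj e a)
    (hac : a ≠ c) :
    ({a, b, c, e} : Set (Option F)) = hQuad β γ δ := by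
  have hγδ : γ ≠ δ := fun h => hd (by rw [h]; ring)
  rcases a with _ | A
  · have hb : b = some γ := none_adj hab
    have he : e = some δ := none_adj hea.symm
    subst hb he
    rcases c with _ | C
    · have h := none_adj hbc.symm
      simp only [Option.some.injEq] at h
      exact absurd h hγδ
    · exact absurd (infty_case hβ hβm1 hm1 hd hce.symm hbc) not_false
  rcases b with _ | B
  · have ha' : some A = some γ := none_adj hab.symm
    have hc : c = some δ := none_adj hbc
    subst hc
    simp only [Option.some.injEq] at ha'
    subst ha'
    rcases e with _ | E
    · have h := none_adj hce.symm
      simp only [Option.some.injEq] at h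
      exact absurd h.symm hγδ
    · exact absurd (infty_case hβ hβm1 hm1 hd hce hea.symm) not_false
  rcases c with _ | C
  · have hb' : some B = some δ := none_adj hbc.symm
    have he : e = some γ := none_adj hce
    subst he
    simp only [Option.some.injEq] at hb'
    subst hb'
    exact absurd (infty_case hβ hβm1 hm1 hd hab.symm hea) not_false
  rcases e with _ | E
  · have hc' : some C = some γ := none_adj hce.symm
    have ha : some A = some δ := none_adj hea
    simp only [Option.some.injEq] at hc' ha
    subst hc' ha
    exact absurd (infty_case hβ hβm1 hm1 hd hab hbc.symm) not_false
  obtain ⟨x, hx0, hxs, h1⟩ := pair_of_adj hab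
  obtain ⟨x', hx'0, hx's, h2⟩ := pair_of_adj hce
  obtain ⟨y, hy0, hys, h3⟩ := pair_of_adj hbc
  obtain ⟨y', hy'0, hy's, h4⟩ := pair_of_adj hea
  exact core hβ hβm1 hβsq hβsq0 hm1 h2ns hβn1 hd hxs hx's h1 h2 h3 h4
    (fun h => hac (by rw [h]))

lemma cycles_eq {β : F} (hβ : ¬IsSquare β) (hβm1 : ¬IsSquare (β - 1))
    (hβsq : IsSquare (β ^ 2 + 1)) (hβsq0 : β ^ 2 + 1 ≠ 0)
    (hm1 : ¬IsSquare (-1 : F)) (h2ns : ¬IsSquare (2 : F)) (hβn1 : β ≠ -1)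
    {γ δ : F} (hd : δ - γ ≠ 0) :
    {s : Set (Option F) | IsFourCycleOn (starterFactor (hortonStarter β) γ ⊔
        starterFactor (hortonStarter β) δ) s} = {hQuad β γ δ} := by
  apply Set.eq_singleton_iff_unique_mem.mpr
  constructor
  · exact exist hβ hβm1 hβsq hβsq0 hm1 h2ns hβn1 hd
  · rintro s ⟨a, b, c, d, hab, hac, had, hbc, hbd, hcd, rfl, h1, h2, h3, h4⟩
    rw [SimpleGraph.sup_adj] at h1 h2 h3 h4
    rcases h1 with h1 | h1
    · have h2' : (starterFactor (hortonStarter β) δ).Adj b c := by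
        rcases h2 with h | h
        · exact absurd (starter_matching hβ γ h1.symm h) hac
        · exact h
      have h3' : (starterFactor (hortonStarter β) γ).Adj c d := by
        rcases h3 with h | h
        · exact h
        · exact absurd (starter_matching hβ δ h2'.symm h) hbd
      have h4' : (starterFactor (hortonStarter β) δ).Adj d a := by
        rcases h4 with h | h
        · exact absurd (starter_matching hβ γ h3'.symm h) (fun hh => hac hh.symm)
        · exact h
      exact uniq' hβ hβm1 hβsq hβsq0 hm1 h2ns hβn1 hd h1 h2' h3' h4' hac
    · have h2' : (starterFactor (hortonStarter β) γ).Adj b c := by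
        rcases h2 with h | h
        · exact h
        · exact absurd (starter_matching hβ δ h1.symm h) hac
      have h3' : (starterFactor (hortonStarter β) δ).Adj c d := by
        rcases h3 with h | h
        · exact absurd (starter_matching hβ γ h2'.symm h) hbd
        · exact h
      have h4' : (starterFactor (hortonStarter β) γ).Adj d a := by
        rcases h4 with h | h
        · exact h
        · exact absurd (starter_matching hβ δ h3'.symm h) (fun hh => hac hh.symm)
      have key := uniq' hβ hβm1 hβsq hβsq0 hm1 h2ns hβn1 hd h2' h3' h4' h1 hbd
      rw [← key]
      ext t
      simp only [Set.mem_insert_iff, Set.mem_singleton_iff]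
      tauto

end Support

/-- Let `q ≡ 3 (mod 8)` be an odd prime power with `q ≡ -1 (mod 12)`.
If `β ∈ NQR(q) \ {-1}` satisfies `β - 1 ∈ NQR(q)` and `β² + 1 ∈ QR(q)`, then the
one-factorization generated by the starter `S_β` is `(1, C₄)`: the union of any two
distinct one-factors contains exactly one cycle of length four. -/
theorem statement_8 {F : Type*} [Field F] [Fintype F] (q : ℕ)
    (hcard : Fintype.card F = q) (hq8 : q % 8 = 3) (hq12 : q % 12 = 11)
    (β : F) (hβ : ¬ IsSquare β) (hβ1 : β ≠ -1)
    (hβm1 : ¬ IsSquare (β - 1)) (hβsq : β ^ 2 + 1 ∈ QRset F) :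
    ∀ γ δ : F, γ ≠ δ →
      fourCycleCount (starterFactor (hortonStarter β) γ ⊔ starterFactor (hortonStarter β) δ) = 1 := by
  classical
  intro γ δ hγδ
  have hβsq0 : β ^ 2 + 1 ≠ 0 := hβsq.1
  have hβsqS : IsSquare (β ^ 2 + 1) := hβsq.2
  have hm1 : ¬IsSquare (-1 : F) := by
    rw [FiniteField.isSquare_neg_one_iff, hcard]
    omega
  have h2ns : ¬IsSquare (2 : F) := by
    rw [FiniteField.isSquare_two_iff, hcard]
    omega
  have hd : δ - γ ≠ 0 := sub_ne_zero.mpr (fun h => hγδ h.symm)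
  unfold fourCycleCount
  rw [cycles_eq hβ hβm1 hβsqS hβsq0 hm1 h2ns hβ1 hd]
  exact Set.ncard_singleton _

end Paper
end

section
/- Let q ≡ 3 (mod 8) be an odd prime power and let β ∈ NQR(q)\{−1} with β ∉ {2, 2⁻¹}. Let 𝓕 = {F_γ : γ ∈ F_q} be the one-factorization of the complete graph on F_q ∪ {∞} generated by the starter S_β = {{x, xβ} : x ∈ QR(q)}, and let 𝓖 = {G_γ : γ ∈ F_q} be the one-factorization generated by the starter −S_β = {{y, yβ} : y ∈ NQR(q)}. Then for every F ∈ 𝓕 and G ∈ 𝓖, the union F ∪ G contains no cycle C of length four with ∞ ∈ V(C). -/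
open SimpleGraph

namespace Paper

variable {V : Type*} {Γ : Type*} {F : Type*}

lemma ns_mul_ns {F : Type*} [Field F] [Fintype F] {a b : F}
    (ha : ¬ IsSquare a) (hb : ¬ IsSquare b) : IsSquare (a * b) := by
  classical
  have ha0 : a ≠ 0 := fun h => ha (h ▸ ⟨0, by simp⟩)
  have hb0 : b ≠ 0 := fun h => hb (h ▸ ⟨0, by simp⟩)
  have h1 : quadraticChar F a = -1 := quadraticChar_neg_one_iff_not_isSquare.mpr ha
  have h2 : quadraticChar F b = -1 := quadraticChar_neg_one_iff_not_isSquare.mpr hb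
  have h3 : quadraticChar F (a * b) = 1 := by rw [map_mul, h1, h2]; ring
  exact (quadraticChar_one_iff_isSquare (mul_ne_zero ha0 hb0)).mp h3

lemma starterFactor_adj_none {Γ : Type*} [AddCommGroup Γ] {S : Set (Sym2 Γ)} {γ : Γ}
    {v : Option Γ} (h : (starterFactor S γ).Adj none v) : v = some γ := by
  rw [starterFactor, fromEdgeSet_adj] at h
  obtain ⟨hmem, -⟩ := h
  rcases hmem with h | ⟨e, -, heq⟩
  · rw [Set.mem_singleton_iff, Sym2.eq_iff] at h
    rcases h with ⟨-, h⟩ | ⟨h, -⟩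
    · exact h
    · exact absurd h (by simp)
  · exfalso
    have hn : (none : Option Γ) ∈ Sym2.map (fun x => some (x + γ)) e := by
      rw [heq]; exact Sym2.mem_mk_left _ _
    rw [Sym2.mem_map] at hn
    obtain ⟨b, -, hb⟩ := hn
    exact Option.some_ne_none _ hb

lemma starterFactor_adj_some {Γ : Type*} [AddCommGroup Γ] {S : Set (Sym2 Γ)} {γ : Γ}
    {u v : Γ} (h : (starterFactor S γ).Adj (some u) (some v)) : s(u - γ, v - γ) ∈ S := by
  rw [starterFactor, fromEdgeSet_adj] at h
  obtain ⟨hmem, -⟩ := h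
  rcases hmem with h | ⟨e, heS, heq⟩
  · rw [Set.mem_singleton_iff, Sym2.eq_iff] at h
    rcases h with ⟨h, -⟩ | ⟨-, h⟩ <;> exact absurd h (by simp)
  · induction e using Sym2.ind with
    | _ a b =>
      rw [Sym2.map_pair_eq, Sym2.eq_iff] at heq
      rcases heq with ⟨h1, h2⟩ | ⟨h1, h2⟩ <;>
        replace h1 := Option.some.inj h1 <;> replace h2 := Option.some.inj h2
      · have e1 : u - γ = a := by rw [← h1, add_sub_cancel_right]
        have e2 : v - γ = b := by rw [← h2, add_sub_cancel_right]
        rwa [e1, e2]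
      · have e1 : u - γ = b := by rw [← h2, add_sub_cancel_right]
        have e2 : v - γ = a := by rw [← h1, add_sub_cancel_right]
        rw [e1, e2, Sym2.eq_swap]
        exact heS

lemma statement11_key {F : Type*} [Field F] [Fintype F] (q : ℕ)
    (hcard : Fintype.card F = q) (hq8 : q % 8 = 3)
    (β : F) (hβ : ¬ IsSquare β) (hβ2 : β ≠ 2) (hβ2' : β ≠ 2⁻¹)
    {γ δ z : F} (hγδ : γ ≠ δ)
    (h1 : (starterFactor (hortonStarter β) γ ⊔
        starterFactor (hortonNegStarter β) δ).Adj (some γ) (some z))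
    (h2 : (starterFactor (hortonStarter β) γ ⊔
        starterFactor (hortonNegStarter β) δ).Adj (some δ) (some z)) :
    False := by
  have hβ0 : β ≠ 0 := fun h => hβ (h ▸ ⟨0, by simp⟩)
  have hchar : ringChar F ≠ 2 := by
    intro h
    have he := FiniteField.even_card_of_char_two h
    rw [hcard] at he
    omega
  have hneg1 : ¬ IsSquare (-1 : F) := by
    simp only [FiniteField.isSquare_neg_one_iff, hcard]
    omega
  rw [sup_adj] at h1 h2
  have hGadj : s(γ - δ, z - δ) ∈ hortonNegStarter β := by
    rcases h1 with h | h
    · exfalso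
      obtain ⟨x, hx0, -, hxe⟩ := starterFactor_adj_some h
      rw [Sym2.eq_iff] at hxe
      rcases hxe with ⟨hxa, -⟩ | ⟨hxa, -⟩
      · exact hx0 (hxa.symm.trans (sub_self γ))
      · rcases mul_eq_zero.mp (hxa.symm.trans (sub_self γ)) with h' | h'
        exacts [hx0 h', hβ0 h']
    · exact starterFactor_adj_some h
  have hFadj : s(δ - γ, z - γ) ∈ hortonStarter β := by
    rcases h2 with h | h
    · exact starterFactor_adj_some h
    · exfalso
      obtain ⟨y, hyns, hye⟩ := starterFactor_adj_some h
      rw [Sym2.eq_iff] at hye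
      rcases hye with ⟨hya, -⟩ | ⟨hya, -⟩
      · exact hyns ((hya.symm.trans (sub_self δ)) ▸ ⟨0, by simp⟩)
      · rcases mul_eq_zero.mp (hya.symm.trans (sub_self δ)) with h' | h'
        · exact hyns (h' ▸ ⟨0, by simp⟩)
        · exact hβ0 h'
  obtain ⟨x, hx0, hxsq, hxe⟩ := hFadj
  obtain ⟨y, hyns, hye⟩ := hGadj
  rw [Sym2.eq_iff] at hxe hye
  have hnb : IsSquare (-β : F) := by
    have h := ns_mul_ns hneg1 hβ; rwa [neg_one_mul] at h
  have hβinv : ¬ IsSquare (β⁻¹ : F) := by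
    rintro ⟨r, hr⟩
    exact hβ ⟨r⁻¹, by rw [← inv_inv β, hr, mul_inv]⟩
  have hnbinv : IsSquare (-β⁻¹ : F) := by
    have h := ns_mul_ns hneg1 hβinv; rwa [neg_one_mul] at h
  rcases hxe with ⟨hA1, hA2⟩ | ⟨hB1, hB2⟩ <;> rcases hye with ⟨hC1, hC2⟩ | ⟨hD1, hD2⟩
  · -- δ-γ = x, z-γ = xβ, γ-δ = y, z-δ = yβ
    have hyx : y = -x := by linear_combination -hC1 - hA1
    subst hyx
    have h2b : x * (2 * β) = x * 1 := by linear_combination hC2 - hA2 + hA1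
    exact hβ2' (eq_inv_of_mul_eq_one_right (mul_left_cancel₀ hx0 h2b))
  · -- δ-γ = x, γ-δ = yβ, z-δ = y
    have hy : y = x * -β⁻¹ := by
      have hyb : y * β = -x := by linear_combination -hD1 - hA1
      field_simp
      linear_combination hyb
    exact hyns (hy ▸ hxsq.mul hnbinv)
  · -- δ-γ = xβ, z-γ = x, γ-δ = y
    have hy : y = x * -β := by linear_combination -hC1 - hB1
    exact hyns (hy ▸ hxsq.mul hnb)
  · -- δ-γ = xβ, z-γ = x, γ-δ = yβ, z-δ = y
    have hyx : y * β = -x * β := by linear_combination -hD1 - hB1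
    have hy : y = -x := mul_right_cancel₀ hβ0 hyx
    subst hy
    have h2b : x * β = x * 2 := by linear_combination hB2 - hD2 - hB1
    exact hβ2 (mul_left_cancel₀ hx0 h2b)

/-- Let `q ≡ 3 (mod 8)` be an odd prime power and let
`β ∈ NQR(q) \ {-1}` with `β ∉ {2, 2⁻¹}`. Then for any one-factor `F_γ` of the
one-factorization generated by `S_β` and any one-factor `G_δ` of the
one-factorization generated by `-S_β`, the union `F_γ ∪ G_δ` contains no cycle `C`
of length four with `∞ ∈ V(C)`. -/
theorem statement_11 {F : Type*} [Field F] [Fintype F] (q : ℕ)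
    (hcard : Fintype.card F = q) (hq8 : q % 8 = 3)
    (β : F) (hβ : ¬ IsSquare β) (hβ1 : β ≠ -1) (hβ2 : β ≠ 2) (hβ2' : β ≠ 2⁻¹) :
    ∀ γ δ : F, ∀ s : Set (Option F),
      IsFourCycleOn
        (starterFactor (hortonStarter β) γ ⊔ starterFactor (hortonNegStarter β) δ) s →
      none ∉ s := by
  intro γ δ s hcyc hns
  obtain ⟨a, b, c, d, hab, hac, had, hbc, hbd, hcd, hs, A1, A2, A3, A4⟩ := hcyc
  have hadj_none : ∀ v, (starterFactor (hortonStarter β) γ ⊔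
      starterFactor (hortonNegStarter β) δ).Adj none v → v = some γ ∨ v = some δ := by
    intro v hv
    rw [sup_adj] at hv
    rcases hv with h | h
    · exact Or.inl (starterFactor_adj_none h)
    · exact Or.inr (starterFactor_adj_none h)
  have key : ∀ p p' r : Option F, p ≠ p' → r ≠ none →
      (starterFactor (hortonStarter β) γ ⊔ starterFactor (hortonNegStarter β) δ).Adj none p →
      (starterFactor (hortonStarter β) γ ⊔ starterFactor (hortonNegStarter β) δ).Adj none p' →
      (starterFactor (hortonStarter β) γ ⊔ starterFactor (hortonNegStarter β) δ).Adj p r →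
      (starterFactor (hortonStarter β) γ ⊔ starterFactor (hortonNegStarter β) δ).Adj p' r →
      False := by
    intro p p' r hpp hr hnp hnp' hpr hp'r
    obtain ⟨z, rfl⟩ := Option.ne_none_iff_exists'.mp hr
    rcases hadj_none p hnp with rfl | rfl <;> rcases hadj_none p' hnp' with rfl | rfl
    · exact hpp rfl
    · have hγδ : γ ≠ δ := fun h => hpp (by rw [h])
      exact statement11_key q hcard hq8 β hβ hβ2 hβ2' hγδ hpr hp'r
    · have hγδ : γ ≠ δ := fun h => hpp (by rw [h])
      exact statement11_key q hcard hq8 β hβ hβ2 hβ2' hγδ hp'r hpr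
    · exact hpp rfl
  rw [hs] at hns
  simp only [Set.mem_insert_iff, Set.mem_singleton_iff] at hns
  rcases hns with h | h | h | h <;> subst h
  · exact key b d c hbd hac.symm A1 A4.symm A2 A3.symm
  · exact key a c d hac hbd.symm A1.symm A2 A4.symm A3
  · exact key b d a hbd hac A2.symm A3 A1.symm A4
  · exact key a c b hac hbd A4 A3.symm A1 A2.symm

end Paper
end
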